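/- arXiv:2006.06732 — 8 statements merged into one kernel-verified Lean document; each statement's English description precedes it below -/
import Mathlib

section
/- Let G : H → ℝ be μ-strongly convex with respect to the 𝓛-norm and L_B-smooth on the sublevel set B = {x ∈ H : G(x) ≤ G(x₀)}, where x₀ ∈ H is a given initial guess, and let x* be the unique minimizer of G. Consider the preconditioned gradient descent iterates x_{k+1} = x_k − s·𝓛⁻¹G'(x_k). If the step size satisfies s ∈ (0, 2/(L_B + μ)], then x_k ∈ B for all k ≥ 0; moreover, if s = 2/(L_B + μ), then with ρ := μ/L_B one has ‖x_k − x*‖_𝓛 ≤ ((1 − ρ)/(1 + ρ))^k ‖x₀ − x*‖_𝓛 for all k ≥ 0. -/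
open Topology Filter Set

section PGDaux

variable {H : Type*} [NormedAddCommGroup H] [InnerProductSpace ℝ H]
variable {L : H →ₗ[ℝ] (H →L[ℝ] ℝ)} {C₁ : ℝ}
variable {G : H → ℝ} {G' : H → H →L[ℝ] ℝ} {μ LB : ℝ}

lemma pgd_Lnonneg (hC₁ : 0 < C₁) (hcoer : ∀ x : H, C₁ * ‖x‖ ^ 2 ≤ L x x) (x : H) :
    0 ≤ L x x := le_trans (by positivity) (hcoer x)

lemma pgd_Lzero (hC₁ : 0 < C₁) (hcoer : ∀ x : H, C₁ * ‖x‖ ^ 2 ≤ L x x) {x : H}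
    (hx : L x x ≤ 0) : x = 0 := by
  have h1 := hcoer x
  have h2 : ‖x‖ ^ 2 ≤ 0 := by nlinarith
  have : ‖x‖ = 0 := by nlinarith [norm_nonneg x, sq_nonneg ‖x‖]
  simpa using this

lemma pgd_expand (hsymm : ∀ x y : H, L x y = L y x) (p w : H) (t : ℝ) :
    L (p - t • w) (p - t • w) = L p p - 2*t*(L w p) + t^2 * L w w := by
  simp only [map_sub, map_smul, ContinuousLinearMap.sub_apply,
    ContinuousLinearMap.smul_apply, ContinuousLinearMap.map_sub,
    ContinuousLinearMap.map_smul, smul_eq_mul]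
  rw [hsymm p w]; ring

lemma pgd_cs (hC₁ : 0 < C₁) (hsymm : ∀ x y : H, L x y = L y x)
    (hcoer : ∀ x : H, C₁ * ‖x‖ ^ 2 ≤ L x x) (x y : H) :
    (L x y)^2 ≤ L x x * L y y := by
  rcases le_or_gt (L y y) 0 with h|h
  · have hy : y = 0 := pgd_Lzero hC₁ hcoer h
    simp [hy]
  · have h0 : 0 ≤ L (x - (L x y / L y y) • y) (x - (L x y / L y y) • y) :=
      pgd_Lnonneg hC₁ hcoer _
    rw [pgd_expand hsymm] at h0
    rw [hsymm y x] at h0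
    have h2 : (L x y / L y y) ^ 2 * L y y = (L x y)^2 / L y y := by
      field_simp
    have h3 : (L x y / L y y) * L x y = (L x y)^2 / L y y := by
      field_simp
    have h1 : 0 ≤ L x x - (L x y)^2 / (L y y) := by linarith
    have := (div_le_iff₀ h).mp (by linarith : (L x y)^2 / L y y ≤ L x x)
    linarith [this]

lemma pgd_lineDeriv (hdiff : ∀ x : H, HasFDerivAt G (G' x) x) (z v : H) (t : ℝ) :
    HasDerivAt (fun τ : ℝ => G (z + τ • v)) ((G' (z + t • v)) v) t := by
  have h1 : HasDerivAt (fun τ : ℝ => z + τ • v) v t := by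
    simpa using ((hasDerivAt_id t).smul_const v).const_add z
  exact (hdiff (z + t • v)).comp_hasDerivAt t h1

lemma pgd_Gcont (hdiff : ∀ x : H, HasFDerivAt G (G' x) x) : Continuous G :=
  continuous_iff_continuousAt.2 fun x => (hdiff x).continuousAt

/-- Bregman lower bound from strong convexity (global). -/
lemma pgd_breg_lower (hdiff : ∀ x : H, HasFDerivAt G (G' x) x) (hμ : 0 < μ)
    (hsc : ∀ x y : H, (G' x - G' y) (x - y) ≥ μ * L (x - y) (x - y))
    (z w : H) :
    G z + (G' z) (w - z) + μ/2 * L (w - z) (w - z) ≤ G w := by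
  set v := w - z with hv
  set a0 : ℝ := (G' z) v with ha0
  set b0 : ℝ := μ/2 * L v v with hb0
  set ψ : ℝ → ℝ := fun τ => G (z + τ • v) - τ * a0 - τ^2 * b0 with hψ
  have hd : ∀ τ : ℝ, HasDerivAt ψ ((G' (z + τ • v)) v - a0 - 2*τ*b0) τ := by
    intro τ
    have h1 := pgd_lineDeriv hdiff z v τ
    have h2 : HasDerivAt (fun τ : ℝ => τ * a0) a0 τ := by
      simpa using (hasDerivAt_id τ).mul_const a0
    have h3 : HasDerivAt (fun τ : ℝ => τ^2 * b0) (2*τ*b0) τ := by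
      simpa [mul_comm, mul_assoc] using (hasDerivAt_pow 2 τ).mul_const b0
    exact (h1.sub h2).sub h3
  have hψc : Continuous ψ := continuous_iff_continuousAt.2 fun τ => (hd τ).continuousAt
  have hmono : MonotoneOn ψ (Icc (0:ℝ) 1) := by
    apply monotoneOn_of_deriv_nonneg (convex_Icc 0 1) hψc.continuousOn
    · intro τ _
      exact (hd τ).differentiableAt.differentiableWithinAt
    · intro τ hτ
      rw [interior_Icc] at hτ
      rw [(hd τ).deriv]
      have hτ0 : 0 < τ := hτ.1
      have hsc' := hsc (z + τ • v) z
      have he : z + τ • v - z = τ • v := by abel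
      rw [he] at hsc'
      have hL1 : L (τ • v) (τ • v) = τ^2 * L v v := by
        simp only [map_smul, ContinuousLinearMap.smul_apply,
          ContinuousLinearMap.map_smul, smul_eq_mul]
        ring
      have hL2 : (G' (z + τ • v) - G' z) (τ • v)
          = τ * ((G' (z + τ • v)) v - a0) := by
        simp only [ContinuousLinearMap.sub_apply, ContinuousLinearMap.map_smul,
          smul_eq_mul, ha0]
        ring
      rw [hL1, hL2] at hsc'
      rw [hb0]
      nlinarith [hsc', hτ0]
  have h01 := hmono (left_mem_Icc.2 zero_le_one) (right_mem_Icc.2 zero_le_one) zero_le_one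
  have e0 : ψ 0 = G z := by simp [hψ]
  have e1 : ψ 1 = G w - a0 - b0 := by
    have hz1 : z + v = w := by rw [hv]; abel
    simp [hψ, hz1]
  rw [e0, e1] at h01
  linarith


/-- Sublevel sets are convex. -/
lemma pgd_subl_convex (hC₁ : 0 < C₁) (hcoer : ∀ x : H, C₁ * ‖x‖ ^ 2 ≤ L x x)
    (hdiff : ∀ x : H, HasFDerivAt G (G' x) x) (hμ : 0 < μ)
    (hsc : ∀ x y : H, (G' x - G' y) (x - y) ≥ μ * L (x - y) (x - y))
    {c : ℝ} {z w : H} (hz : G z ≤ c) (hw : G w ≤ c) {τ : ℝ} (h0 : 0 ≤ τ) (h1 : τ ≤ 1) :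
    G (z + τ • (w - z)) ≤ c := by
  set m := z + τ • (w - z) with hm
  have hz' : z - m = -(τ • (w - z)) := by rw [hm]; abel
  have hw' : w - m = (1 - τ) • (w - z) := by rw [hm, sub_smul, one_smul]; abel
  have A := pgd_breg_lower hdiff hμ hsc m z
  have Bq := pgd_breg_lower hdiff hμ hsc m w
  rw [hz'] at A; rw [hw'] at Bq
  have hA2 : G m + (-(τ * ((G' m) (w - z)))) ≤ G z := by
    have hnn := pgd_Lnonneg hC₁ hcoer (-(τ • (w - z)))
    have : (G' m) (-(τ • (w - z))) = -(τ * ((G' m) (w - z))) := by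
      simp [ContinuousLinearMap.map_smul]
    rw [this] at A
    nlinarith [A, hnn, hμ]
  have hB2 : G m + (1 - τ) * ((G' m) (w - z)) ≤ G w := by
    have hnn := pgd_Lnonneg hC₁ hcoer ((1 - τ) • (w - z))
    have : (G' m) ((1 - τ) • (w - z)) = (1 - τ) * ((G' m) (w - z)) := by
      simp [ContinuousLinearMap.map_smul]
    rw [this] at Bq
    nlinarith [Bq, hnn, hμ]
  nlinarith [mul_le_mul_of_nonneg_left hA2 (by linarith : (0:ℝ) ≤ 1 - τ),
    mul_le_mul_of_nonneg_left hB2 h0,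
    mul_le_mul_of_nonneg_left hz (by linarith : (0:ℝ) ≤ 1 - τ),
    mul_le_mul_of_nonneg_left hw h0]

/-- Bregman upper bound from smoothness on the sublevel set. -/
lemma pgd_breg_upper (hC₁ : 0 < C₁) (hcoer : ∀ x : H, C₁ * ‖x‖ ^ 2 ≤ L x x)
    (hdiff : ∀ x : H, HasFDerivAt G (G' x) x) (hμ : 0 < μ) {x₀ : H}
    (hsc : ∀ x y : H, (G' x - G' y) (x - y) ≥ μ * L (x - y) (x - y))
    (hsm : ∀ x y : H, G x ≤ G x₀ → G y ≤ G x₀ →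
      (G' x - G' y) (x - y) ≤ LB * L (x - y) (x - y))
    {z w : H} (hz : G z ≤ G x₀) (hw : G w ≤ G x₀) :
    G w ≤ G z + (G' z) (w - z) + LB/2 * L (w - z) (w - z) := by
  set v := w - z with hv
  set a0 : ℝ := (G' z) v with ha0
  set b0 : ℝ := LB/2 * L v v with hb0
  set ψ : ℝ → ℝ := fun τ => τ * a0 + τ^2 * b0 - G (z + τ • v) with hψ
  have hd : ∀ τ : ℝ, HasDerivAt ψ (a0 + 2*τ*b0 - (G' (z + τ • v)) v) τ := by
    intro τ
    have h1 := pgd_lineDeriv hdiff z v τ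
    have h2 : HasDerivAt (fun τ : ℝ => τ * a0) a0 τ := by
      simpa using (hasDerivAt_id τ).mul_const a0
    have h3 : HasDerivAt (fun τ : ℝ => τ^2 * b0) (2*τ*b0) τ := by
      simpa [mul_comm, mul_assoc] using (hasDerivAt_pow 2 τ).mul_const b0
    exact (h2.add h3).sub h1
  have hψc : Continuous ψ := continuous_iff_continuousAt.2 fun τ => (hd τ).continuousAt
  have hmono : MonotoneOn ψ (Icc (0:ℝ) 1) := by
    apply monotoneOn_of_deriv_nonneg (convex_Icc 0 1) hψc.continuousOn
    · intro τ _
      exact (hd τ).differentiableAt.differentiableWithinAt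
    · intro τ hτ
      rw [interior_Icc] at hτ
      rw [(hd τ).deriv]
      have hτ0 : 0 < τ := hτ.1
      have hmem : G (z + τ • v) ≤ G x₀ :=
        pgd_subl_convex hC₁ hcoer hdiff hμ hsc hz hw hτ0.le hτ.2.le
      have hsm' := hsm (z + τ • v) z hmem hz
      have he : z + τ • v - z = τ • v := by abel
      rw [he] at hsm'
      have hL1 : L (τ • v) (τ • v) = τ^2 * L v v := by
        simp only [map_smul, ContinuousLinearMap.smul_apply,
          ContinuousLinearMap.map_smul, smul_eq_mul]
        ring
      have hL2 : (G' (z + τ • v) - G' z) (τ • v)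
          = τ * ((G' (z + τ • v)) v - a0) := by
        simp only [ContinuousLinearMap.sub_apply, ContinuousLinearMap.map_smul,
          smul_eq_mul, ha0]
        ring
      rw [hL1, hL2] at hsm'
      rw [hb0]
      nlinarith [hsm', hτ0]
  have h01 := hmono (left_mem_Icc.2 zero_le_one) (right_mem_Icc.2 zero_le_one) zero_le_one
  have e0 : ψ 0 = -G z := by simp [hψ]
  have e1 : ψ 1 = a0 + b0 - G w := by
    have hz1 : z + v = w := by rw [hv]; abel
    simp [hψ, hz1]
  rw [e0, e1] at h01
  linarith

/-- Continuation lemma: staying in the sublevel set. -/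
lemma pgd_stay (hGc : Continuous G) {x₀ : H} (z v : H) (T : ℝ) (hT : 0 < T)
    (hz : G z ≤ G x₀)
    (kick : ∀ᶠ τ in 𝓝[>] (0:ℝ), G (z + τ • v) ≤ G x₀)
    (bound : ∀ τ, 0 < τ → τ < T →
      (∀ σ, 0 ≤ σ → σ ≤ τ → G (z + σ • v) ≤ G x₀) → G (z + τ • v) < G x₀) :
    ∀ τ, 0 ≤ τ → τ ≤ T → G (z + τ • v) ≤ G x₀ := by
  set f : ℝ → ℝ := fun τ => G (z + τ • v) with hf
  have hf0 : f 0 = G z := by simp [hf]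
  have hfc : Continuous f := by
    apply hGc.comp
    exact continuous_const.add (continuous_id.smul continuous_const)
  set A : Set ℝ := {τ | τ ∈ Icc (0:ℝ) T ∧ ∀ σ, 0 ≤ σ → σ ≤ τ → f σ ≤ G x₀} with hA
  have h0A : (0:ℝ) ∈ A := by
    refine ⟨⟨le_rfl, hT.le⟩, fun σ h1 h2 => ?_⟩
    have : σ = 0 := le_antisymm h2 h1
    rw [this, hf0]; exact hz
  have hbdd : BddAbove A := ⟨T, fun τ hτ => hτ.1.2⟩
  have hne : A.Nonempty := ⟨0, h0A⟩
  set m := sSup A with hmdef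
  have hm0 : 0 ≤ m := le_csSup hbdd h0A
  have hmT : m ≤ T := csSup_le hne fun τ hτ => hτ.1.2
  have hlt : ∀ σ, 0 ≤ σ → σ < m → f σ ≤ G x₀ := by
    intro σ h1 h2
    obtain ⟨τ, hτA, hστ⟩ := exists_lt_of_lt_csSup hne h2
    exact hτA.2 σ h1 hστ.le
  have hfm : f m ≤ G x₀ := by
    rcases eq_or_lt_of_le hm0 with h|h
    · rw [← h, hf0]; exact hz
    · have h1 : Tendsto f (𝓝[<] m) (𝓝 (f m)) :=
        (hfc.continuousAt (x := m)).continuousWithinAt.tendsto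
      refine le_of_tendsto h1 ?_
      have : Ioo (0:ℝ) m ∈ 𝓝[<] m := Ioo_mem_nhdsLT_of_mem ⟨h, le_rfl⟩
      filter_upwards [this] with σ hσ
      exact hlt σ hσ.1.le hσ.2
  have hmA : m ∈ A := by
    refine ⟨⟨hm0, hmT⟩, fun σ h1 h2 => ?_⟩
    rcases lt_or_eq_of_le h2 with h|h
    · exact hlt σ h1 h
    · rw [h]; exact hfm
  have hmeqT : m = T := by
    by_contra hne'
    have hmltT : m < T := lt_of_le_of_ne hmT hne'
    rcases eq_or_lt_of_le hm0 with h0m|h0m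
    · obtain ⟨u, hu, hsub⟩ := mem_nhdsGT_iff_exists_Ioo_subset.mp kick
      have hu' : (0:ℝ) < u := hu
      set τ₁ := min (u/2) T with hτ₁
      have hτ₁0 : 0 < τ₁ := lt_min (half_pos hu') hT
      have hτ₁A : τ₁ ∈ A := by
        refine ⟨⟨hτ₁0.le, min_le_right _ _⟩, fun σ h1 h2 => ?_⟩
        rcases eq_or_lt_of_le h1 with h1'|h1'
        · rw [← h1', hf0]; exact hz
        · apply hsub
          constructor
          · exact h1'
          · calc σ ≤ τ₁ := h2
              _ ≤ u/2 := min_le_left _ _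
              _ < u := half_lt_self hu' 
      have := le_csSup hbdd hτ₁A
      rw [← hmdef, ← h0m] at this
      linarith
    · have hstrict := bound m h0m hmltT fun σ h1 h2 => hmA.2 σ h1 h2
      have hev : ∀ᶠ τ in 𝓝 m, f τ < G x₀ := by
        have := (hfc.tendsto m).eventually_lt_const hstrict
        simpa [hf] using this
      obtain ⟨δ, hδ, hball⟩ := Metric.eventually_nhds_iff.mp hev
      set τ₂ := min (m + δ/2) T with hτ₂
      have hmτ₂ : m < τ₂ := lt_min (by linarith) hmltT
      have hτ₂A : τ₂ ∈ A := by
        refine ⟨⟨le_trans hm0 hmτ₂.le, min_le_right _ _⟩, fun σ h1 h2 => ?_⟩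
        rcases le_or_gt σ m with h|h
        · exact hmA.2 σ h1 h
        · apply le_of_lt
          apply hball
          rw [Real.dist_eq, abs_lt]
          constructor
          · calc -δ < 0 := by linarith
              _ ≤ σ - m := by linarith
          · have : σ ≤ m + δ/2 := le_trans h2 (min_le_left _ _)
            linarith
      have := le_csSup hbdd hτ₂A
      rw [← hmdef] at this
      linarith
  intro τ h1 h2
  exact hmA.2 τ h1 (by rw [hmeqT]; exact h2)

/-- Kickstart from a strictly negative directional derivative. -/
lemma pgd_kick_neg (hdiff : ∀ x : H, HasFDerivAt G (G' x) x) {x₀ : H} {z v : H}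
    (hneg : (G' z) v < 0) (hz : G z ≤ G x₀) :
    ∀ᶠ τ in 𝓝[>] (0:ℝ), G (z + τ • v) ≤ G x₀ := by
  set f : ℝ → ℝ := fun τ => G (z + τ • v) with hf
  have hd : HasDerivAt f ((G' z) v) 0 := by
    have := pgd_lineDeriv hdiff z v 0
    simpa [hf] using this
  have hslope := hasDerivAt_iff_tendsto_slope.mp hd
  have hev : ∀ᶠ τ in 𝓝[≠] (0:ℝ), slope f 0 τ < 0 :=
    hslope.eventually_lt_const hneg
  have hev' : ∀ᶠ τ in 𝓝[>] (0:ℝ), slope f 0 τ < 0 :=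
    hev.filter_mono (nhdsWithin_mono 0 fun x hx => ne_of_gt hx)
  filter_upwards [hev', self_mem_nhdsWithin] with τ hs (hτ : 0 < τ)
  have h1 : (f τ - f 0) / τ < 0 := by
    have : slope f 0 τ = (f τ - f 0) / τ := by rw [slope_def_field]; ring_nf
    rw [this] at hs
    exact hs
  have h2 : f τ - f 0 < 0 := by
    by_contra hcon
    push_neg at hcon
    have := div_nonneg hcon hτ.le
    linarith
  have hf0 : f 0 = G z := by simp [hf]
  have : f τ < G z := by rw [← hf0]; linarith
  exact le_trans this.le hz

/-- Kickstart from a point with strictly smaller value. -/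
lemma pgd_kick_lt (hGc : Continuous G) {x₀ z : H} (hlt : G z < G x₀) (v : H) :
    ∀ᶠ τ in 𝓝[>] (0:ℝ), G (z + τ • v) ≤ G x₀ := by
  have hfc : Continuous (fun τ : ℝ => G (z + τ • v)) :=
    hGc.comp (continuous_const.add (continuous_id.smul continuous_const))
  have hev : ∀ᶠ τ in 𝓝 (0:ℝ), G (z + τ • v) < G x₀ := by
    have := (hfc.tendsto 0).eventually_lt_const (by simpa using hlt)
    simpa using this
  exact (hev.filter_mono nhdsWithin_le_nhds).mono fun τ h => h.le

set_option maxHeartbeats 1600000 in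
/-- Core real-variable inequality for the Nesterov-type bound. -/
lemma pgd_core (μ LB qv β E σ t₂ : ℝ) (hμ : 0 < μ) (hL : μ < LB) (hqv : 0 < qv)
    (hβ : 0 ≤ β) (hCS : β^2 ≤ qv * E)
    (hσ : σ = min (1/(LB-μ)) (2*(qv + μ*β)/(LB*qv)))
    (ht : t₂ = min (1/(LB-μ)) (Real.sqrt (μ*E/(LB*qv) + 2*(σ - (LB-μ)*σ^2/2)/LB)))
    (comb : qv * ((σ - (LB-μ)*σ^2/2) + (t₂ - (LB-μ)*t₂^2/2)) ≤ β) :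
    qv ≤ (LB - μ)*β := by
  have hLμ : 0 < LB - μ := by linarith
  have hLB : 0 < LB := by linarith
  have hE : 0 ≤ E := by nlinarith [sq_nonneg β]
  obtain ⟨R, hRdef⟩ : ∃ R : ℝ, R = 1/(LB-μ) := ⟨_, rfl⟩
  rw [← hRdef] at hσ ht
  have hR : (LB-μ)*R = 1 := by rw [hRdef]; field_simp
  have hr : 0 < R := by rw [hRdef]; positivity
  have hσpos : 0 < σ := by
    rw [hσ]; exact lt_min hr (by positivity)
  have hσr : σ ≤ R := by rw [hσ]; exact min_le_left _ _
  have hσr' : (LB-μ)*σ ≤ 1 := by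
    calc (LB-μ)*σ ≤ (LB-μ)*R := by nlinarith [hσr, hLμ]
      _ = 1 := hR
  have hDσpos : 0 < σ - (LB-μ)*σ^2/2 := by nlinarith [hσpos, hσr']
  have hargpos : 0 < μ*E/(LB*qv) + 2*(σ - (LB-μ)*σ^2/2)/LB := by positivity
  have ht₂pos : 0 < t₂ := by
    rw [ht]; exact lt_min hr (Real.sqrt_pos.mpr hargpos)
  have ht₂r : t₂ ≤ R := by rw [ht]; exact min_le_left _ _
  have ht₂r' : (LB-μ)*t₂ ≤ 1 := by
    calc (LB-μ)*t₂ ≤ (LB-μ)*R := by nlinarith [ht₂r, hLμ]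
      _ = 1 := hR
  have hDt_nn : 0 ≤ t₂ - (LB-μ)*t₂^2/2 := by nlinarith [ht₂pos, ht₂r']
  by_contra hcon
  push_neg at hcon
  rcases lt_or_ge (2*(qv + μ*β)/(LB*qv)) R with hcase|hcase
  · -- σ = σ-hat < rbar
    have hσv : σ = 2*(qv + μ*β)/(LB*qv) := by rw [hσ]; exact min_eq_right hcase.le
    have h2 : 2*(qv+μ*β)*(LB-μ) < LB*qv := by
      have h2a : 2*(qv + μ*β)/(LB*qv) < R := hcase
      rw [hRdef, div_lt_div_iff₀ (by positivity) hLμ] at h2a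
      nlinarith [h2a]
    have hA : 0 < (2*μ-LB)*qv - 2*μ*(LB-μ)*β := by nlinarith [h2]
    have h2μ : 0 < 2*μ - LB := by
      nlinarith [hA, mul_nonneg (mul_nonneg (by linarith : (0:ℝ) ≤ 2*μ) hLμ.le) hβ, hqv]
    have hident : (2*μ-LB)^2*(2*μ*(qv+μ*β)*(qv-(LB-μ)*β) - LB^2*qv*β)
        = 2*μ*((2*μ-LB)*qv - 2*μ*(LB-μ)*β)^2
          + LB^3*β*((2*μ-LB)*qv - 2*μ*(LB-μ)*β)
          + 2*μ*LB^2*(LB-μ)^2*β^2 := by ring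
    have h3 : 0 < 2*μ*(qv+μ*β)*(qv-(LB-μ)*β) - LB^2*qv*β := by
      nlinarith [hident, hA, mul_pos h2μ h2μ,
        mul_pos (mul_pos hμ (by norm_num : (0:ℝ) < 2)) (mul_pos hA hA),
        mul_nonneg (mul_nonneg (pow_pos hLB 3).le hβ) hA.le,
        mul_nonneg (mul_nonneg (by positivity : (0:ℝ) ≤ 2*μ*LB^2) (sq_nonneg (LB-μ))) (sq_nonneg β)]
    have hexp : LB^2*qv^2*(qv*(σ - (LB-μ)*σ^2/2) - β)
        = qv*(2*μ*(qv+μ*β)*(qv-(LB-μ)*β) - LB^2*qv*β) := by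
      rw [hσv]; field_simp; ring
    have hqvDσ : β < qv * (σ - (LB-μ)*σ^2/2) := by
      nlinarith [hexp, mul_pos hqv h3, mul_pos (mul_pos hLB hLB) (mul_pos hqv hqv)]
    nlinarith [comb, mul_nonneg hqv.le hDt_nn, hqvDσ]
  · -- σ = rbar
    have hσv : σ = R := by rw [hσ]; exact min_eq_left hcase
    have hDσr : σ - (LB-μ)*σ^2/2 = R/2 := by
      rw [hσv]; nlinarith [hR]
    rcases le_or_gt R (Real.sqrt (μ*E/(LB*qv) + 2*(σ - (LB-μ)*σ^2/2)/LB)) with hc2|hc2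
    · have ht₂v : t₂ = R := by rw [ht]; exact min_eq_left hc2
      have hDt : t₂ - (LB-μ)*t₂^2/2 = R/2 := by rw [ht₂v]; nlinarith [hR]
      rw [hDσr, hDt] at comb
      -- comb : qv * (R/2 + R/2) ≤ β, i.e. qv*R ≤ β
      have : qv * R ≤ β := by nlinarith [comb]
      nlinarith [this, hcon, hR, hqv, hLμ, mul_pos hqv hr]
    · have ht₂v : t₂ = Real.sqrt (μ*E/(LB*qv) + 2*(σ - (LB-μ)*σ^2/2)/LB) := by
        rw [ht]; exact min_eq_right hc2.le
      have ht₂lt : t₂ < R := by rw [ht₂v]; exact hc2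
      have hsq : t₂^2 = μ*E/(LB*qv) + 2*(σ - (LB-μ)*σ^2/2)/LB := by
        rw [ht₂v]; exact Real.sq_sqrt hargpos.le
      rw [hDσr] at hsq
      rw [hDσr] at comb
      -- hsq : t₂^2 = μ*E/(LB*qv) + 2*(R/2)/LB
      have e1 : LB*qv*t₂^2 = μ*E + qv*R := by
        rw [hsq]; field_simp
      have hexp2 : LB*(LB-μ)*(qv^2*t₂^2) = μ*(LB-μ)*E*qv + qv^2 := by
        linear_combination ((LB-μ)*qv) * e1 + (qv^2) * hR
      have hcon' : 0 < qv - (LB-μ)*β := by linarith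
      have hplus : 0 < qv + (LB-μ)*β := by nlinarith [mul_nonneg hLμ.le hβ]
      have f1 : 0 ≤ μ*(LB-μ)*(qv*E - β^2) :=
        mul_nonneg (mul_pos hμ hLμ).le (by linarith)
      have f2 : (LB-μ)^2*β^2 < qv^2 := by nlinarith [mul_pos hcon' hplus]
      have f3 : LB*(LB-μ)*(β^2) < LB*(LB-μ)*(qv^2*t₂^2) := by linarith only [hexp2, f1, f2]
      have h1 : β^2 < qv^2*t₂^2 := lt_of_mul_lt_mul_left f3 (mul_pos hLB hLμ).le
      have h2 : β < qv * t₂ := by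
        nlinarith only [h1, mul_pos hqv ht₂pos, hβ]
      have h4 : qv*R < qv*((LB-μ)*t₂^2) := by linarith only [comb, h2]
      have h5 : R < (LB-μ)*t₂^2 := (mul_lt_mul_iff_right₀ hqv).mp h4
      have e2 : t₂^2 < t₂*R := by nlinarith only [ht₂lt, ht₂pos]
      have h6 : (LB-μ)*t₂^2 < (LB-μ)*(t₂*R) := (mul_lt_mul_iff_right₀ hLμ).mpr e2
      have h7 : (LB-μ)*(t₂*R) = t₂ := by
        calc (LB-μ)*(t₂*R) = ((LB-μ)*R)*t₂ := by ring
          _ = t₂ := by rw [hR]; ring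
      linarith [h5, h6, h7, ht₂lt]

set_option maxHeartbeats 1600000 in
/-- Nesterov-type inequality at a sublevel point. -/
lemma pgd_key
    (hC₁ : 0 < C₁) (hsymm : ∀ x y : H, L x y = L y x)
    (hcoer : ∀ x : H, C₁ * ‖x‖ ^ 2 ≤ L x x)
    (Linv : (H →L[ℝ] ℝ) → H) (hLinv : ∀ f : H →L[ℝ] ℝ, L (Linv f) = f)
    (hdiff : ∀ x : H, HasFDerivAt G (G' x) x)
    (hμ : 0 < μ) (hLB : 0 < LB)
    (hsc : ∀ x y : H, (G' x - G' y) (x - y) ≥ μ * L (x - y) (x - y))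
    {x₀ : H}
    (hsm : ∀ x y : H, G x ≤ G x₀ → G y ≤ G x₀ →
      (G' x - G' y) (x - y) ≤ LB * L (x - y) (x - y))
    (xstar : H) (hmin : ∀ y : H, G xstar ≤ G y) (hG's : G' xstar = 0)
    (hlt : G xstar < G x₀) (z : H) (hz : G z ≤ G x₀) :
    (G' z) (Linv (G' z)) ≤ (LB + μ) * ((G' z) (z - xstar))
      - μ * LB * L (z - xstar) (z - xstar) := by
  have hGc : Continuous G := pgd_Gcont hdiff
  have hxs : G xstar ≤ G x₀ := hmin x₀
  obtain ⟨u, hu⟩ : ∃ u', Linv (G' z) = u' := ⟨_, rfl⟩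
  obtain ⟨e, hee⟩ : ∃ e', z - xstar = e' := ⟨_, rfl⟩
  rw [hu, hee]
  have hLu : L u = G' z := by rw [← hu]; exact hLinv _
  obtain ⟨E, hE⟩ : ∃ r, L e e = r := ⟨_, rfl⟩
  obtain ⟨a, hA⟩ : ∃ r, (G' z) e = r := ⟨_, rfl⟩
  obtain ⟨q, hQ⟩ : ∃ r, (G' z) u = r := ⟨_, rfl⟩
  rw [hQ, hA, hE]
  have hLuu : L u u = q := by rw [hLu, hQ]
  have hLue : L u e = a := by rw [hLu, hA]
  have hLeu : L e u = a := by rw [hsymm e u, hLue]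
  have hEnn : 0 ≤ E := by rw [← hE]; exact pgd_Lnonneg hC₁ hcoer e
  have hqnn : 0 ≤ q := by rw [← hLuu]; exact pgd_Lnonneg hC₁ hcoer u
  have haμE : μ * E ≤ a := by
    have h := hsc z xstar
    rw [hG's, sub_zero, hee, hA, hE] at h
    linarith [h]
  rcases le_or_gt E 0 with hE0 | hE0
  · -- degenerate: z = xstar
    have he0 : e = 0 := pgd_Lzero hC₁ hcoer (by rw [hE]; exact hE0)
    have hzx : z = xstar := by
      have h := hee; rw [he0] at h; exact sub_eq_zero.mp h
    have hg0 : G' z = 0 := by rw [hzx, hG's]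
    have hq0 : q = 0 := by rw [← hQ, hg0]; simp
    have ha0 : a = 0 := by rw [← hA, hg0]; simp
    have hE0' : E = 0 := by rw [← hE, he0]; simp
    rw [hq0, ha0, hE0']; norm_num
  · -- main case: E > 0
    have hμLB : μ ≤ LB := by
      have h := hsm z xstar hz hxs
      rw [hG's, sub_zero, hee, hA, hE] at h
      nlinarith only [h, haμE, hE0]
    obtain ⟨d, hd⟩ : ∃ d', u - μ • e = d' := ⟨_, rfl⟩
    have hLdd : L d d = q - 2*μ*a + μ^2*E := by
      rw [← hd, pgd_expand hsymm u e μ, hLeu, hLuu, hE]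
    have hLde : L d e = a - μ*E := by
      have h1 : L (u - μ•e) e = L u e - μ*(L e e) := by
        simp only [map_sub, map_smul, ContinuousLinearMap.sub_apply,
          ContinuousLinearMap.smul_apply, smul_eq_mul]
      rw [← hd, h1, hLue, hE]
    have hgd : (G' z) d = q - μ*a := by
      rw [← hd]
      simp only [map_sub, map_smul, smul_eq_mul]
      rw [hQ, hA]
    have hqvnn : 0 ≤ q - 2*μ*a + μ^2*E := by
      rw [← hLdd]; exact pgd_Lnonneg hC₁ hcoer d
    have hβnn : 0 ≤ a - μ*E := by linarith
    have hCS : (a - μ*E)^2 ≤ (q - 2*μ*a + μ^2*E) * E := by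
      have h := pgd_cs hC₁ hsymm hcoer d e
      rw [hLde, hLdd, hE] at h
      exact h
    rcases le_or_gt (q - 2*μ*a + μ^2*E) 0 with hqv0 | hqv0
    · -- qv = 0
      nlinarith only [mul_nonneg (by linarith : (0:ℝ) ≤ LB - μ) hβnn, hqv0, hqvnn]
    · -- qv > 0
      have hqma : 0 < q - μ*a := by nlinarith only [mul_nonneg hμ.le hβnn, hqv0]
      have hgsd : ∀ τ : ℝ, (G' z) (τ • d) = τ*(q - μ*a) := by
        intro τ; rw [map_smul, smul_eq_mul, hgd]
      have hLsd : ∀ τ : ℝ, L (τ • d) (τ • d) = τ^2*(q - 2*μ*a + μ^2*E) := by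
        intro τ
        simp only [map_smul, ContinuousLinearMap.smul_apply, smul_eq_mul]
        rw [hLdd]; ring
      have hgsu : ∀ τ : ℝ, (G' z) (τ • u) = τ*q := by
        intro τ; rw [map_smul, smul_eq_mul, hQ]
      have hLsu : ∀ τ : ℝ, L (τ • u) (τ • u) = τ^2*q := by
        intro τ
        simp only [map_smul, ContinuousLinearMap.smul_apply, smul_eq_mul]
        rw [hLuu]; ring
      rcases eq_or_lt_of_le hμLB with hLBμ | hLBμ
      · -- LB = μ
        have hq_pos : 0 < q := by
          nlinarith only [mul_pos (mul_pos hμ hμ) hE0, mul_nonneg hμ.le hβnn, hqv0]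
        obtain ⟨T, hTdef⟩ : ∃ T : ℝ, T = 1/LB := ⟨_, rfl⟩
        have hTpos : 0 < T := by rw [hTdef]; positivity
        have hinv : LB*T = 1 := by rw [hTdef]; field_simp
        have hLBT2 : LB/2*(T^2*q) = T*q/2 := by
          rw [hTdef]; field_simp
        have S1 : ∀ τ, 0 ≤ τ → τ ≤ T → G (z + τ • (-u)) ≤ G x₀ := by
          apply pgd_stay hGc z (-u) T hTpos hz
          · apply pgd_kick_neg hdiff ?_ hz
            simp only [map_neg]
            rw [hQ]; linarith only [hq_pos]
          · intro τ hτ0 hτT hseg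
            have hmem : G (z + τ • (-u)) ≤ G x₀ := hseg τ hτ0.le le_rfl
            have hup := pgd_breg_upper hC₁ hcoer hdiff hμ hsc hsm hz hmem
            have hv : z + τ • (-u) - z = (-τ) • u := by
              rw [smul_neg, neg_smul]; abel
            rw [hv, hgsu, hLsu] at hup
            have hτLB : τ*LB < 1 := by nlinarith only [hτT, hLB, hinv, hTpos]
            have : G (z + τ • (-u)) < G z := by
              nlinarith only [hup, mul_pos hτ0 hq_pos, hτLB, hq_pos, hτ0]
            linarith only [this, hz]
        have hwA : G (z + T • (-u)) ≤ G x₀ := S1 T hTpos.le le_rfl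
        have hupA := pgd_breg_upper hC₁ hcoer hdiff hμ hsc hsm hz hwA
        have hvA : z + T • (-u) - z = (-T) • u := by
          rw [smul_neg, neg_smul]; abel
        rw [hvA, hgsu, hLsu] at hupA
        -- hupA : G (z + T•(-u)) ≤ G z + (-T)*q + LB/2*((-T)^2*q)
        have Hstar : G xstar + T*q/2 ≤ G z := by
          have h1 := hmin (z + T • (-u))
          linarith only [hupA, h1, hLBT2]
        have S2 : ∀ τ, 0 ≤ τ → τ ≤ T → G (xstar + τ • u) ≤ G x₀ := by
          apply pgd_stay hGc xstar u T hTpos hxs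
          · exact pgd_kick_lt hGc hlt u
          · intro τ hτ0 hτT hseg
            have hmem : G (xstar + τ • u) ≤ G x₀ := hseg τ hτ0.le le_rfl
            have hup := pgd_breg_upper hC₁ hcoer hdiff hμ hsc hsm hxs hmem
            have hv : xstar + τ • u - xstar = τ • u := by abel
            rw [hv, hG's, hLsu] at hup
            simp only [ContinuousLinearMap.zero_apply] at hup
            have hττ : τ^2 < T^2 := by nlinarith only [hτ0, hτT, hTpos]
            have : G (xstar + τ • u) < G z := by
              nlinarith only [hup, Hstar, hττ, hLBT2, mul_pos hLB hq_pos]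
            linarith only [this, hz]
        have hw2A : G (xstar + T • u) ≤ G x₀ := S2 T hTpos.le le_rfl
        have hIA2 := pgd_breg_upper hC₁ hcoer hdiff hμ hsc hsm hxs hw2A
        have hvA2 : xstar + T • u - xstar = T • u := by abel
        rw [hvA2, hG's, hLsu] at hIA2
        simp only [ContinuousLinearMap.zero_apply] at hIA2
        have hIA1 := pgd_breg_lower hdiff hμ hsc z (xstar + T • u)
        have hvA3 : xstar + T • u - z = T • u - e := by rw [← hee]; abel
        rw [hvA3] at hIA1
        have hg3 : (G' z) (T • u - e) = T*q - a := by
          rw [map_sub, hgsu, hA]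
        rw [hg3] at hIA1
        have hnn3 : 0 ≤ L (T • u - e) (T • u - e) := pgd_Lnonneg hC₁ hcoer _
        have hIA3 := pgd_breg_lower hdiff hμ hsc xstar z
        rw [hG's, hee, hE] at hIA3
        simp only [ContinuousLinearMap.zero_apply] at hIA3
        -- combine: T*q/2 ≤ a - μ*E/2, multiply by LB, use LB = μ
        have hTq : T*q ≤ 2*a - μ*E := by nlinarith only [hIA1, hIA2, hIA3, hnn3, hμ, hLBT2]
        have hq2 : q ≤ LB*(2*a - μ*E) := by
          have h5 := mul_le_mul_of_nonneg_left hTq hLB.le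
          have h6 : LB*(T*q) = q := by
            rw [show LB*(T*q) = (LB*T)*q from by ring, hinv, one_mul]
          linarith only [h5, h6]
        have hμa : μ*a = LB*a := by rw [hLBμ]
        have hμE2 : μ*LB*E = LB*μ*E := by ring
        linarith only [hq2, hμa]
      · -- μ < LB
        have hrpos : (0:ℝ) < 1/(LB-μ) := by
          have : (0:ℝ) < LB - μ := by linarith
          positivity
        obtain ⟨σ, hσdef⟩ : ∃ s : ℝ, s = min (1/(LB-μ))
            (2*((q - 2*μ*a + μ^2*E) + μ*(a - μ*E))/(LB*(q - 2*μ*a + μ^2*E))) := ⟨_, rfl⟩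
        have hσhat_pos : (0:ℝ) < 2*((q - 2*μ*a + μ^2*E) + μ*(a - μ*E))/(LB*(q - 2*μ*a + μ^2*E)) := by
          apply div_pos (by linarith only [hqma]) (by positivity)
        have hσpos : 0 < σ := by rw [hσdef]; exact lt_min hrpos hσhat_pos
        have hσr : σ ≤ 1/(LB-μ) := by rw [hσdef]; exact min_le_left _ _
        have hσhat : σ ≤ 2*((q - 2*μ*a + μ^2*E) + μ*(a - μ*E))/(LB*(q - 2*μ*a + μ^2*E)) := by
          rw [hσdef]; exact min_le_right _ _
        have hσr' : (LB-μ)*σ ≤ 1 := by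
          have h1 := (le_div_iff₀ (by linarith : (0:ℝ) < LB - μ)).mp hσr
          linarith only [h1]
        have hDσpos : 0 < σ - (LB-μ)*σ^2/2 := by nlinarith only [hσpos, hσr']
        -- Segment 1 : from z in direction -d, up to σ
        have S1 : ∀ τ, 0 ≤ τ → τ ≤ σ → G (z + τ • (-d)) ≤ G x₀ := by
          apply pgd_stay hGc z (-d) σ hσpos hz
          · apply pgd_kick_neg hdiff ?_ hz
            simp only [map_neg]
            rw [hgd]; linarith only [hqma]
          · intro τ hτ0 hτT hseg
            have hmem : G (z + τ • (-d)) ≤ G x₀ := hseg τ hτ0.le le_rfl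
            have hup := pgd_breg_upper hC₁ hcoer hdiff hμ hsc hsm hz hmem
            have hv : z + τ • (-d) - z = (-τ) • d := by
              rw [smul_neg, neg_smul]; abel
            rw [hv, hgsd, hLsd] at hup
            have hτmul : τ*(LB*(q - 2*μ*a + μ^2*E)) < 2*((q - 2*μ*a + μ^2*E) + μ*(a - μ*E)) := by
              have h1 : τ < 2*((q - 2*μ*a + μ^2*E) + μ*(a - μ*E))/(LB*(q - 2*μ*a + μ^2*E)) :=
                lt_of_lt_of_le hτT hσhat
              exact (lt_div_iff₀ (by positivity)).mp h1
            have : G (z + τ • (-d)) < G z := by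
              nlinarith only [hup, hτ0, hτmul]
            linarith only [this, hz]
        have hw1 : G (z + σ • (-d)) ≤ G x₀ := S1 σ hσpos.le le_rfl
        -- I1
        have hb1 := pgd_breg_lower hdiff hμ hsc xstar (z + σ • (-d))
        have hv1 : z + σ • (-d) - xstar = e - σ • d := by
          rw [smul_neg, ← hee]; abel
        rw [hv1, hG's] at hb1
        simp only [ContinuousLinearMap.zero_apply] at hb1
        have hx1 : L (e - σ•d) (e - σ•d)
            = E - 2*σ*(a - μ*E) + σ^2*(q - 2*μ*a + μ^2*E) := by
          rw [pgd_expand hsymm e d σ, hE, hLde, hLdd]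
        rw [hx1] at hb1
        -- hb1 : G xstar + 0 + μ/2 * (...) ≤ G (z + σ•(-d))
        -- I2
        have hb2 := pgd_breg_upper hC₁ hcoer hdiff hμ hsc hsm hz hw1
        have hv2 : z + σ • (-d) - z = (-σ) • d := by
          rw [smul_neg, neg_smul]; abel
        rw [hv2, hgsd, hLsd] at hb2
        -- HΔ
        have HΔ : μ*E/2 + (σ - (LB-μ)*σ^2/2)*(q - 2*μ*a + μ^2*E) ≤ G z - G xstar := by
          linarith only [hb1, hb2]
        -- t₂
        obtain ⟨t₂, ht₂def⟩ : ∃ t : ℝ, t = min (1/(LB-μ))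
            (Real.sqrt (μ*E/(LB*(q - 2*μ*a + μ^2*E))
              + 2*(σ - (LB-μ)*σ^2/2)/LB)) := ⟨_, rfl⟩
        have hargpos : 0 < μ*E/(LB*(q - 2*μ*a + μ^2*E)) + 2*(σ - (LB-μ)*σ^2/2)/LB := by
          have h1 : 0 ≤ μ*E/(LB*(q - 2*μ*a + μ^2*E)) := by positivity
          have h2 : 0 < 2*(σ - (LB-μ)*σ^2/2)/LB := by
            apply div_pos (by linarith only [hDσpos]) hLB
          linarith
        have ht₂pos : 0 < t₂ := by
          rw [ht₂def]; exact lt_min hrpos (Real.sqrt_pos.mpr hargpos)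
        have ht₂sq : t₂^2 ≤ μ*E/(LB*(q - 2*μ*a + μ^2*E)) + 2*(σ - (LB-μ)*σ^2/2)/LB := by
          have h1 : t₂ ≤ Real.sqrt (μ*E/(LB*(q - 2*μ*a + μ^2*E)) + 2*(σ - (LB-μ)*σ^2/2)/LB) := by
            rw [ht₂def]; exact min_le_right _ _
          nlinarith only [Real.sq_sqrt hargpos.le, Real.sqrt_nonneg (μ*E/(LB*(q - 2*μ*a + μ^2*E)) + 2*(σ - (LB-μ)*σ^2/2)/LB), h1, ht₂pos]
        have hargmul : LB*(q - 2*μ*a + μ^2*E)/2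
              * (μ*E/(LB*(q - 2*μ*a + μ^2*E)) + 2*(σ - (LB-μ)*σ^2/2)/LB)
            = μ*E/2 + (σ - (LB-μ)*σ^2/2)*(q - 2*μ*a + μ^2*E) := by
          field_simp
        have hup2 : LB/2*(t₂^2*(q - 2*μ*a + μ^2*E))
            ≤ μ*E/2 + (σ - (LB-μ)*σ^2/2)*(q - 2*μ*a + μ^2*E) := by
          nlinarith only [ht₂sq, hargmul, mul_pos hLB hqv0]
        -- Segment 2 : from xstar in direction d, up to t₂
        have S2 : ∀ τ, 0 ≤ τ → τ ≤ t₂ → G (xstar + τ • d) ≤ G x₀ := by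
          apply pgd_stay hGc xstar d t₂ ht₂pos hxs
          · exact pgd_kick_lt hGc hlt d
          · intro τ hτ0 hτT hseg
            have hmem : G (xstar + τ • d) ≤ G x₀ := hseg τ hτ0.le le_rfl
            have hup := pgd_breg_upper hC₁ hcoer hdiff hμ hsc hsm hxs hmem
            have hv : xstar + τ • d - xstar = τ • d := by abel
            rw [hv, hG's, hLsd] at hup
            simp only [ContinuousLinearMap.zero_apply] at hup
            have hττ : τ^2 < t₂^2 := by nlinarith only [hτ0, hτT, ht₂pos]
            have : G (xstar + τ • d) < G z := by
              nlinarith only [hup, hup2, HΔ, hττ, mul_pos hLB hqv0]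
            linarith only [this, hz]
        have hw2 : G (xstar + t₂ • d) ≤ G x₀ := S2 t₂ ht₂pos.le le_rfl
        -- I3
        have hb3 := pgd_breg_lower hdiff hμ hsc z (xstar + t₂ • d)
        have hv3 : xstar + t₂ • d - z = -(e - t₂ • d) := by
          rw [← hee]; abel
        rw [hv3] at hb3
        have hg3 : (G' z) (-(e - t₂ • d)) = t₂*(q - μ*a) - a := by
          rw [map_neg, map_sub, hgsd, hA]; ring
        have hL3 : L (-(e - t₂ • d)) (-(e - t₂ • d)) = L (e - t₂ • d) (e - t₂ • d) := by
          simp only [map_neg, ContinuousLinearMap.neg_apply, neg_neg]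
        have hx3 : L (e - t₂•d) (e - t₂•d)
            = E - 2*t₂*(a - μ*E) + t₂^2*(q - 2*μ*a + μ^2*E) := by
          rw [pgd_expand hsymm e d t₂, hE, hLde, hLdd]
        rw [hg3, hL3, hx3] at hb3
        -- I4
        have hb4 := pgd_breg_upper hC₁ hcoer hdiff hμ hsc hsm hxs hw2
        have hv4 : xstar + t₂ • d - xstar = t₂ • d := by abel
        rw [hv4, hG's, hLsd] at hb4
        simp only [ContinuousLinearMap.zero_apply] at hb4
        -- combination
        have comb : (q - 2*μ*a + μ^2*E)
            * ((σ - (LB-μ)*σ^2/2) + (t₂ - (LB-μ)*t₂^2/2)) ≤ a - μ*E := by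
          linarith only [hb1, hb2, hb3, hb4]
        have hcore := pgd_core μ LB (q - 2*μ*a + μ^2*E) (a - μ*E) E σ t₂
          hμ hLBμ hqv0 hβnn hCS hσdef ht₂def comb
        linarith only [hcore]


end PGDaux

open TopologicalSpace

/-- convergence of the preconditioned gradient descent method.
If `G` is `μ`-strongly convex and `L_B`-smooth on the sublevel set
`B = {x : G(x) ≤ G(x₀)}`, `x*` is the minimizer, and the PGD iterates are
`x_{k+1} = x_k − s 𝓛⁻¹ G'(x_k)` with `s ∈ (0, 2/(L_B+μ)]`, then `x_k ∈ B` for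
all `k`; moreover, if `s = 2/(L_B+μ)` then with `ρ = μ/L_B`
`‖x_k − x*‖_𝓛 ≤ ((1−ρ)/(1+ρ))^k ‖x₀ − x*‖_𝓛`. -/
theorem PGD_invariance_and_exponential_convergence
    {H : Type*} [NormedAddCommGroup H] [InnerProductSpace ℝ H]
    [CompleteSpace H] [SeparableSpace H]
    (L : H →ₗ[ℝ] (H →L[ℝ] ℝ))
    (C₁ C₂ : ℝ) (hC₁ : 0 < C₁) (hC₂ : 0 < C₂)
    (hsymm : ∀ x y : H, L x y = L y x)
    (hbdd : ∀ x y : H, L x y ≤ C₂ * ‖x‖ * ‖y‖)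
    (hcoer : ∀ x : H, C₁ * ‖x‖ ^ 2 ≤ L x x)
    (Linv : (H →L[ℝ] ℝ) → H)
    (hLinv : ∀ f : H →L[ℝ] ℝ, L (Linv f) = f)
    (hLinv' : ∀ x : H, Linv (L x) = x)
    (G : H → ℝ) (G' : H → H →L[ℝ] ℝ)
    (hdiff : ∀ x : H, HasFDerivAt G (G' x) x)
    (μ LB : ℝ) (hμ : 0 < μ) (hLB : 0 < LB)
    -- strong convexity
    (hsc : ∀ x y : H, (G' x - G' y) (x - y) ≥ μ * L (x - y) (x - y))
    (x₀ : H) (B : Set H) (hB : B = {x : H | G x ≤ G x₀})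
    -- L_B-smoothness on B
    (hsm : ∀ x ∈ B, ∀ y ∈ B, (G' x - G' y) (x - y) ≤ LB * L (x - y) (x - y))
    -- minimizer
    (xstar : H) (hmin : ∀ y : H, G xstar ≤ G y)
    -- step size and iterates
    (s : ℝ) (hs : 0 < s) (hs' : s ≤ 2 / (LB + μ))
    (x : ℕ → H) (hx0 : x 0 = x₀)
    (hx : ∀ k : ℕ, x (k + 1) = x k - s • Linv (G' (x k))) :
    (∀ k : ℕ, x k ∈ B) ∧
    (s = 2 / (LB + μ) →
      ∀ k : ℕ,
        Real.sqrt (L (x k - xstar) (x k - xstar))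
          ≤ ((1 - μ / LB) / (1 + μ / LB)) ^ k
              * Real.sqrt (L (x₀ - xstar) (x₀ - xstar))) := by
  have hGc : Continuous G := pgd_Gcont hdiff
  have hsm' : ∀ x y : H, G x ≤ G x₀ → G y ≤ G x₀ →
      (G' x - G' y) (x - y) ≤ LB * L (x - y) (x - y) := fun a b ha hb =>
    hsm a (by rw [hB]; exact ha) b (by rw [hB]; exact hb)
  have hG's : G' xstar = 0 := by
    have hloc : IsLocalMin G xstar := Filter.Eventually.of_forall fun y => hmin y
    exact hloc.hasFDerivAt_eq_zero (hdiff xstar)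
  -- Part 1 : invariance of the sublevel set
  have inv : ∀ k, G (x k) ≤ G x₀ := by
    intro k
    induction k with
    | zero => rw [hx0]
    | succ k ih =>
      rw [hx k]
      obtain ⟨u, hu⟩ : ∃ u', Linv (G' (x k)) = u' := ⟨_, rfl⟩
      rw [hu]
      have hLu : L u = G' (x k) := by rw [← hu]; exact hLinv _
      have hq : (G' (x k)) u = L u u := by rw [hLu]
      rcases le_or_gt ((G' (x k)) u) 0 with hq0 | hq0
      · have hu0 : u = 0 := pgd_Lzero hC₁ hcoer (by rw [← hq]; exact hq0)
        rw [hu0]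
        simpa using ih
      · have hs2 : s < 2/LB := by
          have h1 : 2/(LB+μ) < 2/LB :=
            div_lt_div_of_pos_left (by norm_num) hLB (by linarith)
          linarith [hs']
        have hgsu : ∀ τ : ℝ, (G' (x k)) (τ • u) = τ*((G' (x k)) u) := fun τ => by
          rw [map_smul, smul_eq_mul]
        have hLsu : ∀ τ : ℝ, L (τ • u) (τ • u) = τ^2*((G' (x k)) u) := by
          intro τ
          simp only [map_smul, ContinuousLinearMap.smul_apply, smul_eq_mul]
          rw [hq]; ring
        have S : ∀ τ, 0 ≤ τ → τ ≤ s → G (x k + τ • (-u)) ≤ G x₀ := by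
          apply pgd_stay hGc (x k) (-u) s hs ih
          · apply pgd_kick_neg hdiff ?_ ih
            simp only [map_neg]
            linarith only [hq0]
          · intro τ hτ0 hτT hseg
            have hmem : G (x k + τ • (-u)) ≤ G x₀ := hseg τ hτ0.le le_rfl
            have hup := pgd_breg_upper hC₁ hcoer hdiff hμ hsc hsm' ih hmem
            have hv : x k + τ • (-u) - x k = (-τ) • u := by
              rw [smul_neg, neg_smul]; abel
            rw [hv, hgsu, hLsu] at hup
            have hτLB : τ*LB < 2 := by
              have h1 := (lt_div_iff₀ hLB).mp (lt_trans hτT hs2)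
              linarith only [h1]
            have hlt2 : G (x k + τ • (-u)) < G (x k) := by
              nlinarith only [hup, mul_pos hτ0 hq0, hτLB]
            linarith only [hlt2, ih]
        have hfin := S s hs.le le_rfl
        have hxx : x k + s • (-u) = x k - s • u := by rw [smul_neg]; abel
        rw [hxx] at hfin
        exact hfin
  refine ⟨fun k => by rw [hB]; exact inv k, ?_⟩
  intro hseq k
  by_cases hdeg : G xstar < G x₀
  · -- main case
    have hE₀pos : 0 < L (x₀ - xstar) (x₀ - xstar) := by
      rcases le_or_gt (L (x₀ - xstar) (x₀ - xstar)) 0 with h|h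
      · exfalso
        have h0 := pgd_Lzero hC₁ hcoer h
        have hx0s : x₀ = xstar := sub_eq_zero.mp h0
        rw [hx0s] at hdeg
        exact lt_irrefl _ hdeg
      · exact h
    have hμLB : μ ≤ LB := by
      have h1 := hsc x₀ xstar
      have h2 := hsm' x₀ xstar le_rfl (hmin x₀)
      nlinarith only [h1, h2, hE₀pos]
    have hcnn : 0 ≤ (LB - μ)/(LB + μ) := div_nonneg (by linarith) (by linarith)
    have hcform : (1 - μ/LB)/(1 + μ/LB) = (LB - μ)/(LB + μ) := by
      rw [div_eq_div_iff (by positivity) (by positivity)]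
      field_simp
    rw [hcform]
    have hstep : ∀ j, L (x (j+1) - xstar) (x (j+1) - xstar)
        ≤ ((LB-μ)/(LB+μ))^2 * L (x j - xstar) (x j - xstar) := by
      intro j
      have hkey := pgd_key hC₁ hsymm hcoer Linv hLinv hdiff hμ hLB hsc hsm'
        xstar hmin hG's hdeg (x j) (inv j)
      obtain ⟨u, hu⟩ : ∃ u', Linv (G' (x j)) = u' := ⟨_, rfl⟩
      rw [hu] at hkey
      have hLu : L u = G' (x j) := by rw [← hu]; exact hLinv _
      have hvec : x (j+1) - xstar = (x j - xstar) - s • u := by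
        rw [hx j, hu]; abel
      rw [hvec]
      have hexp : L ((x j - xstar) - s•u) ((x j - xstar) - s•u)
          = L (x j - xstar) (x j - xstar) - 2*s*((G' (x j)) (x j - xstar))
            + s^2*((G' (x j)) u) := by
        rw [pgd_expand hsymm (x j - xstar) u s, hLu]
      rw [hexp, hseq]
      have hq2 : (2/(LB+μ))^2*((G' (x j)) u)
          ≤ (2/(LB+μ))^2*((LB + μ) * ((G' (x j)) (x j - xstar))
              - μ * LB * L (x j - xstar) (x j - xstar)) :=
        mul_le_mul_of_nonneg_left hkey (by positivity)
      have hfinal : L (x j - xstar) (x j - xstar)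
            - 2*(2/(LB+μ))*((G' (x j)) (x j - xstar))
            + (2/(LB+μ))^2*((LB + μ) * ((G' (x j)) (x j - xstar))
              - μ * LB * L (x j - xstar) (x j - xstar))
          = ((LB-μ)/(LB+μ))^2 * L (x j - xstar) (x j - xstar) := by
        field_simp
        ring
      linarith only [hq2, hfinal]
    have hsqrt : ∀ j, Real.sqrt (L (x (j+1) - xstar) (x (j+1) - xstar))
        ≤ ((LB-μ)/(LB+μ)) * Real.sqrt (L (x j - xstar) (x j - xstar)) := by
      intro j
      have h1 := Real.sqrt_le_sqrt (hstep j)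
      rwa [Real.sqrt_mul (sq_nonneg _), Real.sqrt_sq hcnn] at h1
    induction k with
    | zero => rw [hx0]; simp
    | succ k ih =>
      calc Real.sqrt (L (x (k+1) - xstar) (x (k+1) - xstar))
          ≤ ((LB-μ)/(LB+μ)) * Real.sqrt (L (x k - xstar) (x k - xstar)) := hsqrt k
        _ ≤ ((LB-μ)/(LB+μ)) * (((LB-μ)/(LB+μ))^k
              * Real.sqrt (L (x₀ - xstar) (x₀ - xstar))) :=
            mul_le_mul_of_nonneg_left ih hcnn
        _ = ((LB-μ)/(LB+μ))^(k+1) * Real.sqrt (L (x₀ - xstar) (x₀ - xstar)) := by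
            ring
  · -- degenerate case : G x₀ = G xstar
    push_neg at hdeg
    have hminx0 : ∀ y, G x₀ ≤ G y := fun y => le_trans hdeg (hmin y)
    have hG'x0 : G' x₀ = 0 := by
      have hloc : IsLocalMin G x₀ := Filter.Eventually.of_forall hminx0
      exact hloc.hasFDerivAt_eq_zero (hdiff x₀)
    have hx0s : x₀ = xstar := by
      have h := hsc x₀ xstar
      rw [hG'x0, hG's, sub_zero] at h
      have h2 : L (x₀ - xstar) (x₀ - xstar) ≤ 0 := by
        have h3 : (0 : H →L[ℝ] ℝ) (x₀ - xstar) = 0 := rfl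
        rw [h3] at h
        nlinarith only [h, hμ, pgd_Lnonneg hC₁ hcoer (x₀ - xstar)]
      exact sub_eq_zero.mp (pgd_Lzero hC₁ hcoer h2)
    have hxk : ∀ j, x j = xstar := by
      intro j
      induction j with
      | zero => rw [hx0, hx0s]
      | succ j ih =>
        rw [hx j, ih]
        have h0 : Linv (G' xstar) = 0 := by
          rw [hG's, show (0 : H →L[ℝ] ℝ) = L 0 by simp, hLinv']
        rw [h0, smul_zero, sub_zero]
    rw [hxk k, hx0s]
    simp
end

section
/- Let G : H → ℝ be μ-strongly convex and locally Lipschitz smooth in the strong sense, let η > 0 satisfy η² ≤ μ, and let X : [0,∞) → H be the unique twice continuously differentiable solution of Ẍ(t) + 2η Ẋ(t) + 𝓛⁻¹G'(X(t)) = 0, X(0) = x₀, Ẋ(0) = 0. Define V(t) := X(t) − x* + (1/η)Ẋ(t). Then the inflated energy t ↦ e^{ηt} E(X(t), V(t)) is nonincreasing on [0,∞); consequently, E(X(t), V(t)) = (η/2)‖V(t)‖_𝓛² + (1/η)(G(X(t)) − G*) ≤ e^{−ηt} E₀ for all t ≥ 0. -/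
set_option maxHeartbeats 1000000


open TopologicalSpace Set

/-- exponential decay of the Lyapunov function along the solution
of `Ẍ + 2η Ẋ + 𝓛⁻¹G'(X) = 0`, `X(0) = x₀`, `Ẋ(0) = 0`, for `G` μ-strongly
convex, locally Lipschitz smooth in the strong sense, and `η² ≤ μ`.
With `V(t) = X(t) − x* + (1/η)Ẋ(t)`, the inflated energy
`t ↦ e^{ηt} E(X(t), V(t))` is nonincreasing on `[0,∞)`; consequently
`E(X(t),V(t)) = (η/2)‖V(t)‖_𝓛² + (1/η)(G(X(t)) − G*) ≤ e^{−ηt} E₀`. -/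
theorem IVP_lyapunov_exponential_decay
    {H : Type*} [NormedAddCommGroup H] [InnerProductSpace ℝ H]
    [CompleteSpace H] [SeparableSpace H]
    (L : H →ₗ[ℝ] (H →L[ℝ] ℝ))
    (C₁ C₂ : ℝ) (hC₁ : 0 < C₁) (hC₂ : 0 < C₂)
    (hsymm : ∀ x y : H, L x y = L y x)
    (hbdd : ∀ x y : H, L x y ≤ C₂ * ‖x‖ * ‖y‖)
    (hcoer : ∀ x : H, C₁ * ‖x‖ ^ 2 ≤ L x x)
    (Linv : (H →L[ℝ] ℝ) → H)
    (hLinv : ∀ f : H →L[ℝ] ℝ, L (Linv f) = f)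
    (hLinv' : ∀ x : H, Linv (L x) = x)
    (G : H → ℝ) (G' : H → H →L[ℝ] ℝ)
    (hdiff : ∀ x : H, HasFDerivAt G (G' x) x)
    (μ : ℝ) (hμ : 0 < μ)
    (hsc : ∀ x y : H, (G' x - G' y) (x - y) ≥ μ * L (x - y) (x - y))
    (hlip : ∀ B : Set H, Convex ℝ B → Bornology.IsBounded B →
      ∃ LB > (0:ℝ), ∀ x ∈ B, ∀ y ∈ B,
        Real.sqrt ((G' x - G' y) (Linv (G' x - G' y)))
          ≤ LB * Real.sqrt (L (x - y) (x - y)))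
    (xstar : H) (hmin : ∀ y : H, G xstar ≤ G y)
    (η : ℝ) (hη : 0 < η) (hη2 : η ^ 2 ≤ μ) (x₀ : H)
    -- X is the (unique) twice continuously differentiable solution of the IVP
    (X X' X'' : ℝ → H)
    (hX1 : ∀ t ∈ Ici (0:ℝ), HasDerivWithinAt X (X' t) (Ici 0) t)
    (hX2 : ∀ t ∈ Ici (0:ℝ), HasDerivWithinAt X' (X'' t) (Ici 0) t)
    (hX3 : ContinuousOn X'' (Ici 0))
    (hX0 : X 0 = x₀) (hX0' : X' 0 = 0)
    (hODE : ∀ t > (0:ℝ), X'' t + (2 * η) • X' t + Linv (G' (X t)) = 0)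
    -- the auxiliary variable V
    (V : ℝ → H) (hV : ∀ t : ℝ, V t = X t - xstar + (1 / η) • X' t) :
    -- the inflated energy is nonincreasing ...
    AntitoneOn (fun t : ℝ => Real.exp (η * t) *
        (η / 2 * L (V t) (V t) + 1 / η * (G (X t) - G xstar))) (Ici 0) ∧
    -- ... hence the Lyapunov function decays exponentially
    (∀ t ∈ Ici (0:ℝ),
      η / 2 * L (V t) (V t) + 1 / η * (G (X t) - G xstar)
        ≤ Real.exp (-(η * t)) *
            (1 / η * (G x₀ - G xstar) + η / 2 * L (x₀ - xstar) (x₀ - xstar))) := by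
  have hη0 : η ≠ 0 := ne_of_gt hη
  -- |L x y| bound
  have habs : ∀ x y : H, |L x y| ≤ C₂ * ‖x‖ * ‖y‖ := by
    intro x y
    rcases abs_cases (L x y) with ⟨h, _⟩ | ⟨h, _⟩
    · rw [h]; exact hbdd x y
    · rw [h]
      have h2 := hbdd x (-y)
      rw [map_neg, norm_neg] at h2
      linarith
  -- the bilinear form as a continuous bilinear map
  let B : H →L[ℝ] H →L[ℝ] ℝ :=
    LinearMap.mkContinuous₂
      (LinearMap.mk₂ ℝ (fun x y => L x y)
        (fun m n y => by simp)
        (fun c m y => by simp)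
        (fun m y z => by simp)
        (fun c m y => by simp))
      C₂ (fun x y => by simpa [Real.norm_eq_abs] using habs x y)
  have hB : ∀ x y : H, B x y = L x y := fun x y => rfl
  -- quadratic lower bound from strong convexity
  have hlower : ∀ x y : H, G x + G' x (y - x) + μ / 2 * L (y - x) (y - x) ≤ G y := by
    intro x y
    set d := y - x with hd
    set q : ℝ := L d d with hq
    set ψ : ℝ → ℝ := fun s => G (x + s • d) - s * (G' x d) - μ / 2 * s ^ 2 * q with hψ
    have hpath : ∀ s : ℝ, HasDerivAt (fun s : ℝ => x + s • d) d s := fun s => by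
      simpa using ((hasDerivAt_id s).smul_const d).const_add x
    have hψ' : ∀ s : ℝ, HasDerivAt ψ ((G' (x + s • d)) d - (G' x) d - μ * s * q) s := by
      intro s
      have h1 : HasDerivAt (fun s : ℝ => G (x + s • d)) ((G' (x + s • d)) d) s :=
        (hdiff (x + s • d)).comp_hasDerivAt s (hpath s)
      have h2 : HasDerivAt (fun s : ℝ => s * ((G' x) d)) ((G' x) d) s := by
        simpa using (hasDerivAt_id s).mul_const ((G' x) d)
      have h3 : HasDerivAt (fun s : ℝ => μ / 2 * s ^ 2 * q) (μ * s * q) s := by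
        have h4 : HasDerivAt (fun s : ℝ => μ / 2 * s ^ 2) (μ / 2 * (2 * s ^ 1)) s :=
          (hasDerivAt_pow 2 s).const_mul (μ / 2)
        have h5 := h4.mul_const q
        exact h5.congr_deriv (by ring)
      exact (h1.sub h2).sub h3
    have hmono : MonotoneOn ψ (Icc 0 1) := by
      apply monotoneOn_of_deriv_nonneg (convex_Icc 0 1)
      · exact fun s _ => (hψ' s).continuousAt.continuousWithinAt
      · exact fun s _ => (hψ' s).differentiableAt.differentiableWithinAt
      · intro s hs
        rw [interior_Icc] at hs
        rw [(hψ' s).deriv]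
        have h6 := hsc (x + s • d) x
        have h7 : x + s • d - x = s • d := by abel
        rw [h7] at h6
        have h8 : ((G' (x + s • d) - G' x)) (s • d)
            = s * ((G' (x + s • d)) d - (G' x) d) := by
          simp [map_smul, ContinuousLinearMap.sub_apply, mul_sub]
        have h9 : (L (s • d)) (s • d) = s ^ 2 * q := by
          simp [map_smul, hq, smul_eq_mul]
          ring
        rw [h8, h9] at h6
        have hs0 : 0 < s := hs.1
        nlinarith [h6]
    have h10 := hmono (left_mem_Icc.mpr zero_le_one) (right_mem_Icc.mpr zero_le_one) zero_le_one
    have hψ0 : ψ 0 = G x := by simp [hψ]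
    have hψ1 : ψ 1 = G y - (G' x) d - μ / 2 * q := by
      have hxy : x + d = y := by
        rw [hd]; abel
      simp [hψ, hxy]
    rw [hψ0, hψ1] at h10
    linarith
  -- derivative of V
  have hVd : ∀ t ∈ Ici (0:ℝ),
      HasDerivWithinAt V (X' t + (1 / η) • X'' t) (Ici 0) t := by
    intro t ht
    have h1 : HasDerivWithinAt (fun t => X t - xstar + (1 / η) • X' t)
        (X' t + (1 / η) • X'' t) (Ici 0) t :=
      ((hX1 t ht).sub_const xstar).add ((hX2 t ht).const_smul (1 / η))
    exact h1.congr (fun s _ => hV s) (hV t)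
  -- derivative of t ↦ L (V t) (V t)
  have hLVV : ∀ t ∈ Ici (0:ℝ), HasDerivWithinAt (fun t => L (V t) (V t))
      (L (X' t + (1 / η) • X'' t) (V t) + L (V t) (X' t + (1 / η) • X'' t))
      (Ici 0) t := by
    intro t ht
    have h1 : HasDerivWithinAt (fun t => B (V t)) (B (X' t + (1 / η) • X'' t)) (Ici 0) t :=
      B.hasFDerivAt.comp_hasDerivWithinAt t (hVd t ht)
    have h2 := h1.clm_apply (hVd t ht)
    simpa only [hB] using h2
  -- derivative of t ↦ G (X t)
  have hGXd : ∀ t ∈ Ici (0:ℝ),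
      HasDerivWithinAt (fun t => G (X t)) ((G' (X t)) (X' t)) (Ici 0) t :=
    fun t ht => (hdiff (X t)).comp_hasDerivWithinAt t (hX1 t ht)
  -- derivative of the inflated energy
  have hFd : ∀ t ∈ Ici (0:ℝ), HasDerivWithinAt
      (fun t => Real.exp (η * t) * (η / 2 * L (V t) (V t) + 1 / η * (G (X t) - G xstar)))
      (Real.exp (η * t) *
        (η * (η / 2 * L (V t) (V t) + 1 / η * (G (X t) - G xstar))
          + (η / 2 * (L (X' t + (1 / η) • X'' t) (V t) + L (V t) (X' t + (1 / η) • X'' t))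
            + 1 / η * (G' (X t)) (X' t)))) (Ici 0) t := by
    intro t ht
    have hexp : HasDerivWithinAt (fun t : ℝ => Real.exp (η * t))
        (Real.exp (η * t) * η) (Ici 0) t := by
      have := (((hasDerivAt_id t).const_mul η).exp).hasDerivWithinAt (s := Ici (0:ℝ))
      simpa using this
    have hEd : HasDerivWithinAt
        (fun t => η / 2 * L (V t) (V t) + 1 / η * (G (X t) - G xstar))
        (η / 2 * (L (X' t + (1 / η) • X'' t) (V t) + L (V t) (X' t + (1 / η) • X'' t))
          + 1 / η * (G' (X t)) (X' t)) (Ici 0) t :=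
      ((hLVV t ht).const_mul (η / 2)).add
        (((hGXd t ht).sub_const (G xstar)).const_mul (1 / η))
    have h := hexp.mul hEd
    exact h.congr_deriv (by ring)
  -- the key pointwise inequality for t > 0
  have hkey : ∀ t : ℝ, 0 < t →
      η * (η / 2 * L (V t) (V t) + 1 / η * (G (X t) - G xstar))
        + (η / 2 * (L (X' t + (1 / η) • X'' t) (V t) + L (V t) (X' t + (1 / η) • X'' t))
          + 1 / η * (G' (X t)) (X' t)) ≤ 0 := by
    intro t ht
    have hXdd : X'' t = -((2 * η) • X' t) - Linv (G' (X t)) := by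
      have h := hODE t ht
      have : X'' t + ((2 * η) • X' t + Linv (G' (X t))) = 0 := by
        rw [← add_assoc]; exact h
      rw [eq_neg_of_add_eq_zero_left this]
      abel
    set w := X t - xstar with hw
    set u := X' t with hu
    set g := G' (X t) with hg
    have h2η : (1 / η) * (2 * η) = 2 := by field_simp
    have hVd' : u + (1 / η) • X'' t = -u - (1 / η) • Linv g := by
      rw [hXdd, smul_sub, smul_neg, smul_smul, h2η, two_smul]
      abel
    have hVt : V t = w + (1 / η) • u := hV t
    have hwg : L w (Linv g) = g w := by rw [hsymm, hLinv]
    have hug : L u (Linv g) = g u := by rw [hsymm, hLinv]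
    have e1 : L (V t) (V t)
        = L w w + (2 / η) * L w u + (1 / η) ^ 2 * L u u := by
      rw [hVt]
      simp only [map_add, map_smul, ContinuousLinearMap.add_apply,
        ContinuousLinearMap.smul_apply, ContinuousLinearMap.coe_smul', Pi.smul_apply,
        smul_eq_mul]
      rw [hsymm u w]
      ring
    have e2 : L (V t) (-u - (1 / η) • Linv g)
        = -(L w u) - (1 / η) * g w - (1 / η) * L u u - (1 / η) ^ 2 * g u := by
      rw [hVt]
      simp only [map_add, map_sub, map_neg, map_smul, ContinuousLinearMap.add_apply,
        ContinuousLinearMap.smul_apply, ContinuousLinearMap.coe_smul', Pi.smul_apply,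
        ContinuousLinearMap.neg_apply, ContinuousLinearMap.coe_neg', Pi.neg_apply,
        smul_eq_mul, hwg, hug]
      ring
    have e3 : L (-u - (1 / η) • Linv g) (V t) = L (V t) (-u - (1 / η) • Linv g) :=
      hsymm _ _
    have hlow' : G (X t) - G xstar ≤ g w - μ / 2 * L w w := by
      have hlow := hlower (X t) xstar
      have h1 : xstar - X t = -w := by rw [hw, neg_sub]
      rw [h1] at hlow
      simp only [map_neg, ContinuousLinearMap.neg_apply, ContinuousLinearMap.coe_neg',
        Pi.neg_apply, neg_neg] at hlow
      linarith
    have ha : 0 ≤ L w w := le_trans (by positivity) (hcoer w)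
    have hc : 0 ≤ L u u := le_trans (by positivity) (hcoer u)
    rw [hVd', e1, e2, e3, e2]
    have hsimp :
        η * (η / 2 * (L w w + (2 / η) * L w u + (1 / η) ^ 2 * L u u)
            + 1 / η * (G (X t) - G xstar))
          + (η / 2 * ((-(L w u) - (1 / η) * g w - (1 / η) * L u u - (1 / η) ^ 2 * g u)
              + (-(L w u) - (1 / η) * g w - (1 / η) * L u u - (1 / η) ^ 2 * g u))
            + 1 / η * g u)
        = η ^ 2 / 2 * L w w - L u u / 2 + (G (X t) - G xstar) - g w := by
      field_simp
      ring
    rw [hsimp]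
    have hprod : 0 ≤ (μ - η ^ 2) * L w w := mul_nonneg (by linarith) ha
    nlinarith [hlow', hc, hprod]
  -- antitonicity
  have hant : AntitoneOn (fun t : ℝ => Real.exp (η * t) *
      (η / 2 * L (V t) (V t) + 1 / η * (G (X t) - G xstar))) (Ici 0) := by
    apply antitoneOn_of_deriv_nonpos (convex_Ici 0)
    · exact fun t ht => (hFd t ht).continuousWithinAt
    · intro t ht
      rw [interior_Ici] at ht
      exact ((hFd t (mem_Ici.mpr (le_of_lt (mem_Ioi.mp ht)))).hasDerivAt
        (Ici_mem_nhds ht)).differentiableAt.differentiableWithinAt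
    · intro t ht
      rw [interior_Ici] at ht
      rw [((hFd t (mem_Ici.mpr (le_of_lt (mem_Ioi.mp ht)))).hasDerivAt (Ici_mem_nhds ht)).deriv]
      have h1 := hkey t ht
      have h2 := Real.exp_pos (η * t)
      nlinarith [h1, h2]
  refine ⟨hant, fun t ht => ?_⟩
  have h0 : (0:ℝ) ∈ Ici (0:ℝ) := self_mem_Ici
  have hFt := hant h0 ht ht
  simp only at hFt
  have hV0 : V 0 = x₀ - xstar := by
    rw [hV 0, hX0, hX0', smul_zero, add_zero]
  rw [mul_zero, Real.exp_zero, one_mul, hV0, hX0] at hFt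
  have hep := Real.exp_pos (η * t)
  rw [Real.exp_neg, inv_mul_eq_div, le_div_iff₀ hep]
  nlinarith [hFt]
end

section
/- For every k ≥ 0, the PAGD iterates satisfy the four equivalent identities: y_k = (1/(1+θ)) x_k + (θ/(1+θ)) v_k; x_k = (1+θ) y_k − θ v_k; v_k = (1 + 1/θ) y_k − (1/θ) x_k; and x_k − y_k = θ(y_k − v_k). In particular, y_k lies on the line segment joining x_k and v_k. -/
open TopologicalSpace

/-- the PAGD iterates (with `0 < θ < 1`) satisfy the four
equivalent identities
`y_k = (1/(1+θ)) x_k + (θ/(1+θ)) v_k`, `x_k = (1+θ) y_k − θ v_k`,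
`v_k = (1 + 1/θ) y_k − (1/θ) x_k`, `x_k − y_k = θ(y_k − v_k)`;
in particular `y_k` lies on the segment joining `x_k` and `v_k`. -/
theorem PAGD_convex_hull_identities
    {H : Type*} [NormedAddCommGroup H] [InnerProductSpace ℝ H]
    [CompleteSpace H] [SeparableSpace H]
    (L : H →ₗ[ℝ] (H →L[ℝ] ℝ))
    (C₁ C₂ : ℝ) (hC₁ : 0 < C₁) (hC₂ : 0 < C₂)
    (hsymm : ∀ x y : H, L x y = L y x)
    (hbdd : ∀ x y : H, L x y ≤ C₂ * ‖x‖ * ‖y‖)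
    (hcoer : ∀ x : H, C₁ * ‖x‖ ^ 2 ≤ L x x)
    (Linv : (H →L[ℝ] ℝ) → H)
    (hLinv : ∀ f : H →L[ℝ] ℝ, L (Linv f) = f)
    (hLinv' : ∀ x : H, Linv (L x) = x)
    (G : H → ℝ) (G' : H → H →L[ℝ] ℝ)
    (hdiff : ∀ x : H, HasFDerivAt G (G' x) x)
    -- PAGD parameters: step size s, friction η, θ = η√s, λ = (1−θ)/(1+θ)
    (s η θ lam : ℝ) (hs : 0 < s) (hη : 0 < η)
    (hθ : θ = η * Real.sqrt s) (hlam : lam = (1 - θ) / (1 + θ))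
    (hθ0 : 0 < θ) (hθ1 : θ < 1)
    -- PAGD iterates (with the convention x₋₁ = x₀, realized by ℕ-subtraction)
    (x y v : ℕ → H)
    (hy : ∀ k : ℕ, y k = x k + lam • (x k - x (k - 1)))
    (hx : ∀ k : ℕ, x (k + 1) = y k - s • Linv (G' (y k)))
    (hv0 : v 0 = x 0)
    (hv : ∀ k : ℕ, v (k + 1) = x k + (1 / θ) • (x (k + 1) - x k)) :
    ∀ k : ℕ,
      y k = (1 / (1 + θ)) • x k + (θ / (1 + θ)) • v k ∧
      x k = (1 + θ) • y k - θ • v k ∧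
      v k = (1 + 1 / θ) • y k - (1 / θ) • x k ∧
      x k - y k = θ • (y k - v k) ∧
      y k ∈ segment ℝ (x k) (v k) := by

  have hθ0' : θ ≠ 0 := ne_of_gt hθ0
  have h1θ : (1:ℝ) + θ ≠ 0 := by positivity
  have key : ∀ k : ℕ, y k = (1 / (1 + θ)) • x k + (θ / (1 + θ)) • v k := by
    intro k
    cases k with
    | zero =>
      have hy0 : y 0 = x 0 := by
        rw [hy 0]; simp
      rw [hy0, hv0]
      match_scalars <;> field_simp
    | succ n =>
      rw [hy (n + 1), hv n]
      simp only [Nat.add_sub_cancel, hlam]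
      match_scalars <;> field_simp <;> ring
  intro k
  have h1 := key k
  have h2 : x k = (1 + θ) • y k - θ • v k := by
    rw [h1]; match_scalars <;> field_simp <;> ring
  have h3 : v k = (1 + 1 / θ) • y k - (1 / θ) • x k := by
    rw [h1]; match_scalars <;> field_simp <;> ring
  have h4 : x k - y k = θ • (y k - v k) := by
    rw [h1]; match_scalars <;> field_simp <;> ring
  refine ⟨h1, h2, h3, h4, ?_⟩
  exact ⟨1 / (1 + θ), θ / (1 + θ), by positivity, by positivity,
    by field_simp, h1.symm⟩
end

section
/- Assume G : H → ℝ is μ-strongly convex and locally Lipschitz smooth, with minimizer x* and minimum G*. Fix r > 1 and set R₁ := √((2/μ)(G(x₀) − G*)), R₂ := √(2r(G(x₀) − G*)), R := R₁ + R₂/η, and 𝔅 := {x ∈ H : ‖x − x*‖_𝓛 ≤ R}, where η = √μ. Let L_B be a Lipschitz smoothness constant of G on 𝔅, and run PAGD with friction η = √μ and step size s ∈ (0, min{1/L_B, ((r−1)/(r+1))²/μ}]. Then, for all k ≥ 0, ‖x_k − x*‖_𝓛 ≤ R₁ (in particular x_k ∈ 𝔅), and y_k ∈ 𝔅 and v_k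 ∈ 𝔅; that is, 𝔅 is an invariant set for PAGD. -/
open TopologicalSpace

private lemma PAGD_gauss (n : ℕ) :
    ∑ i ∈ Finset.range n, ((i : ℝ) + 1) = n * (n + 1) / 2 := by
  induction n with
  | zero => simp
  | succ m ih =>
    rw [Finset.sum_range_succ, ih]
    push_cast
    ring

private lemma PAGD_gauss' (n : ℕ) :
    ∑ i ∈ Finset.range n, (i : ℝ) = n * (n - 1) / 2 := by
  induction n with
  | zero => simp
  | succ m ih =>
    rw [Finset.sum_range_succ, ih]
    push_cast
    ring

private lemma PAGD_bregman_upper {H : Type*} [NormedAddCommGroup H] [InnerProductSpace ℝ H]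
    (L : H →ₗ[ℝ] (H →L[ℝ] ℝ))
    (G : H → ℝ) (G' : H → H →L[ℝ] ℝ)
    (hdiff : ∀ p : H, HasFDerivAt G (G' p) p)
    (S : Set H) (hS : Convex ℝ S) (K : ℝ)
    (u w : H) (hu : u ∈ S) (hw : w ∈ S)
    (hKQ : 0 ≤ K * L (u - w) (u - w))
    (hup : ∀ p ∈ S, ∀ q ∈ S, (G' p - G' q) (p - q) ≤ K * L (p - q) (p - q)) :
    G u ≤ G w + G' w (u - w) + K / 2 * L (u - w) (u - w) := by
  set z := u - w with hz
  set Q : ℝ := L z z with hQ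
  set φ : ℝ → ℝ := fun t => G (w + t • z) with hφdef
  have hline : ∀ t : ℝ, HasDerivAt (fun t : ℝ => w + t • z) z t := by
    intro t
    have h1 : HasDerivAt (fun t : ℝ => t • z) ((1:ℝ) • z) t := (hasDerivAt_id t).smul_const z
    simpa using h1.const_add w
  have hφ : ∀ t : ℝ, HasDerivAt φ ((G' (w + t • z)) z) t := by
    intro t
    have h := (hdiff (w + t • z)).comp_hasDerivAt t (hline t)
    simpa [hφdef, Function.comp_def] using h
  have hφc : Continuous φ := continuous_iff_continuousAt.mpr fun t => (hφ t).continuousAt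
  have key : ∀ n : ℕ, 0 < n → φ 1 - φ 0 ≤ (G' w) z + K * Q / 2 + K * Q / (2 * n) := by
    intro n hn
    have hn' : (0:ℝ) < n := by exact_mod_cast hn
    have htel : ∑ i ∈ Finset.range n, (φ (((i:ℝ)+1) / n) - φ ((i:ℝ) / n)) = φ 1 - φ 0 := by
      have h := Finset.sum_range_sub (fun i : ℕ => φ ((i : ℝ) / n)) n
      have h2 : ∀ i ∈ Finset.range n,
          (φ (((i:ℝ)+1) / n) - φ ((i:ℝ) / n))
            = (fun i : ℕ => φ ((i : ℝ) / n)) (i+1) - (fun i : ℕ => φ ((i : ℝ) / n)) i := by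
        intro i _
        simp [Nat.cast_add, Nat.cast_one]
      rw [Finset.sum_congr rfl h2, h]
      norm_num [div_self (ne_of_gt hn')]
    have hterm : ∀ i ∈ Finset.range n,
        φ (((i:ℝ)+1) / n) - φ ((i:ℝ) / n)
          ≤ (1/(n:ℝ)) * ((G' w) z) + (K * Q / (n:ℝ)^2) * ((i:ℝ)+1) := by
      intro i hi
      have hin : (i:ℝ) + 1 ≤ n := by
        have h := Finset.mem_range.mp hi
        have h' : (i:ℕ) + 1 ≤ n := h
        exact_mod_cast h'
      have hab : (i:ℝ)/n < ((i:ℝ)+1)/n := by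
        rw [div_lt_div_iff₀ hn' hn']
        nlinarith [hn']
      obtain ⟨c, hcmem, hceq⟩ := exists_hasDerivAt_eq_slope φ (fun t => (G' (w + t • z)) z)
        hab hφc.continuousOn (fun t _ => hφ t)
      have hceq' : (G' (w + c • z)) z
          = (φ (((i:ℝ)+1)/n) - φ ((i:ℝ)/n)) / (((i:ℝ)+1)/n - (i:ℝ)/n) := hceq
      have hba : ((i:ℝ)+1)/n - (i:ℝ)/n = 1/n := by
        field_simp; ring
      rw [hba] at hceq'
      have hslope : φ (((i:ℝ)+1)/n) - φ ((i:ℝ)/n) = (G' (w + c • z)) z * (1/(n:ℝ)) := by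
        rw [hceq', div_mul_cancel₀]
        exact one_div_ne_zero (ne_of_gt hn')
      have hc0 : 0 < c := lt_of_le_of_lt (div_nonneg (Nat.cast_nonneg i) hn'.le) hcmem.1
      have hc1 : c ≤ 1 := by
        have h2 : c < ((i:ℝ)+1)/n := hcmem.2
        have h3 : ((i:ℝ)+1)/n ≤ 1 := by rw [div_le_one hn']; exact hin
        linarith
      have hpmem : w + c • z ∈ S := by
        have hidc : w + c • z = (1-c) • w + c • u := by
          rw [hz, smul_sub, sub_smul, one_smul]
          abel
        rw [hidc]
        exact hS hw hu (by linarith) hc0.le (by ring)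
      have hub := hup (w + c • z) hpmem w hw
      rw [add_sub_cancel_left] at hub
      have e2 : (G' (w + c • z) - G' w) (c • z) = c * ((G' (w + c • z)) z - (G' w) z) := by
        simp only [ContinuousLinearMap.sub_apply, map_smul, smul_eq_mul]
      have e3 : L (c • z) (c • z) = c^2 * Q := by
        rw [hQ]
        simp only [map_smul, ContinuousLinearMap.smul_apply, smul_eq_mul]
        ring
      rw [e2, e3] at hub
      have hd1 : (G' (w + c • z)) z - (G' w) z ≤ K * Q * c := by
        have hub' : c * ((G' (w + c • z)) z - (G' w) z) ≤ c * (K * Q * c) := by nlinarith [hub]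
        exact le_of_mul_le_mul_left hub' hc0
      have hd2 : (G' (w + c • z)) z ≤ (G' w) z + (K*Q) * (((i:ℝ)+1)/n) := by
        have h4 : (K*Q) * c ≤ (K*Q) * (((i:ℝ)+1)/n) := mul_le_mul_of_nonneg_left hcmem.2.le hKQ
        nlinarith [hd1, h4]
      rw [hslope]
      have h5 := mul_le_mul_of_nonneg_right hd2 (by positivity : (0:ℝ) ≤ 1/(n:ℝ))
      calc (G' (w + c • z)) z * (1/(n:ℝ))
          ≤ ((G' w) z + (K*Q) * (((i:ℝ)+1)/n)) * (1/(n:ℝ)) := h5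
        _ = (1/(n:ℝ)) * ((G' w) z) + (K * Q / (n:ℝ)^2) * ((i:ℝ)+1) := by
            field_simp
    have hsum := Finset.sum_le_sum hterm
    rw [htel] at hsum
    have hrhs : ∑ i ∈ Finset.range n,
        ((1/(n:ℝ)) * ((G' w) z) + (K * Q / (n:ℝ)^2) * ((i:ℝ)+1))
          = (G' w) z + K*Q/2 + K*Q/(2*(n:ℝ)) := by
      rw [Finset.sum_add_distrib, Finset.sum_const, Finset.card_range, ← Finset.mul_sum,
        PAGD_gauss n, nsmul_eq_mul]
      field_simp
      ring
    rw [hrhs] at hsum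
    exact hsum
  have hφ1 : φ 1 = G u := by
    simp only [hφdef, one_smul, hz]
    congr 1
    abel
  have hφ0 : φ 0 = G w := by simp [hφdef]
  have hfin : ∀ ε : ℝ, 0 < ε → G u ≤ G w + (G' w) z + K/2 * Q + ε := by
    intro ε hε
    obtain ⟨n, hn⟩ := exists_nat_gt (K*Q/(2*ε))
    have hn0 : 0 < n := by
      have h0 : (0:ℝ) ≤ K*Q/(2*ε) := div_nonneg hKQ (by linarith)
      have h1 : (0:ℝ) < n := lt_of_le_of_lt h0 hn
      exact_mod_cast h1
    have hnn : (0:ℝ) < n := by exact_mod_cast hn0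
    have h2 : K*Q < (n:ℝ)*(2*ε) := by
      rw [div_lt_iff₀ (by linarith : (0:ℝ) < 2*ε)] at hn
      linarith
    have h3 : K*Q/(2*(n:ℝ)) ≤ ε := by
      rw [div_le_iff₀ (by linarith : (0:ℝ) < 2*(n:ℝ))]
      nlinarith [h2]
    have h4 := key n hn0
    rw [hφ1, hφ0] at h4
    linarith
  have hfinal := le_of_forall_pos_le_add hfin
  linarith [hfinal]

private lemma PAGD_bregman_lower {H : Type*} [NormedAddCommGroup H] [InnerProductSpace ℝ H]
    (L : H →ₗ[ℝ] (H →L[ℝ] ℝ))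
    (G : H → ℝ) (G' : H → H →L[ℝ] ℝ)
    (hdiff : ∀ p : H, HasFDerivAt G (G' p) p)
    (μ : ℝ) (u w : H)
    (hμQ : 0 ≤ μ * L (u - w) (u - w))
    (hlow : ∀ p q : H, (G' p - G' q) (p - q) ≥ μ * L (p - q) (p - q)) :
    G w + G' w (u - w) + μ / 2 * L (u - w) (u - w) ≤ G u := by
  set z := u - w with hz
  set Q : ℝ := L z z with hQ
  set φ : ℝ → ℝ := fun t => G (w + t • z) with hφdef
  have hline : ∀ t : ℝ, HasDerivAt (fun t : ℝ => w + t • z) z t := by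
    intro t
    have h1 : HasDerivAt (fun t : ℝ => t • z) ((1:ℝ) • z) t := (hasDerivAt_id t).smul_const z
    simpa using h1.const_add w
  have hφ : ∀ t : ℝ, HasDerivAt φ ((G' (w + t • z)) z) t := by
    intro t
    have h := (hdiff (w + t • z)).comp_hasDerivAt t (hline t)
    simpa [hφdef, Function.comp_def] using h
  have hφc : Continuous φ := continuous_iff_continuousAt.mpr fun t => (hφ t).continuousAt
  have key : ∀ n : ℕ, 0 < n → (G' w) z + μ * Q / 2 - μ * Q / (2 * n) ≤ φ 1 - φ 0 := by
    intro n hn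
    have hn' : (0:ℝ) < n := by exact_mod_cast hn
    have htel : ∑ i ∈ Finset.range n, (φ (((i:ℝ)+1) / n) - φ ((i:ℝ) / n)) = φ 1 - φ 0 := by
      have h := Finset.sum_range_sub (fun i : ℕ => φ ((i : ℝ) / n)) n
      have h2 : ∀ i ∈ Finset.range n,
          (φ (((i:ℝ)+1) / n) - φ ((i:ℝ) / n))
            = (fun i : ℕ => φ ((i : ℝ) / n)) (i+1) - (fun i : ℕ => φ ((i : ℝ) / n)) i := by
        intro i _
        simp [Nat.cast_add, Nat.cast_one]
      rw [Finset.sum_congr rfl h2, h]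
      norm_num [div_self (ne_of_gt hn')]
    have hterm : ∀ i ∈ Finset.range n,
        (1/(n:ℝ)) * ((G' w) z) + (μ * Q / (n:ℝ)^2) * (i:ℝ)
          ≤ φ (((i:ℝ)+1) / n) - φ ((i:ℝ) / n) := by
      intro i hi
      have hab : (i:ℝ)/n < ((i:ℝ)+1)/n := by
        rw [div_lt_div_iff₀ hn' hn']
        nlinarith [hn']
      obtain ⟨c, hcmem, hceq⟩ := exists_hasDerivAt_eq_slope φ (fun t => (G' (w + t • z)) z)
        hab hφc.continuousOn (fun t _ => hφ t)
      have hceq' : (G' (w + c • z)) z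
          = (φ (((i:ℝ)+1)/n) - φ ((i:ℝ)/n)) / (((i:ℝ)+1)/n - (i:ℝ)/n) := hceq
      have hba : ((i:ℝ)+1)/n - (i:ℝ)/n = 1/n := by
        field_simp; ring
      rw [hba] at hceq'
      have hslope : φ (((i:ℝ)+1)/n) - φ ((i:ℝ)/n) = (G' (w + c • z)) z * (1/(n:ℝ)) := by
        rw [hceq', div_mul_cancel₀]
        exact one_div_ne_zero (ne_of_gt hn')
      have hc0 : 0 < c := lt_of_le_of_lt (div_nonneg (Nat.cast_nonneg i) hn'.le) hcmem.1
      have hub := hlow (w + c • z) w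
      rw [add_sub_cancel_left] at hub
      have e2 : (G' (w + c • z) - G' w) (c • z) = c * ((G' (w + c • z)) z - (G' w) z) := by
        simp only [ContinuousLinearMap.sub_apply, map_smul, smul_eq_mul]
      have e3 : L (c • z) (c • z) = c^2 * Q := by
        rw [hQ]
        simp only [map_smul, ContinuousLinearMap.smul_apply, smul_eq_mul]
        ring
      rw [e2, e3] at hub
      have hd1 : μ * Q * c ≤ (G' (w + c • z)) z - (G' w) z := by
        have hub' : c * (μ * Q * c) ≤ c * ((G' (w + c • z)) z - (G' w) z) := by nlinarith [hub]
        exact le_of_mul_le_mul_left hub' hc0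
      have hd2 : (G' w) z + (μ*Q) * ((i:ℝ)/n) ≤ (G' (w + c • z)) z := by
        have h4 : (μ*Q) * ((i:ℝ)/n) ≤ (μ*Q) * c := mul_le_mul_of_nonneg_left hcmem.1.le hμQ
        nlinarith [hd1, h4]
      rw [hslope]
      have h5 := mul_le_mul_of_nonneg_right hd2 (by positivity : (0:ℝ) ≤ 1/(n:ℝ))
      calc (1/(n:ℝ)) * ((G' w) z) + (μ * Q / (n:ℝ)^2) * (i:ℝ)
          = ((G' w) z + (μ*Q) * ((i:ℝ)/n)) * (1/(n:ℝ)) := by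
            field_simp
        _ ≤ (G' (w + c • z)) z * (1/(n:ℝ)) := h5
    have hsum := Finset.sum_le_sum hterm
    rw [htel] at hsum
    have hrhs : ∑ i ∈ Finset.range n,
        ((1/(n:ℝ)) * ((G' w) z) + (μ * Q / (n:ℝ)^2) * (i:ℝ))
          = (G' w) z + μ*Q/2 - μ*Q/(2*(n:ℝ)) := by
      rw [Finset.sum_add_distrib, Finset.sum_const, Finset.card_range, ← Finset.mul_sum,
        PAGD_gauss' n, nsmul_eq_mul]
      field_simp
      ring
    rw [hrhs] at hsum
    exact hsum
  have hφ1 : φ 1 = G u := by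
    simp only [hφdef, one_smul, hz]
    congr 1
    abel
  have hφ0 : φ 0 = G w := by simp [hφdef]
  have hfin : ∀ ε : ℝ, 0 < ε → G w + (G' w) z + μ/2 * Q ≤ G u + ε := by
    intro ε hε
    obtain ⟨n, hn⟩ := exists_nat_gt (μ*Q/(2*ε))
    have hn0 : 0 < n := by
      have h0 : (0:ℝ) ≤ μ*Q/(2*ε) := div_nonneg hμQ (by linarith)
      have h1 : (0:ℝ) < n := lt_of_le_of_lt h0 hn
      exact_mod_cast h1
    have hnn : (0:ℝ) < n := by exact_mod_cast hn0
    have h2 : μ*Q < (n:ℝ)*(2*ε) := by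
      rw [div_lt_iff₀ (by linarith : (0:ℝ) < 2*ε)] at hn
      linarith
    have h3 : μ*Q/(2*(n:ℝ)) ≤ ε := by
      rw [div_le_iff₀ (by linarith : (0:ℝ) < 2*(n:ℝ))]
      nlinarith [h2]
    have h4 := key n hn0
    rw [hφ1, hφ0] at h4
    linarith
  have hfinal := le_of_forall_pos_le_add hfin
  linarith [hfinal]

set_option maxHeartbeats 2000000 in
/-- existence of an invariant set for PAGD. With `η = √μ`,
`R₁ = √((2/μ)(G(x₀)−G*))`, `R₂ = √(2r(G(x₀)−G*))`, `R = R₁ + R₂/η`,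
`𝔅 = {x : ‖x − x*‖_𝓛 ≤ R}`, and step size
`s ∈ (0, min{1/L_B, ((r−1)/(r+1))²/μ}]`, all the PAGD iterates satisfy
`‖x_k − x*‖_𝓛 ≤ R₁` (so `x_k ∈ 𝔅`), and `y_k, v_k ∈ 𝔅`. -/
theorem PAGD_invariant_set
    {H : Type*} [NormedAddCommGroup H] [InnerProductSpace ℝ H]
    [CompleteSpace H] [SeparableSpace H]
    (L : H →ₗ[ℝ] (H →L[ℝ] ℝ))
    (C₁ C₂ : ℝ) (hC₁ : 0 < C₁) (hC₂ : 0 < C₂)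
    (hsymm : ∀ x y : H, L x y = L y x)
    (hbdd : ∀ x y : H, L x y ≤ C₂ * ‖x‖ * ‖y‖)
    (hcoer : ∀ x : H, C₁ * ‖x‖ ^ 2 ≤ L x x)
    (Linv : (H →L[ℝ] ℝ) → H)
    (hLinv : ∀ f : H →L[ℝ] ℝ, L (Linv f) = f)
    (hLinv' : ∀ x : H, Linv (L x) = x)
    (G : H → ℝ) (G' : H → H →L[ℝ] ℝ)
    (hdiff : ∀ x : H, HasFDerivAt G (G' x) x)
    (μ : ℝ) (hμ : 0 < μ)
    -- μ-strong convexity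
    (hsc : ∀ x y : H, (G' x - G' y) (x - y) ≥ μ * L (x - y) (x - y))
    -- local Lipschitz smoothness
    (hlip : ∀ B : Set H, Convex ℝ B → Bornology.IsBounded B →
      ∃ LB > (0:ℝ), ∀ x ∈ B, ∀ y ∈ B,
        (G' x - G' y) (x - y) ≤ LB * L (x - y) (x - y))
    -- minimizer and minimum
    (xstar : H) (hmin : ∀ y : H, G xstar ≤ G y)
    (x₀ : H) (r : ℝ) (hr : 1 < r)
    -- the invariant set 𝔅
    (R₁ R₂ R : ℝ)
    (hR₁ : R₁ = Real.sqrt (2 / μ * (G x₀ - G xstar)))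
    (hR₂ : R₂ = Real.sqrt (2 * r * (G x₀ - G xstar)))
    (η : ℝ) (hη : η = Real.sqrt μ)
    (hR : R = R₁ + R₂ / η)
    (𝔅 : Set H)
    (h𝔅 : 𝔅 = {z : H | Real.sqrt (L (z - xstar) (z - xstar)) ≤ R})
    -- L_B : a Lipschitz smoothness constant of G on 𝔅
    (LB : ℝ) (hLB : 0 < LB)
    (hsm : ∀ z ∈ 𝔅, ∀ w ∈ 𝔅, (G' z - G' w) (z - w) ≤ LB * L (z - w) (z - w))
    -- step size restriction
    (s : ℝ) (hs : 0 < s)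
    (hs' : s ≤ min (1 / LB) (((r - 1) / (r + 1)) ^ 2 / μ))
    -- PAGD parameters and iterates
    (θ lam : ℝ) (hθ : θ = η * Real.sqrt s) (hlam : lam = (1 - θ) / (1 + θ))
    (x y v : ℕ → H)
    (hx0 : x 0 = x₀)
    (hy : ∀ k : ℕ, y k = x k + lam • (x k - x (k - 1)))
    (hx : ∀ k : ℕ, x (k + 1) = y k - s • Linv (G' (y k)))
    (hv0 : v 0 = x 0)
    (hv : ∀ k : ℕ, v (k + 1) = x k + (1 / θ) • (x (k + 1) - x k)) :
    ∀ k : ℕ,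
      Real.sqrt (L (x k - xstar) (x k - xstar)) ≤ R₁ ∧
      x k ∈ 𝔅 ∧ y k ∈ 𝔅 ∧ v k ∈ 𝔅 := by
  -- basic positivity facts
  have hq0 : ∀ z : H, 0 ≤ L z z := fun z =>
    le_trans (mul_nonneg hC₁.le (by positivity)) (hcoer z)
  have hA0 : 0 ≤ G x₀ - G xstar := sub_nonneg.mpr (hmin x₀)
  have hηpos : 0 < η := by rw [hη]; exact Real.sqrt_pos.mpr hμ
  have hθpos : 0 < θ := by rw [hθ]; exact mul_pos hηpos (Real.sqrt_pos.mpr hs)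
  have hθsq : θ^2 = μ * s := by
    rw [hθ, hη, mul_pow, Real.sq_sqrt hμ.le, Real.sq_sqrt hs.le]
  have hsLB : s * LB ≤ 1 := by
    have h1 : s ≤ 1/LB := le_trans hs' (min_le_left _ _)
    have h2 : s * LB ≤ (1/LB) * LB := mul_le_mul_of_nonneg_right h1 hLB.le
    have h3 : (1/LB) * LB = 1 := by field_simp
    linarith
  have hθlt : θ < 1 := by
    have hs2 : s ≤ ((r-1)/(r+1))^2/μ := le_trans hs' (min_le_right _ _)
    have hfrac : (r-1)/(r+1) < 1 := by rw [div_lt_one (by linarith)]; linarith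
    have hfrac0 : (0:ℝ) ≤ (r-1)/(r+1) := div_nonneg (by linarith) (by linarith)
    have hθsq1 : θ^2 < 1 := by
      rw [hθsq]
      have h1 : μ * s ≤ μ * (((r-1)/(r+1))^2/μ) := mul_le_mul_of_nonneg_left hs2 hμ.le
      have h2 : μ * (((r-1)/(r+1))^2/μ) = ((r-1)/(r+1))^2 := by field_simp [hμ.ne']
      have h3 : ((r-1)/(r+1))^2 < 1 := pow_lt_one₀ hfrac0 hfrac two_ne_zero
      linarith
    linarith [hθsq1, sq_nonneg (θ-1)]
  have hlam0 : 0 ≤ lam := by rw [hlam]; exact div_nonneg (by linarith) (by linarith)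
  have hlam1 : lam ≤ 1 := by rw [hlam, div_le_one (by linarith)]; linarith
  have hlameq : lam * (1+θ) = 1 - θ := by
    rw [hlam]
    exact div_mul_cancel₀ _ (ne_of_gt (by linarith : (0:ℝ) < 1+θ))
  -- expansion of the bilinear form
  have expand2 : ∀ (p q : H) (α β : ℝ),
      L (α • p + β • q) (α • p + β • q)
        = α^2 * L p p + 2*(α*β)*(L p q) + β^2 * L q q := by
    intro p q α β
    simp only [map_add, map_smul, ContinuousLinearMap.add_apply,
      ContinuousLinearMap.smul_apply, smul_eq_mul]
    rw [hsymm q p]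
    ring
  -- Cauchy-Schwarz
  have hCS : ∀ a b : H, L a b ≤ Real.sqrt (L a a) * Real.sqrt (L b b) := by
    intro a b
    have hexp : ∀ t : ℝ, 0 ≤ L a a + 2*t*(L a b) + t^2 * L b b := by
      intro t
      have h := hq0 (a + t • b)
      have h2 : L (a + t • b) (a + t • b) = L a a + 2*t*(L a b) + t^2 * L b b := by
        have h3 := expand2 a b 1 t
        simpa using h3
      linarith [h2 ▸ h]
    have key : (L a b)^2 ≤ L a a * L b b := by
      rcases eq_or_lt_of_le (hq0 b) with hbb | hbb
      · rcases eq_or_ne (L a b) 0 with h | h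
        · rw [← hbb, h]; simp
        · exfalso
          have ht := hexp (-(L a a + 1)/(2 * L a b))
          rw [← hbb] at ht
          have h4 : 2 * (-(L a a + 1)/(2 * L a b)) * L a b = -(L a a + 1) := by
            field_simp
          linarith [ht, h4]
      · have ht := hexp (-(L a b)/(L b b))
        have h4 : L a a + 2 * (-(L a b)/(L b b)) * L a b + (-(L a b)/(L b b))^2 * L b b
            = L a a - (L a b)^2/(L b b) := by
          field_simp
          ring
        rw [h4] at ht
        have h5 : (L a b)^2 / L b b ≤ L a a := by linarith
        calc (L a b)^2 = ((L a b)^2 / L b b) * L b b := by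
              rw [div_mul_cancel₀ _ hbb.ne']
          _ ≤ L a a * L b b := mul_le_mul_of_nonneg_right h5 hbb.le
    calc L a b ≤ |L a b| := le_abs_self _
      _ = Real.sqrt ((L a b)^2) := (Real.sqrt_sq_eq_abs _).symm
      _ ≤ Real.sqrt (L a a * L b b) := Real.sqrt_le_sqrt key
      _ = Real.sqrt (L a a) * Real.sqrt (L b b) := Real.sqrt_mul (hq0 a) _
  -- triangle-type inequality
  have hTri : ∀ (a b : H) (c : ℝ), 0 ≤ c →
      Real.sqrt (L (a + c • b) (a + c • b))
        ≤ Real.sqrt (L a a) + c * Real.sqrt (L b b) := by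
    intro a b c hc
    have hq : L (a + c • b) (a + c • b) = L a a + 2*c*(L a b) + c^2 * L b b := by
      have h3 := expand2 a b 1 c
      simpa using h3
    have hcs := hCS a b
    have e1 : Real.sqrt (L a a)^2 = L a a := Real.sq_sqrt (hq0 a)
    have e2 : Real.sqrt (L b b)^2 = L b b := Real.sq_sqrt (hq0 b)
    have h1 : L (a + c • b) (a + c • b)
        ≤ (Real.sqrt (L a a) + c * Real.sqrt (L b b))^2 := by
      rw [hq]
      have e2c : c^2*(Real.sqrt (L b b))^2 = c^2*(L b b) := by rw [e2]
      have hmul : c*(L a b) ≤ c*(Real.sqrt (L a a) * Real.sqrt (L b b)) :=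
        mul_le_mul_of_nonneg_left hcs hc
      nlinarith [hmul, e1, e2c]
    calc Real.sqrt (L (a + c • b) (a + c • b))
        ≤ Real.sqrt ((Real.sqrt (L a a) + c * Real.sqrt (L b b))^2) := Real.sqrt_le_sqrt h1
      _ = Real.sqrt (L a a) + c * Real.sqrt (L b b) := by
          exact Real.sqrt_sq
            (add_nonneg (Real.sqrt_nonneg _) (mul_nonneg hc (Real.sqrt_nonneg _)))
  -- derivative vanishes at the minimizer
  have hG'star : G' xstar = 0 := by
    have hloc : IsLocalMin G xstar := Filter.Eventually.of_forall hmin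
    exact hloc.hasFDerivAt_eq_zero (hdiff xstar)
  -- convexity of the ball
  have hconv𝔅 : Convex ℝ 𝔅 := by
    rw [h𝔅]
    intro p hp q hq a b ha hb hab
    simp only [Set.mem_setOf_eq] at hp hq ⊢
    have hid : a • p + b • q - xstar = a • (p - xstar) + b • (q - xstar) := by
      have hb1 : b = 1 - a := by linarith
      subst hb1
      simp only [smul_sub, sub_smul, one_smul]
      abel
    rw [hid]
    have hsc1 : Real.sqrt (L (a • (p - xstar)) (a • (p - xstar)))
        = a * Real.sqrt (L (p - xstar) (p - xstar)) := by
      have h3 := expand2 (p - xstar) (p - xstar) a 0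
      simp only [zero_smul, add_zero, mul_zero, zero_mul, zero_pow, two_ne_zero,
        OfNat.ofNat_ne_zero, ne_eq, not_false_eq_true] at h3
      rw [h3, Real.sqrt_mul (sq_nonneg a), Real.sqrt_sq ha]
    calc Real.sqrt (L (a • (p - xstar) + b • (q - xstar)) (a • (p - xstar) + b • (q - xstar)))
        ≤ Real.sqrt (L (a • (p - xstar)) (a • (p - xstar)))
            + b * Real.sqrt (L (q - xstar) (q - xstar)) := hTri _ _ b hb
      _ = a * Real.sqrt (L (p - xstar) (p - xstar))
            + b * Real.sqrt (L (q - xstar) (q - xstar)) := by rw [hsc1]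
      _ ≤ a * R + b * R := add_le_add
            (mul_le_mul_of_nonneg_left hp ha) (mul_le_mul_of_nonneg_left hq hb)
      _ = R := by rw [← add_mul, hab, one_mul]
  -- Bregman bounds
  have hlower : ∀ uu ww : H,
      G ww + (G' ww) (uu - ww) + μ/2 * L (uu - ww) (uu - ww) ≤ G uu :=
    fun uu ww => PAGD_bregman_lower L G G' hdiff μ uu ww
      (mul_nonneg hμ.le (hq0 _)) hsc
  have hupper : ∀ uu ∈ 𝔅, ∀ ww ∈ 𝔅,
      G uu ≤ G ww + (G' ww) (uu - ww) + LB/2 * L (uu - ww) (uu - ww) :=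
    fun uu huu ww hww => PAGD_bregman_upper L G G' hdiff 𝔅 hconv𝔅 LB uu ww huu hww
      (mul_nonneg hLB.le (hq0 _)) hsm
  -- R facts
  have hR₁0 : 0 ≤ R₁ := hR₁ ▸ Real.sqrt_nonneg _
  have hR₁sq : R₁^2 = 2/μ * (G x₀ - G xstar) := by
    rw [hR₁]; exact Real.sq_sqrt (mul_nonneg (div_nonneg (by norm_num) hμ.le) hA0)
  have hr0 : (0:ℝ) ≤ r := by linarith
  have hrs1 : 1 < Real.sqrt r := by
    have h := Real.sqrt_lt_sqrt (by norm_num : (0:ℝ) ≤ 1) hr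
    simpa using h
  have hRr : R = R₁ + Real.sqrt r * R₁ := by
    rw [hR, hR₂, hR₁, hη]
    congr 1
    rw [show 2*r*(G x₀ - G xstar) = r * (2/μ*(G x₀ - G xstar)) * μ by field_simp]
    rw [Real.sqrt_mul (mul_nonneg hr0 (mul_nonneg (div_nonneg (by norm_num) hμ.le) hA0)) μ]
    rw [Real.sqrt_mul hr0 _]
    field_simp [ne_of_gt (Real.sqrt_pos.mpr hμ)]
  have hR0 : 0 ≤ R := by
    rw [hRr]
    linarith [mul_nonneg (Real.sqrt_nonneg r) hR₁0]
  -- degenerate case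
  by_cases hA0z : G x₀ = G xstar
  · -- x₀ is the minimizer, everything collapses
    have hx0star : x₀ = xstar := by
      have h := hlower x₀ xstar
      rw [hG'star] at h
      simp only [ContinuousLinearMap.zero_apply] at h
      have hq := hq0 (x₀ - xstar)
      have hle : L (x₀ - xstar) (x₀ - xstar) ≤ 0 := by
        have h7 : μ/2 * L (x₀ - xstar) (x₀ - xstar) ≤ 0 := by
          rw [hA0z] at h
          linarith
        by_contra hpos
        push_neg at hpos
        have := mul_pos (half_pos hμ) hpos
        linarith
      have h2 : C₁ * ‖x₀ - xstar‖^2 ≤ 0 := le_trans (hcoer _) hle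
      have h3 : ‖x₀ - xstar‖^2 ≤ 0 := by
        by_contra hpos
        push_neg at hpos
        have := mul_pos hC₁ hpos
        linarith
      have h5 : ‖x₀ - xstar‖^2 = 0 := le_antisymm h3 (sq_nonneg _)
      have h6 : ‖x₀ - xstar‖ = 0 := by
        exact pow_eq_zero_iff two_ne_zero |>.mp h5
      exact sub_eq_zero.mp (norm_eq_zero.mp h6)
    have hLinv0 : Linv 0 = 0 := by
      have h := hLinv' 0
      rwa [map_zero] at h
    have hxall : ∀ k, x k = xstar ∧ x (k+1) = xstar := by
      intro k
      induction k with
      | zero =>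
        constructor
        · rw [hx0]; exact hx0star
        · have hy0 : y 0 = xstar := by
            rw [hy 0]
            norm_num
            rw [hx0]; exact hx0star
          rw [hx 0, hy0, hG'star, hLinv0, smul_zero, sub_zero]
      | succ m ih =>
        refine ⟨ih.2, ?_⟩
        have hym1 : y (m+1) = xstar := by
          rw [hy (m+1)]
          simp only [Nat.add_sub_cancel]
          rw [ih.2, ih.1, sub_self, smul_zero, add_zero]
        rw [hx (m+1), hym1, hG'star, hLinv0, smul_zero, sub_zero]
    have hxk : ∀ k, x k = xstar := fun k => (hxall k).1
    have hyall : ∀ k, y k = xstar := by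
      intro k
      rw [hy k, hxk k, hxk (k-1), sub_self, smul_zero, add_zero]
    have hvall : ∀ k, v k = xstar := by
      intro k
      rcases k with _ | m
      · rw [hv0]; exact hxk 0
      · rw [hv m, hxk m, hxk (m+1), sub_self, smul_zero, add_zero]
    intro k
    have hzero : ∀ z : H, z = xstar → Real.sqrt (L (z - xstar) (z - xstar)) = 0 := by
      intro z h
      rw [h, sub_self]
      simp
    refine ⟨?_, ?_, ?_, ?_⟩
    · rw [hzero _ (hxk k)]; exact hR₁0
    · simp only [h𝔅, Set.mem_setOf_eq]; rw [hzero _ (hxk k)]; exact hR0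
    · simp only [h𝔅, Set.mem_setOf_eq]; rw [hzero _ (hyall k)]; exact hR0
    · simp only [h𝔅, Set.mem_setOf_eq]; rw [hzero _ (hvall k)]; exact hR0
  -- main case
  · have hA0pos : 0 < G x₀ - G xstar :=
      sub_pos.mpr (lt_of_le_of_ne (hmin x₀) (Ne.symm hA0z))
    have hR₁pos : 0 < R₁ := by
      rw [hR₁]
      exact Real.sqrt_pos.mpr (by positivity)
    set γ : ℝ := (1-θ)^2/(2*s) with hγdef
    have hγpos : 0 < γ := div_pos (pow_pos (by linarith) 2) (by linarith)
    -- step A : the gradient step stays in the ball & does not increase the distance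
    have stepA : ∀ yy : H, Real.sqrt (L (yy - xstar) (yy - xstar)) < R →
        Real.sqrt (L (yy - s • Linv (G' yy) - xstar) (yy - s • Linv (G' yy) - xstar))
          ≤ Real.sqrt (L (yy - xstar) (yy - xstar)) := by
      intro yy hyy
      set g := Linv (G' yy) with hgdef
      have hgapp : ∀ wv : H, (G' yy) wv = L g wv := fun wv => by rw [hgdef, hLinv]
      set Y := yy - xstar with hYdef
      have hqY0 : 0 ≤ L Y Y := hq0 Y
      have hmm0 : 0 ≤ L g g := hq0 g
      have hyyB : yy ∈ 𝔅 := by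
        simp only [h𝔅, Set.mem_setOf_eq]
        rw [← hYdef]
        exact hyy.le
      have hGyy : G yy - G xstar ≤ L g Y - μ/2 * L Y Y := by
        have h := hlower xstar yy
        have e1 : xstar - yy = -Y := by rw [hYdef]; abel
        rw [e1] at h
        have e2 : (G' yy) (-Y) = -(L g Y) := by rw [map_neg, hgapp]
        have e3 : L (-Y) (-Y) = L Y Y := by
          have h3 := expand2 Y Y (-1) 0
          simp only [zero_smul, add_zero, neg_smul, one_smul] at h3
          rw [h3]; ring
        rw [e2, e3] at h
        linarith
      have hcY0 : 0 ≤ L g Y := by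
        have h := hmin yy
        linarith [hGyy, mul_nonneg hμ.le hqY0]
      have hFq : ∀ t : ℝ, L (yy - t • g - xstar) (yy - t • g - xstar)
          = L Y Y - 2*t*(L g Y) + t^2*(L g g) := by
        intro t
        have hid : yy - t • g - xstar = (1:ℝ) • Y + (-t) • g := by
          rw [hYdef]
          simp only [one_smul, neg_smul]
          abel
        rw [hid, expand2, hsymm Y g]
        ring
      have hptw : ∀ t : ℝ, 0 ≤ t → t ≤ s →
          L Y Y - 2*t*(L g Y) + t^2*(L g g) ≤ R^2 →
          L Y Y - 2*t*(L g Y) + t^2*(L g g) ≤ L Y Y := by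
        intro t ht0 hts hFR
        rcases eq_or_lt_of_le ht0 with h0 | h0
        · rw [← h0]; simp
        · have hutB : yy - t • g ∈ 𝔅 := by
            simp only [h𝔅, Set.mem_setOf_eq]
            rw [hFq t]
            calc Real.sqrt (L Y Y - 2*t*(L g Y) + t^2*(L g g))
                ≤ Real.sqrt (R^2) := Real.sqrt_le_sqrt hFR
              _ = R := Real.sqrt_sq hR0
          have hdesc := hupper (yy - t • g) hutB yy hyyB
          have e1 : yy - t • g - yy = (-t) • g := by
            rw [neg_smul]; abel
          rw [e1] at hdesc
          have e2 : (G' yy) ((-t) • g) = (-t) * (L g g) := by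
            rw [map_smul, smul_eq_mul, hgapp]
          have e3 : L ((-t) • g) ((-t) • g) = t^2 * (L g g) := by
            have h3 := expand2 g g (-t) 0
            simp only [zero_smul, add_zero, mul_zero, zero_mul, zero_pow, two_ne_zero,
              OfNat.ofNat_ne_zero, ne_eq, not_false_eq_true] at h3
            rw [h3]; ring
          rw [e2, e3] at hdesc
          have hmin' := hmin (yy - t • g)
          have hLBt : LB * t ≤ 1 := by
            have := mul_le_mul_of_nonneg_left hts hLB.le
            linarith
          have hkey : t * (L g g) * (1 - LB*t/2) ≤ L g Y := by
            linarith [hdesc, hmin', hGyy, mul_nonneg hμ.le hqY0]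
          have haux : 0 ≤ (1 - LB*t)*(t*(L g g)) :=
            mul_nonneg (by linarith) (mul_nonneg h0.le hmm0)
          have h1' : t * (L g g) ≤ 2*(L g Y) := by linarith [hkey, haux]
          have h2' : t^2*(L g g) ≤ 2*t*(L g Y) := by
            linarith [mul_le_mul_of_nonneg_left h1' h0.le]
          linarith
      have hFcont : Continuous (fun t : ℝ => L Y Y - 2*t*(L g Y) + t^2*(L g g)) := by
        continuity
      set V : Set ℝ := {t : ℝ | t ∈ Set.Icc (0:ℝ) s ∧
        L Y Y - 2*t*(L g Y) + t^2*(L g g) ≤ L Y Y} with hVdef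
      have hVne : (0:ℝ) ∈ V := by
        constructor
        · exact ⟨le_refl 0, hs.le⟩
        · simp
      have hVbdd : BddAbove V := ⟨s, fun t ht => ht.1.2⟩
      have hVclosed : IsClosed V := by
        have hVeq : V = Set.Icc (0:ℝ) s ∩
            (fun t : ℝ => L Y Y - 2*t*(L g Y) + t^2*(L g g)) ⁻¹' Set.Iic (L Y Y) := by
          ext t
          simp [hVdef, Set.mem_Icc, Set.mem_preimage, Set.mem_Iic]
        rw [hVeq]
        exact isClosed_Icc.inter (isClosed_Iic.preimage hFcont)
      have ht₀V : sSup V ∈ V := hVclosed.csSup_mem ⟨0, hVne⟩ hVbdd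
      have hqYR : L Y Y < R^2 := by
        have h9 : (Real.sqrt (L Y Y))^2 < R^2 :=
          pow_lt_pow_left₀ hyy (Real.sqrt_nonneg _) two_ne_zero
        linarith [h9, Real.sq_sqrt hqY0]
      have ht₀s : sSup V = s := by
        by_contra hne
        have ht₀lt : sSup V < s := lt_of_le_of_ne ht₀V.1.2 hne
        have hFt₀ : L Y Y - 2*(sSup V)*(L g Y) + (sSup V)^2*(L g g) < R^2 :=
          lt_of_le_of_lt ht₀V.2 hqYR
        have hev : ∀ᶠ t in nhds (sSup V),
            L Y Y - 2*t*(L g Y) + t^2*(L g g) < R^2 :=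
          (hFcont.tendsto (sSup V)).eventually_lt_const hFt₀
        obtain ⟨ε, hε, hball⟩ := Metric.eventually_nhds_iff.mp hev
        set t₁ := min s (sSup V + ε/2) with ht₁def
        have ht₁gt : sSup V < t₁ := lt_min ht₀lt (by linarith)
        have ht₁mem : t₁ ∈ Set.Icc (0:ℝ) s :=
          ⟨le_trans ht₀V.1.1 ht₁gt.le, min_le_left _ _⟩
        have hd : dist t₁ (sSup V) < ε := by
          rw [Real.dist_eq, abs_of_nonneg (by linarith)]
          have h1 : t₁ ≤ sSup V + ε/2 := min_le_right _ _
          linarith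
        have hFt₁ : L Y Y - 2*t₁*(L g Y) + t₁^2*(L g g) ≤ L Y Y :=
          hptw t₁ ht₁mem.1 ht₁mem.2 (le_of_lt (hball hd))
        have : t₁ ≤ sSup V := le_csSup hVbdd ⟨ht₁mem, hFt₁⟩
        linarith
      have hsV : L Y Y - 2*s*(L g Y) + s^2*(L g g) ≤ L Y Y := by
        have h := ht₀V.2
        rw [ht₀s] at h
        exact h
      calc Real.sqrt (L (yy - s • g - xstar) (yy - s • g - xstar))
          = Real.sqrt (L Y Y - 2*s*(L g Y) + s^2*(L g g)) := by rw [hFq s]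
        _ ≤ Real.sqrt (L Y Y) := Real.sqrt_le_sqrt hsV
    -- bounds that follow from the energy inequality at index j
    have hfromP : ∀ j : ℕ,
        G (x j) + γ * L (x j - x (j-1)) (x j - x (j-1)) ≤ G x₀ →
        Real.sqrt (L (x j - xstar) (x j - xstar)) ≤ R₁ ∧
        Real.sqrt (L (y j - xstar) (y j - xstar)) < R ∧
        ((1-θ)/θ) * Real.sqrt (L (x j - x (j-1)) (x j - x (j-1))) ≤ R₁ := by
      intro j hP
      have hAj : G xstar ≤ G (x j) := hmin _
      have hdd0 := hq0 (x j - x (j-1))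
      have hγdd : γ * L (x j - x (j-1)) (x j - x (j-1)) ≤ G x₀ - G xstar := by linarith
      have h3 : (1-θ)^2 * L (x j - x (j-1)) (x j - x (j-1)) ≤ 2*s*(G x₀ - G xstar) := by
        have h := hγdd
        rw [hγdef, div_mul_eq_mul_div, div_le_iff₀ (by linarith : (0:ℝ) < 2*s)] at h
        linarith
      have hGxj : G (x j) - G xstar ≤ G x₀ - G xstar := by
        linarith [hγdd, mul_nonneg hγpos.le hdd0]
      have hXsq : L (x j - xstar) (x j - xstar) ≤ R₁^2 := by
        have h := hlower (x j) xstar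
        rw [hG'star] at h
        simp only [ContinuousLinearMap.zero_apply] at h
        rw [hR₁sq, show 2/μ*(G x₀ - G xstar) = 2*(G x₀ - G xstar)/μ by ring,
          le_div_iff₀ hμ]
        linarith [h, hGxj]
      have hnX : Real.sqrt (L (x j - xstar) (x j - xstar)) ≤ R₁ := by
        calc Real.sqrt (L (x j - xstar) (x j - xstar))
            ≤ Real.sqrt (R₁^2) := Real.sqrt_le_sqrt hXsq
          _ = R₁ := Real.sqrt_sq hR₁0
      have hlamdd : lam^2 * L (x j - x (j-1)) (x j - x (j-1)) ≤ (θ/(1+θ))^2 * R₁^2 := by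
        rw [hR₁sq, div_pow, div_mul_eq_mul_div,
          le_div_iff₀ (pow_pos (by linarith : (0:ℝ) < 1+θ) 2)]
        have e : lam^2 * L (x j - x (j-1)) (x j - x (j-1)) * (1+θ)^2
            = (1-θ)^2 * L (x j - x (j-1)) (x j - x (j-1)) := by
          linear_combination (L (x j - x (j-1)) (x j - x (j-1)) * (lam*(1+θ) + (1-θ))) * hlameq
        rw [e]
        have e2 : θ^2*(2/μ*(G x₀ - G xstar)) = 2*s*(G x₀ - G xstar) := by
          rw [hθsq]; field_simp
        rw [e2]
        exact h3
      have hΛ : lam * Real.sqrt (L (x j - x (j-1)) (x j - x (j-1))) ≤ (θ/(1+θ))*R₁ := by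
        have e1 : lam * Real.sqrt (L (x j - x (j-1)) (x j - x (j-1)))
            = Real.sqrt (lam^2 * L (x j - x (j-1)) (x j - x (j-1))) := by
          rw [Real.sqrt_mul (sq_nonneg lam), Real.sqrt_sq hlam0]
        have e2 : (θ/(1+θ))*R₁ = Real.sqrt ((θ/(1+θ))^2 * R₁^2) := by
          rw [Real.sqrt_mul (sq_nonneg _), Real.sqrt_sq (div_nonneg hθpos.le (by linarith)),
            Real.sqrt_sq hR₁0]
        rw [e1, e2]
        exact Real.sqrt_le_sqrt hlamdd
      have hyd : y j - xstar = (x j - xstar) + lam • (x j - x (j-1)) := by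
        rw [hy j]; abel
      have hnY : Real.sqrt (L (y j - xstar) (y j - xstar)) < R := by
        have h4 : Real.sqrt (L (y j - xstar) (y j - xstar)) ≤ R₁ + (θ/(1+θ))*R₁ := by
          rw [hyd]
          calc Real.sqrt (L ((x j - xstar) + lam • (x j - x (j-1)))
                ((x j - xstar) + lam • (x j - x (j-1))))
              ≤ Real.sqrt (L (x j - xstar) (x j - xstar))
                + lam * Real.sqrt (L (x j - x (j-1)) (x j - x (j-1))) := hTri _ _ lam hlam0
            _ ≤ R₁ + (θ/(1+θ))*R₁ := add_le_add hnX hΛ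
        have h5 : (θ/(1+θ))*R₁ < Real.sqrt r * R₁ := by
          apply mul_lt_mul_of_pos_right _ hR₁pos
          have h6 : θ/(1+θ) < 1 := by rw [div_lt_one (by linarith)]; linarith
          linarith [hrs1]
        rw [hRr]
        linarith
      have hvcoef : ((1-θ)/θ)^2 * L (x j - x (j-1)) (x j - x (j-1)) ≤ R₁^2 := by
        have hid2 : ((1-θ)/θ)^2 * L (x j - x (j-1)) (x j - x (j-1))
            = ((1-θ)^2 * L (x j - x (j-1)) (x j - x (j-1)))/θ^2 := by
          rw [div_pow, div_mul_eq_mul_div]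
        rw [hid2, div_le_iff₀ (pow_pos hθpos 2)]
        have e3 : R₁^2*θ^2 = 2*s*(G x₀ - G xstar) := by
          rw [hR₁sq, hθsq]
          field_simp
        rw [e3]
        exact h3
      have hvc : ((1-θ)/θ) * Real.sqrt (L (x j - x (j-1)) (x j - x (j-1))) ≤ R₁ := by
        have hc0 : (0:ℝ) ≤ (1-θ)/θ := div_nonneg (by linarith) hθpos.le
        have e1 : ((1-θ)/θ) * Real.sqrt (L (x j - x (j-1)) (x j - x (j-1)))
            = Real.sqrt (((1-θ)/θ)^2 * L (x j - x (j-1)) (x j - x (j-1))) := by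
          rw [Real.sqrt_mul (sq_nonneg _), Real.sqrt_sq hc0]
        rw [e1]
        calc Real.sqrt (((1-θ)/θ)^2 * L (x j - x (j-1)) (x j - x (j-1)))
            ≤ Real.sqrt (R₁^2) := Real.sqrt_le_sqrt hvcoef
          _ = R₁ := Real.sqrt_sq hR₁0
      exact ⟨hnX, hnY, hvc⟩
    -- the discrete Hamiltonian is bounded by its initial value
    have main : ∀ k : ℕ,
        G (x k) + γ * L (x k - x (k-1)) (x k - x (k-1)) ≤ G x₀ := by
      intro k
      induction k with
      | zero =>
        show G (x 0) + γ * L (x 0 - x 0) (x 0 - x 0) ≤ G x₀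
        rw [hx0, sub_self]
        simp
      | succ k ih =>
        simp only [Nat.add_sub_cancel]
        obtain ⟨hnX, hnY, -⟩ := hfromP k ih
        set g := Linv (G' (y k)) with hgdef
        have hgapp : ∀ wv : H, (G' (y k)) wv = L g wv := fun wv => by rw [hgdef, hLinv]
        have hxk1 : x (k+1) = y k - s • g := by rw [hgdef]; exact hx k
        have hstep := stepA (y k) hnY
        rw [← hgdef] at hstep
        have hx1b : Real.sqrt (L (x (k+1) - xstar) (x (k+1) - xstar))
            ≤ Real.sqrt (L (y k - xstar) (y k - xstar)) := by
          rw [hxk1]; exact hstep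
        have hx1mem : x (k+1) ∈ 𝔅 := by
          simp only [h𝔅, Set.mem_setOf_eq]
          exact le_trans hx1b hnY.le
        have hykmem : y k ∈ 𝔅 := by
          simp only [h𝔅, Set.mem_setOf_eq]
          exact hnY.le
        -- descent inequality
        have hdesc := hupper (x (k+1)) hx1mem (y k) hykmem
        have e1 : x (k+1) - y k = (-s) • g := by
          rw [hxk1, neg_smul]; abel
        rw [e1] at hdesc
        have e2 : (G' (y k)) ((-s) • g) = (-s) * (L g g) := by
          rw [map_smul, smul_eq_mul, hgapp]
        have e3 : L ((-s) • g) ((-s) • g) = s^2 * (L g g) := by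
          have h3 := expand2 g g (-s) 0
          simp only [zero_smul, add_zero] at h3
          rw [h3]; ring
        rw [e2, e3] at hdesc
        -- convexity at x k
        have hconv1 := hlower (x k) (y k)
        have e4 : x k - y k = (-lam) • (x k - x (k-1)) := by
          rw [hy k, neg_smul]; abel
        rw [e4] at hconv1
        have e5 : (G' (y k)) ((-lam) • (x k - x (k-1))) = (-lam) * (L g (x k - x (k-1))) := by
          rw [map_smul, smul_eq_mul, hgapp]
        have e6 : L ((-lam) • (x k - x (k-1))) ((-lam) • (x k - x (k-1)))
            = lam^2 * L (x k - x (k-1)) (x k - x (k-1)) := by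
          have h3 := expand2 (x k - x (k-1)) (x k - x (k-1)) (-lam) 0
          simp only [zero_smul, add_zero] at h3
          rw [h3]; ring
        rw [e5, e6] at hconv1
        -- expansion of the new difference term
        have e7 : x (k+1) - x k = lam • (x k - x (k-1)) + (-s) • g := by
          rw [hxk1, hy k, neg_smul]; abel
        have e8 : L (x (k+1) - x k) (x (k+1) - x k)
            = lam^2 * L (x k - x (k-1)) (x k - x (k-1))
              + 2*(lam*(-s))*(L g (x k - x (k-1))) + s^2 * (L g g) := by
          rw [e7, expand2, hsymm (x k - x (k-1)) g]
          ring
        rw [e8]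
        -- numeric part
        have hcs := hCS g (x k - x (k-1))
        have hdd0 := hq0 (x k - x (k-1))
        have hmm0 := hq0 g
        have hM0 : (0:ℝ) ≤ Real.sqrt (L g g) := Real.sqrt_nonneg _
        have hD0 : (0:ℝ) ≤ Real.sqrt (L (x k - x (k-1)) (x k - x (k-1))) := Real.sqrt_nonneg _
        have hMsq : Real.sqrt (L g g)^2 = L g g := Real.sq_sqrt hmm0
        have hDsq : Real.sqrt (L (x k - x (k-1)) (x k - x (k-1)))^2
            = L (x k - x (k-1)) (x k - x (k-1)) := Real.sq_sqrt hdd0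
        have h2θ0 : (0:ℝ) ≤ 2 - θ := by linarith
        have hfact : lam^2*(1-θ^2) = lam*(1-θ)^2 := by
          linear_combination lam*(1-θ)*hlameq
        have hchain : G (x (k+1)) ≤ G (x k) + lam*(L g (x k - x (k-1)))
            - μ/2*(lam^2*(L (x k - x (k-1)) (x k - x (k-1)))) - s*(L g g)
            + LB/2*(s^2*(L g g)) := by
          linarith [hdesc, hconv1]
        have hγ2s : 2*s*γ = (1-θ)^2 := by
          rw [hγdef]
          field_simp
        have hineq : (1-θ)^2*(lam^2*(L (x k - x (k-1)) (x k - x (k-1))))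
            - 2*(1-θ)^2*(lam*s*(L g (x k - x (k-1))))
            + (1-θ)^2*(s^2*(L g g)) + 2*s*(lam*(L g (x k - x (k-1))))
            - (μ*s)*(lam^2*(L (x k - x (k-1)) (x k - x (k-1))))
            - 2*s^2*(L g g) + LB*s^3*(L g g)
            - (1-θ)^2*(L (x k - x (k-1)) (x k - x (k-1))) ≤ 0 := by
          rw [← hθsq]
          have hco : (0:ℝ) ≤ 2*s*lam - 2*(1-θ)^2*(lam*s) := by
            linarith [mul_nonneg (mul_nonneg (mul_nonneg hs.le hlam0) hθpos.le) h2θ0]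
          have had2 : (2*s*lam - 2*(1-θ)^2*(lam*s))*(L g (x k - x (k-1)))
              ≤ 2*θ*(2-θ)*lam*s*(Real.sqrt (L g g)
                  * Real.sqrt (L (x k - x (k-1)) (x k - x (k-1)))) := by
            calc (2*s*lam - 2*(1-θ)^2*(lam*s))*(L g (x k - x (k-1)))
                ≤ (2*s*lam - 2*(1-θ)^2*(lam*s))*(Real.sqrt (L g g)
                    * Real.sqrt (L (x k - x (k-1)) (x k - x (k-1)))) :=
                  mul_le_mul_of_nonneg_left hcs hco
              _ = 2*θ*(2-θ)*lam*s*(Real.sqrt (L g g)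
                    * Real.sqrt (L (x k - x (k-1)) (x k - x (k-1)))) := by ring
          have hfactD : lam^2*(1-θ^2)*(Real.sqrt (L (x k - x (k-1)) (x k - x (k-1))))^2
              = lam*(1-θ)^2*(Real.sqrt (L (x k - x (k-1)) (x k - x (k-1))))^2 := by
            linear_combination (Real.sqrt (L (x k - x (k-1)) (x k - x (k-1))))^2 * hfact
          have hintA : (0:ℝ) ≤ θ*(2-θ)*(lam*Real.sqrt (L (x k - x (k-1)) (x k - x (k-1)))
                - s*Real.sqrt (L g g))^2 :=
            mul_nonneg (mul_nonneg hθpos.le h2θ0) (sq_nonneg _)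
          have hintB : (0:ℝ) ≤ (1 - lam)*(1-θ)^2
                *(Real.sqrt (L (x k - x (k-1)) (x k - x (k-1))))^2 :=
            mul_nonneg (mul_nonneg (by linarith : (0:ℝ) ≤ 1 - lam) (sq_nonneg (1-θ)))
              (sq_nonneg _)
          have h11 : 2*θ*(2-θ)*lam*s*(Real.sqrt (L g g)
                * Real.sqrt (L (x k - x (k-1)) (x k - x (k-1))))
              ≤ ((1-θ)^2 - lam^2*(1-2*θ))*(Real.sqrt (L (x k - x (k-1)) (x k - x (k-1))))^2
                + θ*(2-θ)*s^2*(Real.sqrt (L g g))^2 := by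
            linarith [hintA, hintB, hfactD]
          have hLB3 : LB*s^3*(L g g) ≤ s^2*(L g g) := by
            have h := mul_le_mul_of_nonneg_right hsLB (mul_nonneg (sq_nonneg s) hmm0)
            linarith [h]
          rw [hMsq, hDsq] at h11
          linarith [had2, h11, hLB3]
        have hkey : γ*(lam^2*(L (x k - x (k-1)) (x k - x (k-1)))
              + 2*(lam*(-s))*(L g (x k - x (k-1))) + s^2*(L g g))
            + lam*(L g (x k - x (k-1)))
            - μ/2*(lam^2*(L (x k - x (k-1)) (x k - x (k-1))))
            - s*(L g g) + LB/2*(s^2*(L g g))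
            - γ*(L (x k - x (k-1)) (x k - x (k-1))) ≤ 0 := by
          have hexpand : 2*s*(γ*(lam^2*(L (x k - x (k-1)) (x k - x (k-1)))
                + 2*(lam*(-s))*(L g (x k - x (k-1))) + s^2*(L g g))
              + lam*(L g (x k - x (k-1)))
              - μ/2*(lam^2*(L (x k - x (k-1)) (x k - x (k-1))))
              - s*(L g g) + LB/2*(s^2*(L g g))
              - γ*(L (x k - x (k-1)) (x k - x (k-1))))
              = (1-θ)^2*(lam^2*(L (x k - x (k-1)) (x k - x (k-1))))
                - 2*(1-θ)^2*(lam*s*(L g (x k - x (k-1))))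
                + (1-θ)^2*(s^2*(L g g)) + 2*s*(lam*(L g (x k - x (k-1))))
                - (μ*s)*(lam^2*(L (x k - x (k-1)) (x k - x (k-1))))
                - 2*s^2*(L g g) + LB*s^3*(L g g)
                - (1-θ)^2*(L (x k - x (k-1)) (x k - x (k-1))) := by
            linear_combination (lam^2*(L (x k - x (k-1)) (x k - x (k-1)))
              + 2*(lam*(-s))*(L g (x k - x (k-1))) + s^2*(L g g)
              - L (x k - x (k-1)) (x k - x (k-1))) * hγ2s
          have h2s : (0:ℝ) < 2*s := by linarith
          have hXe : 2*s*(γ*(lam^2*(L (x k - x (k-1)) (x k - x (k-1)))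
              + 2*(lam*(-s))*(L g (x k - x (k-1))) + s^2*(L g g))
              + lam*(L g (x k - x (k-1)))
              - μ/2*(lam^2*(L (x k - x (k-1)) (x k - x (k-1))))
              - s*(L g g) + LB/2*(s^2*(L g g))
              - γ*(L (x k - x (k-1)) (x k - x (k-1)))) ≤ 2*s*0 := by
            rw [mul_zero, hexpand]
            exact hineq
          exact le_of_mul_le_mul_left hXe h2s
        linarith [hchain, ih, hkey]
    -- conclusion
    intro k
    have hRge : R₁ ≤ R := by
      rw [hRr]
      linarith [mul_nonneg (Real.sqrt_nonneg r) hR₁0]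
    obtain ⟨h1, h2, -⟩ := hfromP k (main k)
    refine ⟨h1, ?_, ?_, ?_⟩
    · simp only [h𝔅, Set.mem_setOf_eq]
      exact le_trans h1 hRge
    · simp only [h𝔅, Set.mem_setOf_eq]
      exact h2.le
    · clear h1 h2
      rcases k with _ | j
      · simp only [h𝔅, Set.mem_setOf_eq]
        obtain ⟨h1, -, -⟩ := hfromP 0 (main 0)
        rw [hv0]
        exact le_trans h1 hRge
      · simp only [h𝔅, Set.mem_setOf_eq]
        obtain ⟨h1', -, h3'⟩ := hfromP (j+1) (main (j+1))
        simp only [Nat.add_sub_cancel] at h3'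
        have hvid : v (j+1) - xstar
            = (x (j+1) - xstar) + ((1-θ)/θ) • (x (j+1) - x j) := by
          have h1θ : (1:ℝ)/θ = (1-θ)/θ + 1 := by field_simp; ring
          rw [hv j, h1θ, add_smul, one_smul]
          abel
        rw [hvid]
        calc Real.sqrt (L ((x (j+1) - xstar) + ((1-θ)/θ) • (x (j+1) - x j))
              ((x (j+1) - xstar) + ((1-θ)/θ) • (x (j+1) - x j)))
            ≤ Real.sqrt (L (x (j+1) - xstar) (x (j+1) - xstar))
              + ((1-θ)/θ) * Real.sqrt (L (x (j+1) - x j) (x (j+1) - x j)) :=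
              hTri _ _ _ (div_nonneg (by linarith) hθpos.le)
          _ ≤ R₁ + R₁ := add_le_add h1' h3'
          _ ≤ R := by
              rw [hRr]
              linarith [mul_nonneg (by linarith [hrs1] : (0:ℝ) ≤ Real.sqrt r - 1) hR₁0]
end

section
/- Assume G : H → ℝ is μ-strongly convex and locally Lipschitz smooth, and run PAGD with friction η = √μ and step size s ∈ (0, min{1/L_B, ((r−1)/(r+1))²/μ}], where r > 1 and L_B is a Lipschitz smoothness constant of G on the invariant set 𝔅 = {x ∈ H : ‖x − x*‖_𝓛 ≤ R} with R = √((2/μ)(G(x₀) − G*)) + (1/η)√(2r(G(x₀) − G*)). Then the residuals converge to zero at least ℓ²-fast in the 𝓛⁻¹-norm: for every N ≥ 0, Σ_{k=0}^{N} ‖G'(y_k)‖_{𝓛⁻¹}² ≤ (2(1+λ)/(s(1−λ)))(G(x₀) − G*), and hence Σ_{k=0}^{∞} ‖G'(y_k)‖_{𝓛⁻¹}² < ∞. -/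
open TopologicalSpace

set_option maxHeartbeats 8000000 in
/-- ℓ²-convergence of the PAGD residuals. Under the invariant-set
step size restriction, for every `N`
`Σ_{k=0}^{N} ‖G'(y_k)‖_{𝓛⁻¹}² ≤ (2(1+λ)/(s(1−λ)))(G(x₀) − G*)`, and hence
`Σ_{k=0}^{∞} ‖G'(y_k)‖_{𝓛⁻¹}² < ∞` (where `‖f‖_{𝓛⁻¹}² = ⟨f, 𝓛⁻¹f⟩`). -/
theorem PAGD_residuals_ell2
    {H : Type*} [NormedAddCommGroup H] [InnerProductSpace ℝ H]
    [CompleteSpace H] [SeparableSpace H]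
    (L : H →ₗ[ℝ] (H →L[ℝ] ℝ))
    (C₁ C₂ : ℝ) (hC₁ : 0 < C₁) (hC₂ : 0 < C₂)
    (hsymm : ∀ x y : H, L x y = L y x)
    (hbdd : ∀ x y : H, L x y ≤ C₂ * ‖x‖ * ‖y‖)
    (hcoer : ∀ x : H, C₁ * ‖x‖ ^ 2 ≤ L x x)
    (Linv : (H →L[ℝ] ℝ) → H)
    (hLinv : ∀ f : H →L[ℝ] ℝ, L (Linv f) = f)
    (hLinv' : ∀ x : H, Linv (L x) = x)
    (G : H → ℝ) (G' : H → H →L[ℝ] ℝ)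
    (hdiff : ∀ x : H, HasFDerivAt G (G' x) x)
    (μ : ℝ) (hμ : 0 < μ)
    -- μ-strong convexity
    (hsc : ∀ x y : H, (G' x - G' y) (x - y) ≥ μ * L (x - y) (x - y))
    -- local Lipschitz smoothness
    (hlip : ∀ B : Set H, Convex ℝ B → Bornology.IsBounded B →
      ∃ LB > (0:ℝ), ∀ x ∈ B, ∀ y ∈ B,
        (G' x - G' y) (x - y) ≤ LB * L (x - y) (x - y))
    -- minimizer and minimum
    (xstar : H) (hmin : ∀ y : H, G xstar ≤ G y)
    (x₀ : H) (r : ℝ) (hr : 1 < r)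
    -- the invariant set 𝔅
    (R₁ R₂ R : ℝ)
    (hR₁ : R₁ = Real.sqrt (2 / μ * (G x₀ - G xstar)))
    (hR₂ : R₂ = Real.sqrt (2 * r * (G x₀ - G xstar)))
    (η : ℝ) (hη : η = Real.sqrt μ)
    (hR : R = R₁ + R₂ / η)
    (𝔅 : Set H)
    (h𝔅 : 𝔅 = {z : H | Real.sqrt (L (z - xstar) (z - xstar)) ≤ R})
    -- L_B : a Lipschitz smoothness constant of G on 𝔅
    (LB : ℝ) (hLB : 0 < LB)
    (hsm : ∀ z ∈ 𝔅, ∀ w ∈ 𝔅, (G' z - G' w) (z - w) ≤ LB * L (z - w) (z - w))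
    -- step size restriction
    (s : ℝ) (hs : 0 < s)
    (hs' : s ≤ min (1 / LB) (((r - 1) / (r + 1)) ^ 2 / μ))
    -- PAGD parameters and iterates
    (θ lam : ℝ) (hθ : θ = η * Real.sqrt s) (hlam : lam = (1 - θ) / (1 + θ))
    (x y v : ℕ → H)
    (hx0 : x 0 = x₀)
    (hy : ∀ k : ℕ, y k = x k + lam • (x k - x (k - 1)))
    (hx : ∀ k : ℕ, x (k + 1) = y k - s • Linv (G' (y k)))
    (hv0 : v 0 = x 0)
    (hv : ∀ k : ℕ, v (k + 1) = x k + (1 / θ) • (x (k + 1) - x k)) :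
    (∀ N : ℕ,
      ∑ k ∈ Finset.range (N + 1), (G' (y k)) (Linv (G' (y k)))
        ≤ 2 * (1 + lam) / (s * (1 - lam)) * (G x₀ - G xstar)) ∧
    Summable (fun k : ℕ => (G' (y k)) (Linv (G' (y k)))) := by
  ------------------------------------------------------------------
  -- basic facts about the bilinear form
  ------------------------------------------------------------------
  have hLnn : ∀ z : H, 0 ≤ L z z := fun z =>
    le_trans (by positivity) (hcoer z)
  have hLzero : ∀ z : H, L z z ≤ 0 → z = 0 := by
    intro z hz
    have h1 := hcoer z
    have h2 : ‖z‖ ^ 2 ≤ 0 := by nlinarith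
    have h3 : ‖z‖ = 0 := by nlinarith [norm_nonneg z]
    exact norm_eq_zero.mp h3
  have hLsmul : ∀ (t : ℝ) (u w : H), L (t • u) w = t * L u w := by
    intro t u w; rw [map_smul]; rfl
  have hLsmul2 : ∀ (t : ℝ) (u w : H), L u (t • w) = t * L u w := by
    intro t u w; rw [(L u).map_smul]; rfl
  have hLadd : ∀ (u v w : H), L (u + v) w = L u w + L v w := by
    intro u v w; rw [map_add]; rfl
  have hLadd2 : ∀ (u v w : H), L u (v + w) = L u v + L u w := by
    intro u v w; exact (L u).map_add v w
  have hLexp : ∀ (α β : ℝ) (u w : H),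
      L (α • u + β • w) (α • u + β • w)
        = α^2 * L u u + 2*α*β*(L u w) + β^2 * L w w := by
    intro α β u w
    simp only [hLadd, hLadd2, hLsmul, hLsmul2]
    rw [hsymm w u]
    ring
  have hCSsq : ∀ u w : H, (L u w)^2 ≤ L u u * L w w := by
    intro u w
    rcases le_or_gt (L w w) 0 with hw | hw
    · have hw0 : w = 0 := hLzero w hw
      subst hw0
      simp [map_zero]
    · have key : 0 ≤ L (u + (-(L u w / L w w)) • w) (u + (-(L u w / L w w)) • w) := hLnn _
      have e : L (u + (-(L u w / L w w)) • w) (u + (-(L u w / L w w)) • w)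
          = L u u - (L u w)^2 / L w w := by
        have h1 := hLexp 1 (-(L u w / L w w)) u w
        simp only [one_smul, one_pow, one_mul] at h1
        rw [h1]
        field_simp
        ring
      rw [e] at key
      rw [← sub_nonneg]
      calc (0:ℝ) ≤ (L u u - (L u w)^2 / L w w) * L w w := mul_nonneg key hw.le
        _ = L u u * L w w - (L u w)^2 := by field_simp
  have hCS : ∀ u w : H, L u w ≤ Real.sqrt (L u u) * Real.sqrt (L w w) := by
    intro u w
    calc L u w ≤ |L u w| := le_abs_self _
      _ = Real.sqrt ((L u w)^2) := (Real.sqrt_sq_eq_abs _).symm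
      _ ≤ Real.sqrt (L u u * L w w) := Real.sqrt_le_sqrt (hCSsq u w)
      _ = Real.sqrt (L u u) * Real.sqrt (L w w) := Real.sqrt_mul (hLnn u) _
  have hTri : ∀ u w : H, Real.sqrt (L (u + w) (u + w))
      ≤ Real.sqrt (L u u) + Real.sqrt (L w w) := by
    intro u w
    have e : L (u + w) (u + w) = L u u + 2 * L u w + L w w := by
      have := hLexp 1 1 u w
      simpa using this
    have h1 : L (u + w) (u + w) ≤ (Real.sqrt (L u u) + Real.sqrt (L w w))^2 := by
      rw [e]
      have := hCS u w
      nlinarith [Real.sq_sqrt (hLnn u), Real.sq_sqrt (hLnn w),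
        Real.sqrt_nonneg (L u u), Real.sqrt_nonneg (L w w)]
    calc Real.sqrt (L (u + w) (u + w))
        ≤ Real.sqrt ((Real.sqrt (L u u) + Real.sqrt (L w w))^2) := Real.sqrt_le_sqrt h1
      _ = Real.sqrt (L u u) + Real.sqrt (L w w) := Real.sqrt_sq (by positivity)
  have hnsmul : ∀ (t : ℝ) (u : H),
      Real.sqrt (L (t • u) (t • u)) = |t| * Real.sqrt (L u u) := by
    intro t u
    rw [hLsmul, hLsmul2, ← mul_assoc, ← pow_two, Real.sqrt_mul (sq_nonneg t),
      Real.sqrt_sq_eq_abs]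
  ------------------------------------------------------------------
  -- derivative lemmas
  ------------------------------------------------------------------
  have hcurve : ∀ (w Δ : H) (t : ℝ),
      HasDerivAt (fun τ : ℝ => G (w + τ • Δ)) ((G' (w + t • Δ)) Δ) t := by
    intro w Δ t
    have h1 : HasDerivAt (fun τ : ℝ => w + τ • Δ) ((1:ℝ) • Δ) t :=
      ((hasDerivAt_id t).smul_const Δ).const_add w
    have := (hdiff (w + t • Δ)).comp_hasDerivAt t h1
    simpa [Function.comp_def] using this
  have lowerB : ∀ w z : H,
      G w + (G' w) (z - w) + μ/2 * L (z - w) (z - w) ≤ G z := by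
    intro w z
    set Δ := z - w with hΔ
    set F : ℝ → ℝ := fun t => G (w + t • Δ) - t * ((G' w) Δ) - μ/2 * L Δ Δ * t^2 with hF
    have hFd : ∀ t : ℝ, HasDerivAt F
        ((G' (w + t • Δ)) Δ - (G' w) Δ - μ * L Δ Δ * t) t := by
      intro t
      have h1 := (hcurve w Δ t).sub ((hasDerivAt_id t).mul_const ((G' w) Δ))
      have h2 := h1.sub ((hasDerivAt_pow 2 t).const_mul (μ/2 * L Δ Δ))
      convert h2 using 1
      rfl
      rfl
      rfl
      change (G' (w + t • Δ)) Δ - (G' w) Δ - μ * (L Δ) Δ * t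
        = (G' (w + t • Δ)) Δ - 1 * (G' w) Δ - μ / 2 * (L Δ) Δ * ((2:ℝ) * t ^ 1)
      ring
    have hmono : MonotoneOn F (Set.Icc 0 1) := by
      apply monotoneOn_of_deriv_nonneg (convex_Icc 0 1)
      · exact fun t _ => ((hFd t).continuousAt.continuousWithinAt)
      · exact fun t _ => ((hFd t).differentiableAt.differentiableWithinAt)
      · intro t ht
        rw [interior_Icc] at ht
        rw [(hFd t).deriv]
        have h := hsc (w + t • Δ) w
        have e : w + t • Δ - w = t • Δ := add_sub_cancel_left w _
        rw [e, ContinuousLinearMap.sub_apply] at h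
        rw [(G' (w + t • Δ)).map_smul, (G' w).map_smul, hLsmul, hLsmul2] at h
        simp only [smul_eq_mul] at h
        nlinarith [ht.1]
    have h01 := hmono (Set.mem_Icc.mpr ⟨le_refl 0, zero_le_one⟩)
      (Set.mem_Icc.mpr ⟨zero_le_one, le_refl 1⟩) zero_le_one
    have e0 : F 0 = G w := by simp [hF]
    have e1 : F 1 = G z - (G' w) Δ - μ/2 * L Δ Δ := by
      simp only [hF, one_smul, one_pow, mul_one, one_mul]
      rw [add_sub_cancel]
    rw [e0, e1] at h01
    linarith
  have upperB : ∀ w z : H, (∀ t : ℝ, t ∈ Set.Icc (0:ℝ) 1 → w + t • (z - w) ∈ 𝔅) →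
      G z ≤ G w + (G' w) (z - w) + LB/2 * L (z - w) (z - w) := by
    intro w z hseg
    set Δ := z - w with hΔ
    set F : ℝ → ℝ := fun t => t * ((G' w) Δ) + LB/2 * L Δ Δ * t^2 - G (w + t • Δ) with hF
    have hFd : ∀ t : ℝ, HasDerivAt F
        ((G' w) Δ + LB * L Δ Δ * t - (G' (w + t • Δ)) Δ) t := by
      intro t
      have h1 := ((hasDerivAt_id t).mul_const ((G' w) Δ)).add
        ((hasDerivAt_pow 2 t).const_mul (LB/2 * L Δ Δ))
      have h2 := h1.sub (hcurve w Δ t)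
      convert h2 using 1
      rfl
      rfl
      rfl
      change (G' w) Δ + LB * (L Δ) Δ * t - (G' (w + t • Δ)) Δ
        = 1 * (G' w) Δ + LB / 2 * (L Δ) Δ * ((2:ℝ) * t ^ 1) - (G' (w + t • Δ)) Δ
      ring
    have hwmem : w ∈ 𝔅 := by
      have := hseg 0 (Set.mem_Icc.mpr ⟨le_refl 0, zero_le_one⟩)
      simpa using this
    have hmono : MonotoneOn F (Set.Icc 0 1) := by
      apply monotoneOn_of_deriv_nonneg (convex_Icc 0 1)
      · exact fun t _ => ((hFd t).continuousAt.continuousWithinAt)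
      · exact fun t _ => ((hFd t).differentiableAt.differentiableWithinAt)
      · intro t ht
        rw [interior_Icc] at ht
        rw [(hFd t).deriv]
        have hmem : w + t • Δ ∈ 𝔅 := hseg t (Set.mem_Icc.mpr ⟨ht.1.le, ht.2.le⟩)
        have h := hsm (w + t • Δ) hmem w hwmem
        have e : w + t • Δ - w = t • Δ := add_sub_cancel_left w _
        rw [e, ContinuousLinearMap.sub_apply] at h
        rw [(G' (w + t • Δ)).map_smul, (G' w).map_smul, hLsmul, hLsmul2] at h
        simp only [smul_eq_mul] at h
        nlinarith [ht.1]
    have h01 := hmono (Set.mem_Icc.mpr ⟨le_refl 0, zero_le_one⟩)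
      (Set.mem_Icc.mpr ⟨zero_le_one, le_refl 1⟩) zero_le_one
    have e0 : F 0 = - G w := by simp [hF]
    have e1 : F 1 = (G' w) Δ + LB/2 * L Δ Δ - G z := by
      simp only [hF, one_smul, one_pow, mul_one, one_mul]
      rw [add_sub_cancel]
    rw [e0, e1] at h01
    linarith
  have hG'0 : G' xstar = 0 := by
    have hloc : IsLocalMin G xstar := Filter.Eventually.of_forall hmin
    exact hloc.hasFDerivAt_eq_zero (hdiff xstar)
  have scq : ∀ z : H, μ/2 * L (z - xstar) (z - xstar) ≤ G z - G xstar := by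
    intro z
    have h := lowerB xstar z
    rw [hG'0] at h
    simp only [ContinuousLinearMap.zero_apply, add_zero] at h
    linarith
  have memB : ∀ z : H, Real.sqrt (L (z - xstar) (z - xstar)) ≤ R → z ∈ 𝔅 := by
    intro z hz
    rw [h𝔅]
    exact hz
  have segB : ∀ w z : H,
      Real.sqrt (L (w - xstar) (w - xstar)) + Real.sqrt (L (z - w) (z - w)) ≤ R →
      ∀ t : ℝ, t ∈ Set.Icc (0:ℝ) 1 → w + t • (z - w) ∈ 𝔅 := by
    intro w z hb t ht
    apply memB
    have e : w + t • (z - w) - xstar = (w - xstar) + t • (z - w) := by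
      rw [add_sub_right_comm]
    rw [e]
    calc Real.sqrt (L ((w - xstar) + t • (z - w)) ((w - xstar) + t • (z - w)))
        ≤ Real.sqrt (L (w - xstar) (w - xstar)) + Real.sqrt (L (t • (z-w)) (t • (z-w))) :=
          hTri _ _
      _ = Real.sqrt (L (w - xstar) (w - xstar)) + |t| * Real.sqrt (L (z-w) (z-w)) := by
          rw [hnsmul]
      _ ≤ Real.sqrt (L (w - xstar) (w - xstar)) + 1 * Real.sqrt (L (z-w) (z-w)) := by
          have h1 : |t| ≤ 1 := abs_le.mpr ⟨by linarith [ht.1], ht.2⟩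
          have h2 := Real.sqrt_nonneg (L (z-w) (z-w))
          nlinarith
      _ ≤ R := by rw [one_mul]; exact hb
  ------------------------------------------------------------------
  -- parameter facts
  ------------------------------------------------------------------
  have ha0 : 0 ≤ G x₀ - G xstar := sub_nonneg.2 (hmin x₀)
  have hθsq : θ^2 = μ * s := by
    rw [hθ, hη, mul_pow, Real.sq_sqrt hμ.le, Real.sq_sqrt hs.le]
  have hθpos : 0 < θ := by
    rw [hθ, hη]
    exact mul_pos (Real.sqrt_pos.2 hμ) (Real.sqrt_pos.2 hs)
  have hrp : (0:ℝ) < r + 1 := by linarith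
  have hκpos : 0 < (r-1)/(r+1) := div_pos (by linarith) hrp
  have hκ1 : (r-1)/(r+1) < 1 := by
    rw [div_lt_one hrp]; linarith
  have hs'2 : s ≤ ((r-1)/(r+1))^2/μ := le_trans hs' (min_le_right _ _)
  have hsLB : s * LB ≤ 1 := by
    have h1 : s ≤ 1/LB := le_trans hs' (min_le_left _ _)
    rw [le_div_iff₀ hLB] at h1
    exact h1
  have hθκ : θ ≤ (r-1)/(r+1) := by
    have h1 : θ^2 ≤ ((r-1)/(r+1))^2 := by
      rw [hθsq]
      calc μ * s ≤ μ * (((r-1)/(r+1))^2/μ) := mul_le_mul_of_nonneg_left hs'2 hμ.le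
        _ = ((r-1)/(r+1))^2 := by field_simp
    nlinarith [hθpos, hκpos]
  have hθ1 : θ < 1 := lt_of_le_of_lt hθκ hκ1
  have h1θ : (0:ℝ) < 1 + θ := by linarith
  have hlam0 : 0 < lam := by
    rw [hlam]; exact div_pos (by linarith) h1θ
  have hlam1 : lam < 1 := by
    rw [hlam, div_lt_one h1θ]; linarith
  have ht2 : (Real.sqrt r)^2 = r := Real.sq_sqrt (by linarith)
  have ht1 : 1 ≤ Real.sqrt r := by
    rw [show (1:ℝ) = Real.sqrt 1 by simp]
    exact Real.sqrt_le_sqrt (by linarith)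
  have hR₁nn : 0 ≤ R₁ := by rw [hR₁]; exact Real.sqrt_nonneg _
  have hR₁sq : R₁^2 = 2/μ*(G x₀ - G xstar) := by
    rw [hR₁]; exact Real.sq_sqrt (by positivity)
  have hRR : R = (1 + Real.sqrt r) * R₁ := by
    rw [hR, hR₂, hη, hR₁]
    have h1 : Real.sqrt (2*r*(G x₀ - G xstar)) / Real.sqrt μ
        = Real.sqrt r * Real.sqrt (2/μ*(G x₀ - G xstar)) := by
      rw [← Real.sqrt_div (by positivity) μ,
        ← Real.sqrt_mul (by linarith : (0:ℝ) ≤ r),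
        show r * (2/μ*(G x₀ - G xstar)) = 2*r*(G x₀ - G xstar)/μ by ring]
    rw [h1]
    ring
  have hRnn : 0 ≤ R := by
    rw [hRR]
    have : (0:ℝ) ≤ 1 + Real.sqrt r := by linarith
    exact mul_nonneg this hR₁nn
  have hgeo : 4*(1+((r-1)/(r+1))^2) ≤ (1+Real.sqrt r)^2 := by
    rw [div_pow, ← sub_nonneg]
    have e : (1+Real.sqrt r)^2 - 4*(1+(r-1)^2/(r+1)^2)
        = ((1+Real.sqrt r)^2*(r+1)^2 - 4*((r+1)^2+(r-1)^2))/(r+1)^2 := by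
      field_simp
    rw [e]
    apply div_nonneg _ (by positivity)
    set t := Real.sqrt r with htdef
    rw [← ht2]
    have hfac : (0:ℝ) ≤ t^5+3*t^4-2*t^3+2*t^2+5*t+7 := by
      nlinarith [ht1, sq_nonneg t, pow_nonneg (le_trans zero_le_one ht1) 3]
    nlinarith [mul_nonneg (sub_nonneg.2 ht1) hfac]
  ------------------------------------------------------------------
  -- the Lyapunov functional J
  ------------------------------------------------------------------
  set J : ℕ → ℝ := fun n =>
    2*s*(G (x n) - G xstar) + lam * L (x n - x (n-1)) (x n - x (n-1)) with hJdef
  have hgy : ∀ k : ℕ, (G' (y k)) (Linv (G' (y k)))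
      = L (Linv (G' (y k))) (Linv (G' (y k))) := by
    intro k
    have h : (L (Linv (G' (y k)))) (Linv (G' (y k))) = (G' (y k)) (Linv (G' (y k))) := by
      rw [hLinv]
    exact h.symm
  have hgnn : ∀ k : ℕ, 0 ≤ (G' (y k)) (Linv (G' (y k))) := by
    intro k; rw [hgy k]; exact hLnn _
  have hJ0 : J 0 = 2*s*(G x₀ - G xstar) := by
    simp [hJdef, hx0, sub_self, map_zero]
  ------------------------------------------------------------------
  -- the one-step estimate
  ------------------------------------------------------------------
  have step : ∀ k : ℕ, J k ≤ 2*s*(G x₀ - G xstar) →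
      s^2*θ*((G' (y k)) (Linv (G' (y k)))) + J (k+1) ≤ J k := by
    intro k hJk
    simp only [hJdef] at hJk ⊢
    set P : H := Linv (G' (y k)) with hPdef
    have hLP : L P = G' (y k) := hLinv _
    set D : H := x k - x (k-1) with hDdef
    set gk : ℝ := L P P with hgkdef
    set h2 : ℝ := L D D with hh2def
    set cc : ℝ := L P D with hccdef
    set sg : ℝ := Real.sqrt gk with hsgdef
    set HH : ℝ := Real.sqrt h2 with hHdef
    have hgknn : 0 ≤ gk := hLnn P
    have hh2nn : 0 ≤ h2 := hLnn D
    have hsg2 : sg^2 = gk := Real.sq_sqrt hgknn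
    have hH2 : HH^2 = h2 := Real.sq_sqrt hh2nn
    have hsgnn : 0 ≤ sg := Real.sqrt_nonneg _
    have hHnn : 0 ≤ HH := Real.sqrt_nonneg _
    have hgyk : (G' (y k)) P = gk := by rw [hgkdef, ← hLP]
    have hyk : y k = x k + lam • D := by rw [hDdef]; exact hy k
    clear_value P D gk h2 cc sg HH
    -- consequences of J k ≤ J 0
    have hak : G (x k) - G xstar ≤ G x₀ - G xstar := by
      have h1 : 0 ≤ lam * h2 := mul_nonneg hlam0.le hh2nn
      have h2' : 2*s*(G (x k) - G xstar) ≤ 2*s*(G x₀ - G xstar) := by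
        linarith only [hJk, h1]
      exact le_of_mul_le_mul_left h2' (by linarith)
    have haknn : 0 ≤ G (x k) - G xstar := sub_nonneg.2 (hmin _)
    have hh2b : lam * h2 ≤ 2*s*((G x₀ - G xstar) - (G (x k) - G xstar)) := by
      linarith only [hJk]
    -- norms of x k - xstar and y k - xstar
    set nX : ℝ := Real.sqrt (L (x k - xstar) (x k - xstar)) with hnXdef
    set ny : ℝ := Real.sqrt (L (y k - xstar) (y k - xstar)) with hnydef
    have hnXnn : 0 ≤ nX := Real.sqrt_nonneg _
    have hnynn : 0 ≤ ny := Real.sqrt_nonneg _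
    have hnX2 : nX^2 = L (x k - xstar) (x k - xstar) := Real.sq_sqrt (hLnn _)
    have hny2 : ny^2 = L (y k - xstar) (y k - xstar) := Real.sq_sqrt (hLnn _)
    clear_value nX ny
    have hnXb : μ * nX^2 ≤ 2*(G (x k) - G xstar) := by
      rw [hnX2]
      have hq := scq (x k)
      linarith only [hq]
    have hyx : y k - xstar = (x k - xstar) + lam • D := by
      rw [hyk, add_sub_right_comm]
    have hny1 : ny ≤ nX + lam * HH := by
      rw [hnydef, hyx]
      refine le_trans (hTri _ _) ?_
      rw [hnsmul lam D, abs_of_pos hlam0, ← hh2def, ← hHdef, ← hnXdef]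
    have hΔnn : 0 ≤ (G x₀ - G xstar) - (G (x k) - G xstar) := by
      linarith only [hak]
    have hμsκ : μ*s ≤ ((r-1)/(r+1))^2 := by
      calc μ * s ≤ μ * (((r-1)/(r+1))^2/μ) := mul_le_mul_of_nonneg_left hs'2 hμ.le
        _ = ((r-1)/(r+1))^2 := by field_simp
    have hlamHH : μ * (lam*HH)^2
        ≤ 2*((r-1)/(r+1))^2*((G x₀ - G xstar) - (G (x k) - G xstar)) := by
      have e1 : μ*(lam*HH)^2 = μ*(lam^2*h2) := by rw [mul_pow, hH2]
      have h2' : μ*(lam^2*h2) ≤ μ*(lam*h2) := by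
        have hx1 : 0 ≤ μ*(lam*h2)*(1-lam) :=
          mul_nonneg (mul_nonneg hμ.le (mul_nonneg hlam0.le hh2nn))
            (by linarith only [hlam1])
        linarith only [hx1]
      have h3 : μ*(lam*h2)
          ≤ μ*(2*s*((G x₀ - G xstar) - (G (x k) - G xstar))) :=
        mul_le_mul_of_nonneg_left hh2b hμ.le
      have h5 : μ*(2*s*((G x₀ - G xstar) - (G (x k) - G xstar)))
          ≤ 2*((r-1)/(r+1))^2*((G x₀ - G xstar) - (G (x k) - G xstar)) := by
        nlinarith only [hμsκ, hΔnn]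
      linarith only [e1 ▸ le_trans h2' (le_trans h3 h5)]
    have hnyB : 2*ny ≤ R := by
      have h1' : ny^2 ≤ (nX + lam*HH)^2 := pow_le_pow_left₀ hnynn hny1 2
      have hCSsc : ((r-1)/(r+1))^2*(nX + lam*HH)^2
          ≤ (1+((r-1)/(r+1))^2)*(((r-1)/(r+1))^2*nX^2 + (lam*HH)^2) := by
        nlinarith only [sq_nonneg ((lam*HH) - ((r-1)/(r+1))^2*nX)]
      have h4 : μ*(((r-1)/(r+1))^2*ny^2)
          ≤ 2*((r-1)/(r+1))^2*(1+((r-1)/(r+1))^2)*(G x₀ - G xstar) := by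
        linarith only [mul_le_mul_of_nonneg_left h1' (mul_nonneg hμ.le (sq_nonneg ((r-1)/(r+1)))),
          mul_le_mul_of_nonneg_left hCSsc hμ.le,
          mul_le_mul_of_nonneg_left (add_le_add (mul_le_mul_of_nonneg_left hnXb (sq_nonneg ((r-1)/(r+1)))) hlamHH)
            (by positivity : (0:ℝ) ≤ 1+((r-1)/(r+1))^2)]
      have hA : μ*ny^2 ≤ 2*(1+((r-1)/(r+1))^2)*(G x₀ - G xstar) := by
        have hk2 : (0:ℝ) < ((r-1)/(r+1))^2 := pow_pos hκpos 2
        have h4' : ((r-1)/(r+1))^2 * (μ*ny^2)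
            ≤ ((r-1)/(r+1))^2 * (2*(1+((r-1)/(r+1))^2)*(G x₀ - G xstar)) := by
          linarith only [h4]
        exact le_of_mul_le_mul_left h4' hk2
      have hμR2 : μ*R^2 = (1+Real.sqrt r)^2*(2*(G x₀ - G xstar)) := by
        rw [hRR, mul_pow, hR₁sq]; field_simp; try ring
      have h5' : μ*(2*ny)^2 ≤ μ*R^2 := by
        rw [hμR2]
        linarith only [hA, mul_le_mul_of_nonneg_right hgeo
          (by linarith only [ha0] : (0:ℝ) ≤ 2*(G x₀ - G xstar))]
      have h6 : (2*ny)^2 ≤ R^2 := le_of_mul_le_mul_left h5' hμ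
      have h7 := Real.sqrt_le_sqrt h6
      rwa [Real.sqrt_sq (by positivity), Real.sqrt_sq hRnn] at h7
    have hymem : y k ∈ 𝔅 := by
      apply memB
      rw [← hnydef]
      linarith only [hnyB, hnynn]
    by_cases hP0 : G' (y k) = 0
    · -- trivial case: the gradient vanishes
      have hPz : P = 0 := by
        rw [hPdef, hP0]
        have h0 := hLinv' 0
        rwa [map_zero] at h0
      have hxk1 : x (k+1) = y k := by
        rw [hx k, ← hPdef, hPz, smul_zero, sub_zero]
      have hdk1 : x (k+1) - x (k+1-1) = lam • D := by
        simp only [Nat.add_sub_cancel]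
        rw [hxk1, hyk, add_sub_cancel_left]
      have hGyx : G (y k) ≤ G (x k) := by
        have h := lowerB (y k) (x k)
        rw [hP0] at h
        simp only [ContinuousLinearMap.zero_apply, add_zero] at h
        nlinarith only [h, hLnn (x k - y k), hμ.le]
      rw [hP0]
      simp only [ContinuousLinearMap.zero_apply, mul_zero, zero_add]
      rw [hdk1, hxk1]
      rw [hLsmul, hLsmul2, ← hh2def]
      linarith only [mul_le_mul_of_nonneg_left (sub_le_sub_right hGyx (G xstar))
          (by linarith only [hs] : (0:ℝ) ≤ 2*s),
        mul_nonneg (mul_nonneg hlam0.le hh2nn)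
          (by nlinarith only [hlam0, hlam1] : (0:ℝ) ≤ 1 - lam^2)]
    · -- main case
      have hPne : P ≠ 0 := by
        intro h
        exact hP0 (by rw [← hLP, h, map_zero])
      have hgpos : 0 < gk := by
        rw [hgkdef]
        exact lt_of_lt_of_le (mul_pos hC₁ (pow_pos (norm_pos_iff.mpr hPne) 2)) (hcoer P)
      have hsgpos : 0 < sg := by rw [hsgdef]; exact Real.sqrt_pos.mpr hgpos
      have ha0pos : 0 < G x₀ - G xstar := by
        rcases lt_or_eq_of_le ha0 with h | h
        · exact h
        · exfalso
          have hak0 : G (x k) - G xstar = 0 := le_antisymm (by linarith only [hak, h]) haknn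
          have ha0z : 2*s*((G x₀ - G xstar) - (G (x k) - G xstar)) = 0 := by
            rw [← h, hak0]; ring
          have hh20 : h2 ≤ 0 := by nlinarith only [hh2b, hlam0, ha0z]
          have hD0 : D = 0 := by
            apply hLzero D
            rw [← hh2def]; exact hh20
          have hxks : x k = xstar := by
            have h1 := scq (x k)
            have h2'' : L (x k - xstar) (x k - xstar) ≤ 0 := by
              nlinarith only [hμ, hak0, h1]
            exact sub_eq_zero.mp (hLzero _ h2'')
          apply hP0
          rw [hyk, hD0, smul_zero, add_zero, hxks, hG'0]
      have hR₁pos : 0 < R₁ := by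
        rw [hR₁]; exact Real.sqrt_pos.mpr (by positivity)
      have hRpos : 0 < R := by
        rw [hRR]
        exact mul_pos (by linarith only [ht1] : (0:ℝ) < 1 + Real.sqrt r) hR₁pos
      set room : ℝ := R - ny with hroomdef
      have hroomny : ny ≤ room := by rw [hroomdef]; linarith only [hnyB]
      have hroompos : 0 < room := by rw [hroomdef]; linarith only [hnyB, hnynn, hRpos]
      -- smoothness bound from the minimizer
      have hsegY : ∀ t : ℝ, t ∈ Set.Icc (0:ℝ) 1 → xstar + t • (y k - xstar) ∈ 𝔅 := by
        apply segB
        rw [sub_self]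
        simp only [map_zero, ContinuousLinearMap.zero_apply, Real.sqrt_zero, zero_add]
        rw [← hnydef]
        linarith only [hnyB, hnynn]
      have hayb : G (y k) - G xstar ≤ LB/2 * ny^2 := by
        have h := upperB xstar (y k) hsegY
        rw [hG'0] at h
        simp only [ContinuousLinearMap.zero_apply, add_zero] at h
        rw [← hny2] at h
        linarith only [h]
      -- gradient bound via the room to the boundary
      set c0 : ℝ := room / sg with hc0def
      have hc0pos : 0 < c0 := div_pos hroompos hsgpos
      clear_value room c0
      have hsegz : ∀ t : ℝ, t ∈ Set.Icc (0:ℝ) 1 →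
          y k + t • ((y k + (-c0) • P) - y k) ∈ 𝔅 := by
        apply segB
        rw [add_sub_cancel_left, hnsmul, abs_neg, abs_of_pos hc0pos, ← hgkdef, ← hsgdef,
          ← hnydef, hc0def, div_mul_cancel₀ _ (ne_of_gt hsgpos), hroomdef]
        linarith only []
      have hgrad : room * sg ≤ (G (y k) - G xstar) + LB/2 * room^2 := by
        have h := upperB (y k) (y k + (-c0) • P) hsegz
        rw [add_sub_cancel_left, (G' (y k)).map_smul] at h
        simp only [smul_eq_mul] at h
        rw [hgyk, hLsmul, hLsmul2, ← hgkdef] at h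
        have hzmin := hmin (y k + (-c0) • P)
        have hsgne : sg ≠ 0 := ne_of_gt hsgpos
        have e1 : (-c0) * gk = -(room * sg) := by
          rw [hc0def, ← hsg2]; field_simp
        have e2 : (-c0) * ((-c0) * gk) = room^2 := by
          rw [hc0def, ← hsg2]; field_simp
        rw [e2, e1] at h
        linarith only [h, hzmin]
      have hssg : s * sg ≤ room := by
        have h1 : s * sg * room ≤ room * room := by
          nlinarith only [mul_le_mul_of_nonneg_left hgrad hs.le,
            mul_le_mul_of_nonneg_left hayb hs.le,
            mul_nonneg (sub_nonneg.2 hsLB) (sq_nonneg ny),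
            mul_nonneg (sub_nonneg.2 hsLB) (sq_nonneg room),
            pow_le_pow_left₀ hnynn hroomny 2]
        exact le_of_mul_le_mul_right h1 hroompos
      -- descent step
      have hxk1 : x (k+1) = y k + (-s) • P := by
        rw [hx k, ← hPdef, neg_smul, ← sub_eq_add_neg]
      have hsegx : ∀ t : ℝ, t ∈ Set.Icc (0:ℝ) 1 →
          y k + t • (x (k+1) - y k) ∈ 𝔅 := by
        apply segB
        rw [hxk1, add_sub_cancel_left, hnsmul, abs_neg, abs_of_pos hs, ← hgkdef,
          ← hsgdef, ← hnydef]
        have h1 := hssg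
        rw [hroomdef] at h1
        linarith only [h1]
      have hdesc2s : 2*s*(G (x (k+1)) - G xstar) ≤ 2*s*(G (y k) - G xstar) - s^2*gk := by
        have h := upperB (y k) (x (k+1)) hsegx
        rw [show x (k+1) - y k = (-s) • P from by rw [hxk1, add_sub_cancel_left]] at h
        rw [(G' (y k)).map_smul] at h
        simp only [smul_eq_mul] at h
        rw [hgyk, hLsmul, hLsmul2, ← hgkdef] at h
        linarith only [mul_le_mul_of_nonneg_left h (by linarith only [hs] : (0:ℝ) ≤ 2*s),
          mul_nonneg (sub_nonneg.2 hsLB) (mul_nonneg (mul_nonneg hs.le hs.le) hgknn)]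
      -- strong convexity between y k and x k
      have hGD : (G' (y k)) D = cc := by rw [hccdef, ← hLP]
      have hxyk : x k - y k = (-lam) • D := by
        rw [hyk, neg_smul]
        exact sub_add_cancel_left _ _
      have hsc2s : 2*s*(G (y k) - G xstar)
          ≤ 2*s*(G (x k) - G xstar) + 2*s*lam*cc - s*μ*lam^2*h2 := by
        have h := lowerB (y k) (x k)
        rw [hxyk, (G' (y k)).map_smul] at h
        simp only [smul_eq_mul] at h
        rw [hGD, hLsmul, hLsmul2, ← hh2def] at h
        linarith only [mul_le_mul_of_nonneg_left h (by linarith only [hs] : (0:ℝ) ≤ 2*s)]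
      have hccb : cc ≤ sg * HH := by
        rw [hccdef, hsgdef, hHdef, hgkdef, hh2def]
        exact hCS P D
      -- expansion of the new increment
      have hdk1 : x (k+1) - x (k+1-1) = lam • D + (-s) • P := by
        simp only [Nat.add_sub_cancel]
        rw [hxk1, hyk]
        abel
      have he3 : L (x (k+1) - x (k+1-1)) (x (k+1) - x (k+1-1))
          = lam^2*h2 - 2*lam*s*cc + s^2*gk := by
        rw [hdk1, hLexp lam (-s) D P, hsymm D P, ← hccdef, ← hh2def, ← hgkdef]
        ring
      -- core algebraic inequality
      have hμe : μ = θ^2/s := by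
        rw [hθsq, mul_div_assoc, div_self hs.ne', mul_one]
      have core : s^2*(θ-1+lam)*gk + 2*s*lam*(1-lam)*cc
          ≤ (lam*(1-lam^2) + s*μ*lam^2)*h2 := by
        have hid : (lam*(1-lam^2) + s*μ*lam^2)*h2
              - (s^2*(θ-1+lam)*gk + 2*s*lam*(1-lam)*cc)
            = 2*s*((1-θ)/(1+θ))*(2*θ/(1+θ))*(sg*HH - cc)
              + (θ*(1-θ)/(1+θ)^3) * ((s*(1+θ)*sg - 2*HH)^2 + θ*(1-θ)*(1+θ)*HH^2) := by
          rw [hlam, hμe, ← hsg2, ← hH2]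
          field_simp
          ring
        have hq1 : 0 ≤ 2*s*((1-θ)/(1+θ))*(2*θ/(1+θ))*(sg*HH - cc) := by
          have h1 : (0:ℝ) ≤ 2*s := by linarith only [hs]
          have h2' : (0:ℝ) ≤ (1-θ)/(1+θ) :=
            div_nonneg (by linarith only [hθ1]) (by linarith only [hθpos])
          have h3 : (0:ℝ) ≤ 2*θ/(1+θ) :=
            div_nonneg (by linarith only [hθpos]) (by linarith only [hθpos])
          have h4 : (0:ℝ) ≤ sg*HH - cc := by linarith only [hccb]
          exact mul_nonneg (mul_nonneg (mul_nonneg h1 h2') h3) h4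
        have hq2 : 0 ≤ (θ*(1-θ)/(1+θ)^3)
            * ((s*(1+θ)*sg - 2*HH)^2 + θ*(1-θ)*(1+θ)*HH^2) := by
          apply mul_nonneg
          · exact div_nonneg (by nlinarith only [hθpos, hθ1]) (by positivity)
          · refine add_nonneg (sq_nonneg _) (mul_nonneg ?_ (sq_nonneg HH))
            exact mul_nonneg (mul_nonneg hθpos.le (by linarith only [hθ1]))
              (by linarith only [hθpos])
        linarith only [hid, hq1, hq2]
      rw [hgyk, he3]
      linarith only [hdesc2s, hsc2s, core]
  ------------------------------------------------------------------
  -- induction and conclusion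
  ------------------------------------------------------------------
  have hJinv : ∀ k : ℕ, J k ≤ 2*s*(G x₀ - G xstar) := by
    intro k
    induction k with
    | zero => exact le_of_eq hJ0
    | succ n ih =>
      have h := step n ih
      linarith only [h, ih, mul_nonneg (mul_nonneg (sq_nonneg s) hθpos.le) (hgnn n)]
  have hsum : ∀ M : ℕ,
      s^2*θ*(∑ k ∈ Finset.range M, (G' (y k)) (Linv (G' (y k)))) + J M ≤ J 0 := by
    intro M
    induction M with
    | zero => simp
    | succ n ih =>
      rw [Finset.sum_range_succ]
      linarith only [ih, step n (hJinv n)]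
  have hJnonneg : ∀ M : ℕ, 0 ≤ J M := by
    intro M
    simp only [hJdef]
    have h1 : 0 ≤ 2*s*(G (x M) - G xstar) :=
      mul_nonneg (by linarith only [hs]) (sub_nonneg.2 (hmin _))
    have h2 : 0 ≤ lam * L (x M - x (M-1)) (x M - x (M-1)) :=
      mul_nonneg hlam0.le (hLnn _)
    linarith only [h1, h2]
  have hconst : 2*(1+lam)/(s*(1-lam)) = 2/(s*θ) := by
    rw [hlam]
    field_simp
    ring
    exact mul_inv_cancel₀ hθpos.ne'
  have hfinal : ∀ M : ℕ, ∑ k ∈ Finset.range M, (G' (y k)) (Linv (G' (y k)))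
      ≤ 2*(1+lam)/(s*(1-lam))*(G x₀ - G xstar) := by
    intro M
    have h1 := hsum M
    have h2 := hJnonneg M
    have h3 : s^2*θ*(∑ k ∈ Finset.range M, (G' (y k)) (Linv (G' (y k))))
        ≤ 2*s*(G x₀ - G xstar) := by
      rw [hJ0] at h1
      linarith only [h1, h2]
    rw [hconst, div_mul_eq_mul_div, le_div_iff₀ (mul_pos hs hθpos)]
    apply le_of_mul_le_mul_left _ hs
    linarith only [h3]
  exact ⟨fun N => hfinal (N+1), summable_of_sum_range_le hgnn hfinal⟩
end

section
/- Assume G : H → ℝ is μ-strongly convex and locally Lipschitz smooth, and run PAGD with friction η = √μ and step size s ∈ (0, min{1/L_B, ((r−1)/(r+1))²/μ}], where r > 1 and L_B is a Lipschitz smoothness constant of G on the invariant set 𝔅 = {x ∈ H : ‖x − x*‖_𝓛 ≤ R} with R = √((2/μ)(G(x₀) − G*)) + (1/η)√(2r(G(x₀) − G*)). Then for every k ≥ 0: (1/η)·(G(x_{k+1}) − G(x_k))/√s ≤ −(√s/(2η)) ‖G'(y_k)‖_{𝓛⁻¹}² + (1/θ) ⟨G'(y_k), y_k − x_k⟩ −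 (η/(2√s)) ‖x_k − y_k‖_𝓛². -/
open TopologicalSpace

private lemma PAGD_line_bound {H : Type*} [NormedAddCommGroup H] [InnerProductSpace ℝ H]
    (G : H → ℝ) (G' : H → H →L[ℝ] ℝ) (hdiff : ∀ x : H, HasFDerivAt G (G' x) x)
    (a w : H) (c K : ℝ)
    (hd : ∀ t : ℝ, t ∈ Set.Ioo (0:ℝ) 1 → ((G' (a + t • w)) w) - ((G' a) w) ≤ K * t * c) :
    G (a + w) ≤ G a + (G' a) w + K / 2 * c := by
  set c1 := (G' a) w with hc1
  set c2 := K * c / 2 with hc2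
  set φ : ℝ → ℝ := fun t => G (a + t • w) - t * c1 - t ^ 2 * c2 with hφdef
  have hline : ∀ t : ℝ, HasDerivAt (fun τ : ℝ => a + τ • w) w t := fun t => by
    simpa using ((hasDerivAt_id t).smul_const w).const_add a
  have hφ' : ∀ t : ℝ, HasDerivAt φ ((G' (a + t • w)) w - c1 - 2 * t * c2) t := by
    intro t
    have h1 : HasDerivAt (fun τ : ℝ => G (a + τ • w)) ((G' (a + t • w)) w) t := by
      exact (hdiff (a + t • w)).comp_hasDerivAt t (hline t)
    have h2 : HasDerivAt (fun τ : ℝ => τ * c1) c1 t := by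
      simpa using (hasDerivAt_id t).mul_const c1
    have h3 : HasDerivAt (fun τ : ℝ => τ ^ 2 * c2) (2 * t * c2) t := by
      convert (hasDerivAt_pow 2 t).mul_const c2 using 1
      · rfl
      · rfl
      push_cast
      ring
    exact (h1.sub h2).sub h3
  have hanti : AntitoneOn φ (Set.Icc (0:ℝ) 1) := by
    apply antitoneOn_of_deriv_nonpos (convex_Icc (0:ℝ) 1)
    · exact Continuous.continuousOn
        (continuous_iff_continuousAt.mpr fun t => (hφ' t).continuousAt)
    · intro t ht
      exact (hφ' t).differentiableAt.differentiableWithinAt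
    · intro t ht
      rw [interior_Icc] at ht
      rw [(hφ' t).deriv]
      have h5 := hd t ht
      have h2c : 2 * t * c2 = K * t * c := by rw [hc2]; ring
      linarith
  have h01 : φ 1 ≤ φ 0 :=
    hanti (Set.left_mem_Icc.mpr zero_le_one) (Set.right_mem_Icc.mpr zero_le_one) zero_le_one
  have e0 : φ 0 = G a := by simp [hφdef]
  have e1 : φ 1 = G (a + w) - c1 - c2 := by
    have h6 : a + (1:ℝ) • w = a + w := by rw [one_smul]
    simp [hφdef, h6]
  rw [e0, e1] at h01
  rw [hc2] at h01
  linarith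

private lemma PAGD_cubic_pos {u : ℝ} (hu : 1 < u) : 3 * (u * u - 1) < u * (u * u + 1) := by
  rcases le_or_gt u 2 with hcase | hcase
  · nlinarith [mul_pos (sub_pos.mpr hu) (sub_pos.mpr hu)]
  · nlinarith [sq_nonneg (u - 2)]
set_option maxHeartbeats 1000000 in
/-- discrete derivative of the potential energy along PAGD.
Under the invariant-set step size restriction, for every `k ≥ 0`:
`(1/η)(G(x_{k+1}) − G(x_k))/√s ≤ −(√s/(2η))‖G'(y_k)‖_{𝓛⁻¹}²
 + (1/θ)⟨G'(y_k), y_k − x_k⟩ − (η/(2√s))‖x_k − y_k‖_𝓛²`. -/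
theorem PAGD_discrete_derivative_potential_energy
    {H : Type*} [NormedAddCommGroup H] [InnerProductSpace ℝ H]
    [CompleteSpace H] [SeparableSpace H]
    (L : H →ₗ[ℝ] (H →L[ℝ] ℝ))
    (C₁ C₂ : ℝ) (hC₁ : 0 < C₁) (hC₂ : 0 < C₂)
    (hsymm : ∀ x y : H, L x y = L y x)
    (hbdd : ∀ x y : H, L x y ≤ C₂ * ‖x‖ * ‖y‖)
    (hcoer : ∀ x : H, C₁ * ‖x‖ ^ 2 ≤ L x x)
    (Linv : (H →L[ℝ] ℝ) → H)
    (hLinv : ∀ f : H →L[ℝ] ℝ, L (Linv f) = f)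
    (hLinv' : ∀ x : H, Linv (L x) = x)
    (G : H → ℝ) (G' : H → H →L[ℝ] ℝ)
    (hdiff : ∀ x : H, HasFDerivAt G (G' x) x)
    (μ : ℝ) (hμ : 0 < μ)
    -- μ-strong convexity
    (hsc : ∀ x y : H, (G' x - G' y) (x - y) ≥ μ * L (x - y) (x - y))
    -- local Lipschitz smoothness
    (hlip : ∀ B : Set H, Convex ℝ B → Bornology.IsBounded B →
      ∃ LB > (0:ℝ), ∀ x ∈ B, ∀ y ∈ B,
        (G' x - G' y) (x - y) ≤ LB * L (x - y) (x - y))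
    -- minimizer and minimum
    (xstar : H) (hmin : ∀ y : H, G xstar ≤ G y)
    (x₀ : H) (r : ℝ) (hr : 1 < r)
    -- the invariant set 𝔅
    (R₁ R₂ R : ℝ)
    (hR₁ : R₁ = Real.sqrt (2 / μ * (G x₀ - G xstar)))
    (hR₂ : R₂ = Real.sqrt (2 * r * (G x₀ - G xstar)))
    (η : ℝ) (hη : η = Real.sqrt μ)
    (hR : R = R₁ + R₂ / η)
    (𝔅 : Set H)
    (h𝔅 : 𝔅 = {z : H | Real.sqrt (L (z - xstar) (z - xstar)) ≤ R})
    -- L_B : a Lipschitz smoothness constant of G on 𝔅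
    (LB : ℝ) (hLB : 0 < LB)
    (hsm : ∀ z ∈ 𝔅, ∀ w ∈ 𝔅, (G' z - G' w) (z - w) ≤ LB * L (z - w) (z - w))
    -- step size restriction
    (s : ℝ) (hs : 0 < s)
    (hs' : s ≤ min (1 / LB) (((r - 1) / (r + 1)) ^ 2 / μ))
    -- PAGD parameters and iterates
    (θ lam : ℝ) (hθ : θ = η * Real.sqrt s) (hlam : lam = (1 - θ) / (1 + θ))
    (x y v : ℕ → H)
    (hx0 : x 0 = x₀)
    (hy : ∀ k : ℕ, y k = x k + lam • (x k - x (k - 1)))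
    (hx : ∀ k : ℕ, x (k + 1) = y k - s • Linv (G' (y k)))
    (hv0 : v 0 = x 0)
    (hv : ∀ k : ℕ, v (k + 1) = x k + (1 / θ) • (x (k + 1) - x k)) :
    ∀ k : ℕ,
      1 / η * ((G (x (k + 1)) - G (x k)) / Real.sqrt s)
        ≤ -(Real.sqrt s / (2 * η)) * (G' (y k)) (Linv (G' (y k)))
            + (1 / θ) * (G' (y k)) (y k - x k)
            - η / (2 * Real.sqrt s) * L (x k - y k) (x k - y k) := by
  -- ## basic facts about the bilinear form
  have hQnn : ∀ w : H, 0 ≤ L w w := fun w =>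
    le_trans (by positivity) (hcoer w)
  have hQ0 : ∀ w : H, L w w ≤ 0 → w = 0 := by
    intro w hw
    have h1 : C₁ * ‖w‖ ^ 2 ≤ 0 := le_trans (hcoer w) hw
    have h2 : ‖w‖ ^ 2 ≤ 0 := nonpos_of_mul_nonpos_right (by nlinarith) hC₁
    have h3 : ‖w‖ = 0 := by nlinarith [sq_nonneg ‖w‖, norm_nonneg w, sq_abs ‖w‖]
    exact norm_eq_zero.mp h3
  have hexp : ∀ a b : H, L (a + b) (a + b) = L a a + 2 * L a b + L b b := by
    intro a b
    simp only [map_add, ContinuousLinearMap.add_apply]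
    rw [hsymm b a]
    ring
  have hQsmul : ∀ (c : ℝ) (w : H), L (c • w) (c • w) = c ^ 2 * L w w := by
    intro c w
    simp only [map_smul, ContinuousLinearMap.smul_apply, ContinuousLinearMap.coe_smul',
      Pi.smul_apply, smul_eq_mul]
    ring
  have hCS : ∀ a b : H, L a b ≤ Real.sqrt (L a a) * Real.sqrt (L b b) := by
    intro a b
    have key : ∀ t : ℝ, 0 ≤ L b b * (t * t) + (2 * L a b) * t + L a a := by
      intro t
      have h1 := hQnn (a + t • b)
      rw [hexp] at h1
      have e1 : L a (t • b) = t * L a b := by rw [map_smul]; simp [smul_eq_mul]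
      have e2 : L (t • b) (t • b) = t ^ 2 * L b b := hQsmul t b
      rw [e1, e2] at h1
      nlinarith [h1]
    have hd := discrim_le_zero key
    rw [discrim] at hd
    have h1 : (L a b) ^ 2 ≤ L a a * L b b := by nlinarith [hd]
    calc L a b ≤ |L a b| := le_abs_self _
      _ = Real.sqrt ((L a b) ^ 2) := (Real.sqrt_sq_eq_abs _).symm
      _ ≤ Real.sqrt (L a a * L b b) := Real.sqrt_le_sqrt h1
      _ = Real.sqrt (L a a) * Real.sqrt (L b b) := Real.sqrt_mul (hQnn a) _
  have htri : ∀ a b : H, Real.sqrt (L (a + b) (a + b))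
      ≤ Real.sqrt (L a a) + Real.sqrt (L b b) := by
    intro a b
    have h1 : L (a + b) (a + b) ≤ (Real.sqrt (L a a) + Real.sqrt (L b b)) ^ 2 := by
      rw [hexp]
      have h2 := hCS a b
      have sa := Real.mul_self_sqrt (hQnn a)
      have sb := Real.mul_self_sqrt (hQnn b)
      nlinarith [Real.sqrt_nonneg (L a a), Real.sqrt_nonneg (L b b)]
    calc Real.sqrt (L (a + b) (a + b))
        ≤ Real.sqrt ((Real.sqrt (L a a) + Real.sqrt (L b b)) ^ 2) := Real.sqrt_le_sqrt h1
      _ = Real.sqrt (L a a) + Real.sqrt (L b b) := Real.sqrt_sq (by positivity)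
  have hnrmsmul : ∀ (c : ℝ) (w : H),
      Real.sqrt (L (c • w) (c • w)) = |c| * Real.sqrt (L w w) := by
    intro c w
    rw [hQsmul, Real.sqrt_mul (sq_nonneg c), Real.sqrt_sq_eq_abs]
  -- ## gradient at the minimizer vanishes
  have hG'star : G' xstar = 0 := by
    have h1 : IsLocalMin G xstar := Filter.Eventually.of_forall hmin
    exact h1.hasFDerivAt_eq_zero (hdiff xstar)
  -- ## global strong-convexity lower bound
  have hlow : ∀ a b : H, G a + (G' a) (b - a) + μ / 2 * L (b - a) (b - a) ≤ G b := by
    intro a b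
    have hd : ∀ t : ℝ, t ∈ Set.Ioo (0:ℝ) 1 →
        (((fun z => -(G' z)) (a + t • (b - a))) (b - a)) - ((-(G' a)) (b - a))
          ≤ (-μ) * t * (L (b - a) (b - a)) := by
      intro t ht
      have hsck := hsc (a + t • (b - a)) a
      have e1 : a + t • (b - a) - a = t • (b - a) := add_sub_cancel_left a _
      rw [e1] at hsck
      have e2 : ((G' (a + t • (b - a))) - (G' a)) (t • (b - a))
          = t * ((G' (a + t • (b - a))) (b - a) - (G' a) (b - a)) := by
        rw [ContinuousLinearMap.sub_apply, map_smul, map_smul]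
        simp [smul_eq_mul]
        ring
      have e3 : L (t • (b - a)) (t • (b - a)) = t ^ 2 * L (b - a) (b - a) := hQsmul _ _
      rw [e2, e3] at hsck
      simp only [ContinuousLinearMap.neg_apply]
      nlinarith [hsck, ht.1, ht.2]
    have h1 := PAGD_line_bound (fun z => -(G z)) (fun z => -(G' z))
      (fun z => (hdiff z).neg) a (b - a) (L (b - a) (b - a)) (-μ) hd
    have e4 : a + (b - a) = b := by abel
    rw [e4] at h1
    simp only [ContinuousLinearMap.neg_apply] at h1
    linarith
  -- ## upper quadratic bound on segments inside 𝔅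
  have hupper : ∀ a b : H, (∀ τ : ℝ, τ ∈ Set.Icc (0:ℝ) 1 → a + τ • (b - a) ∈ 𝔅) →
      G b ≤ G a + (G' a) (b - a) + LB / 2 * L (b - a) (b - a) := by
    intro a b hseg
    have ha : a ∈ 𝔅 := by
      have h1 := hseg 0 (Set.left_mem_Icc.mpr zero_le_one)
      simpa using h1
    have hd : ∀ t : ℝ, t ∈ Set.Ioo (0:ℝ) 1 →
        ((G' (a + t • (b - a))) (b - a)) - ((G' a) (b - a))
          ≤ LB * t * (L (b - a) (b - a)) := by
      intro t ht
      have hz : a + t • (b - a) ∈ 𝔅 := hseg t ⟨ht.1.le, ht.2.le⟩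
      have hsmk := hsm _ hz _ ha
      have e1 : a + t • (b - a) - a = t • (b - a) := add_sub_cancel_left a _
      rw [e1] at hsmk
      have e2 : ((G' (a + t • (b - a))) - (G' a)) (t • (b - a))
          = t * ((G' (a + t • (b - a))) (b - a) - (G' a) (b - a)) := by
        rw [ContinuousLinearMap.sub_apply, map_smul, map_smul]
        simp [smul_eq_mul]
        ring
      have e3 : L (t • (b - a)) (t • (b - a)) = t ^ 2 * L (b - a) (b - a) := hQsmul _ _
      rw [e2, e3] at hsmk
      nlinarith [hsmk, ht.1, ht.2]
    have h1 := PAGD_line_bound G G' hdiff a (b - a) (L (b - a) (b - a)) LB hd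
    have e4 : a + (b - a) = b := by abel
    rw [e4] at h1
    exact h1
  -- ## numeric facts
  obtain ⟨D, hDdef⟩ : ∃ D : ℝ, D = G x₀ - G xstar := ⟨_, rfl⟩
  rw [← hDdef] at hR₁ hR₂
  have hD0 : 0 ≤ D := by rw [hDdef]; exact sub_nonneg.mpr (hmin x₀)
  have hημ : η * η = μ := by rw [hη]; exact Real.mul_self_sqrt hμ.le
  have hηpos : 0 < η := by rw [hη]; exact Real.sqrt_pos.mpr hμ
  have hsspos : 0 < Real.sqrt s := Real.sqrt_pos.mpr hs
  have hss2 : Real.sqrt s * Real.sqrt s = s := Real.mul_self_sqrt hs.le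
  have hθpos : 0 < θ := by rw [hθ]; exact mul_pos hηpos hsspos
  have hθsq : θ * θ = μ * s := by
    rw [hθ]
    calc η * Real.sqrt s * (η * Real.sqrt s) = (η * η) * (Real.sqrt s * Real.sqrt s) := by ring
      _ = μ * s := by rw [hημ, hss2]
  have hrpos : 0 < r + 1 := by linarith
  have hθ'pos : 0 < (r - 1) / (r + 1) := div_pos (by linarith) hrpos
  have hθ'lt1 : (r - 1) / (r + 1) < 1 := by rw [div_lt_one hrpos]; linarith
  have hsle : s ≤ ((r - 1) / (r + 1)) ^ 2 / μ := le_trans hs' (min_le_right _ _)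
  have hsLB : s * LB ≤ 1 := by
    have h1 : s ≤ 1 / LB := le_trans hs' (min_le_left _ _)
    rw [le_div_iff₀ hLB] at h1
    exact h1
  have hθle : θ ≤ (r - 1) / (r + 1) := by
    have h1 : θ * θ ≤ ((r - 1) / (r + 1)) ^ 2 := by
      rw [hθsq]
      rw [le_div_iff₀ hμ] at hsle
      nlinarith [hsle]
    nlinarith [hθpos, hθ'pos]
  have hθlt1 : θ < 1 := lt_of_le_of_lt hθle hθ'lt1
  have hμs1 : μ * s ≤ 1 := by
    rw [← hθsq]; nlinarith [hθpos, hθlt1]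
  have hlam0 : 0 ≤ lam := by
    rw [hlam]; apply div_nonneg <;> linarith
  have hlam1 : lam ≤ 1 := by
    rw [hlam, div_le_one (by linarith)]; linarith
  obtain ⟨u, hudef⟩ : ∃ u : ℝ, u = Real.sqrt r := ⟨_, rfl⟩
  have hu1 : 1 < u := by
    rw [hudef, show (1:ℝ) = Real.sqrt 1 from (Real.sqrt_one).symm]
    exact Real.sqrt_lt_sqrt (by norm_num) hr
  have hu2 : u * u = r := by rw [hudef]; exact Real.mul_self_sqrt (by linarith)
  have hR₁0 : 0 ≤ R₁ := by rw [hR₁]; exact Real.sqrt_nonneg _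
  have hR₁sq : μ * (R₁ * R₁) = 2 * D := by
    rw [hR₁, Real.mul_self_sqrt (mul_nonneg (by positivity) hD0)]
    field_simp
  have hRuR₁ : R = (1 + u) * R₁ := by
    rw [hR, hR₂, hR₁, hη, hudef]
    rw [show Real.sqrt (2 * r * D) / Real.sqrt μ = Real.sqrt (2 * r * D / μ) from
      (Real.sqrt_div (by positivity) μ).symm]
    rw [show 2 * r * D / μ = r * (2 / μ * D) from by field_simp]
    rw [Real.sqrt_mul (by linarith : (0:ℝ) ≤ r)]
    ring
  have hpoly : 3 * ((r - 1) / (r + 1)) < u := by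
    rw [show 3 * ((r - 1) / (r + 1)) = 3 * (r - 1) / (r + 1) from by ring,
      div_lt_iff₀ hrpos, ← hu2]
    exact PAGD_cubic_pos hu1
  have hθR₁sq : (θ * R₁) * (θ * R₁) = 2 * s * D := by
    calc (θ*R₁)*(θ*R₁) = (θ*θ)*(R₁*R₁) := by ring
      _ = s*(μ*(R₁*R₁)) := by rw [hθsq]; ring
      _ = 2*s*D := by rw [hR₁sq]; ring
  have hsne : s ≠ 0 := ne_of_gt hs
  have h2s : (0:ℝ) < 2 * s := by linarith only [hs]
  have hηne : η ≠ 0 := ne_of_gt hηpos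
  have hssne : Real.sqrt s ≠ 0 := ne_of_gt hsspos
  -- ## the main induction step
  have key : ∀ k : ℕ,
      G (x k) - G xstar + 1 / (2*s) * L (x k - x (k-1)) (x k - x (k-1)) ≤ D →
      (G (x (k+1)) - G xstar + 1 / (2*s) * L (x (k+1) - x k) (x (k+1) - x k) ≤ D) ∧
      (1 / η * ((G (x (k + 1)) - G (x k)) / Real.sqrt s)
        ≤ -(Real.sqrt s / (2 * η)) * (G' (y k)) (Linv (G' (y k)))
            + (1 / θ) * (G' (y k)) (y k - x k)
            - η / (2 * Real.sqrt s) * L (x k - y k) (x k - y k)) := by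
    intro k hInv
    obtain ⟨gv, hgv⟩ : ∃ gv : H, gv = Linv (G' (y k)) := ⟨_, rfl⟩
    have hgapp : ∀ z : H, (G' (y k)) z = L gv z := by
      intro z; rw [hgv, hLinv]
    obtain ⟨n2, hn2def⟩ : ∃ n2 : ℝ, n2 = L gv gv := ⟨_, rfl⟩
    have hn2nn : 0 ≤ n2 := by rw [hn2def]; exact hQnn gv
    obtain ⟨nn, hnndef⟩ : ∃ nn : ℝ, nn = Real.sqrt n2 := ⟨_, rfl⟩
    have hnn0 : 0 ≤ nn := by rw [hnndef]; exact Real.sqrt_nonneg _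
    have hnn2 : nn * nn = n2 := by rw [hnndef]; exact Real.mul_self_sqrt hn2nn
    obtain ⟨P2, hP2def⟩ : ∃ P2 : ℝ, P2 = L (x k - x (k-1)) (x k - x (k-1)) := ⟨_, rfl⟩
    rw [← hP2def] at hInv
    have hP2nn : 0 ≤ P2 := by rw [hP2def]; exact hQnn _
    obtain ⟨p, hpdef⟩ : ∃ p : ℝ, p = Real.sqrt P2 := ⟨_, rfl⟩
    have hp0 : 0 ≤ p := by rw [hpdef]; exact Real.sqrt_nonneg _
    have hpp : p * p = P2 := by rw [hpdef]; exact Real.mul_self_sqrt hP2nn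
    have hYX : y k - x k = lam • (x k - x (k-1)) := by
      rw [hy k]; exact add_sub_cancel_left _ _
    have hXY : x k - y k = (-lam) • (x k - x (k-1)) := by
      rw [neg_smul, ← hYX]; abel
    have hx1 : x (k+1) = y k - s • gv := by rw [hx k, hgv]
    have hΦnn : 0 ≤ G (x k) - G xstar := sub_nonneg.mpr (hmin (x k))
    have hInv' : 2 * s * (G (x k) - G xstar) + P2 ≤ 2 * s * D := by
      have h1 := mul_le_mul_of_nonneg_left hInv h2s.le
      calc 2*s*(G (x k) - G xstar) + P2
          = 2*s*(G (x k) - G xstar + 1/(2*s) * P2) := by field_simp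
        _ ≤ 2*s*D := h1
    have hΦD : G (x k) - G xstar ≤ D := by nlinarith only [hInv', hP2nn, hs]
    have hpb : p ≤ θ * R₁ := by
      have h1 : P2 ≤ (θ*R₁) * (θ*R₁) := by
        nlinarith only [hInv', hΦnn, hθR₁sq, hs]
      calc p ≤ Real.sqrt ((θ*R₁)*(θ*R₁)) := by rw [hpdef]; exact Real.sqrt_le_sqrt h1
        _ = θ*R₁ := Real.sqrt_mul_self (by nlinarith only [hθpos, hR₁0])
    have hXs2 : μ/2 * L (x k - xstar) (x k - xstar) ≤ D := by
      have h1 := hlow xstar (x k)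
      rw [hG'star] at h1
      simp only [ContinuousLinearMap.zero_apply] at h1
      linarith only [h1, hΦD]
    obtain ⟨ρ, hρdef⟩ : ∃ ρ : ℝ, ρ = Real.sqrt (L (y k - xstar) (y k - xstar)) := ⟨_, rfl⟩
    have hρ0 : 0 ≤ ρ := by rw [hρdef]; exact Real.sqrt_nonneg _
    have hρle : ρ ≤ R₁ + lam * p := by
      have e : y k - xstar = (x k - xstar) + lam • (x k - x (k-1)) := by
        rw [← hYX]; abel
      have h1 : L (x k - xstar) (x k - xstar) ≤ R₁ * R₁ := by
        nlinarith only [hXs2, hR₁sq, hμ]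
      have h2 : Real.sqrt (L (x k - xstar) (x k - xstar)) ≤ R₁ := by
        calc Real.sqrt (L (x k - xstar) (x k - xstar))
            ≤ Real.sqrt (R₁*R₁) := Real.sqrt_le_sqrt h1
          _ = R₁ := Real.sqrt_mul_self hR₁0
      have e2 : ρ = Real.sqrt (L ((x k - xstar) + lam • (x k - x (k-1)))
          ((x k - xstar) + lam • (x k - x (k-1)))) := by rw [hρdef, e]
      rw [e2]
      refine le_trans (htri _ _) ?_
      rw [hnrmsmul, abs_of_nonneg hlam0, ← hP2def, ← hpdef]
      linarith only [h2]
    obtain ⟨δ, hδdef⟩ : ∃ δ : ℝ, δ = R - ρ := ⟨_, rfl⟩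
    have hρR : ρ + δ = R := by rw [hδdef]; ring
    have hδlb : (u - (r-1)/(r+1)) * R₁ ≤ δ := by
      have h1 : lam * p ≤ (r-1)/(r+1) * R₁ := by
        nlinarith only [hpb, hθle, hlam0, hlam1, hp0, hR₁0]
      rw [hδdef, hRuR₁]
      linarith only [h1, hρle]
    have hδ0 : 0 ≤ δ := by
      nlinarith only [hδlb, hR₁0, hpoly, hθ'pos]
    -- ### gradient bound : s * nn ≤ δ
    have hGB : s * nn ≤ δ := by
      by_contra hcon
      push_neg at hcon
      have hnnpos : 0 < nn := by
        rcases le_or_gt nn 0 with hn | hn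
        · exfalso; nlinarith only [hcon, hδ0, hs, hn]
        · exact hn
      obtain ⟨t, ht⟩ : ∃ t : ℝ, t = δ / nn := ⟨_, rfl⟩
      have ht0 : 0 ≤ t := by rw [ht]; exact div_nonneg hδ0 hnn0
      have htn : t * nn = δ := by rw [ht]; field_simp
      have hts : t < s := by
        rw [ht, div_lt_iff₀ hnnpos]; linarith only [hcon]
      have hseg : ∀ τ : ℝ, τ ∈ Set.Icc (0:ℝ) 1 →
          y k + τ • ((y k - t • gv) - y k) ∈ 𝔅 := by
        intro τ hτ
        rw [h𝔅]; simp only [Set.mem_setOf_eq]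
        have e : y k + τ • ((y k - t • gv) - y k) - xstar
            = (y k - xstar) + (-(τ * t)) • gv := by module
        rw [e]
        refine le_trans (htri _ _) ?_
        rw [hnrmsmul, ← hn2def, ← hnndef, ← hρdef, abs_neg,
          abs_of_nonneg (mul_nonneg hτ.1 ht0)]
        nlinarith only [htn, hρR, hτ.2, hnn0, ht0,
          mul_nonneg (mul_nonneg (sub_nonneg.mpr hτ.2) ht0) hnn0]
      have hup := hupper (y k) (y k - t • gv) hseg
      have e1 : (y k - t • gv) - y k = (-t) • gv := by module
      have e2 : (G' (y k)) ((y k - t • gv) - y k) = -(t * n2) := by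
        rw [hgapp, e1, map_smul, smul_eq_mul, ← hn2def]; ring
      have e3 : L ((y k - t • gv) - y k) ((y k - t • gv) - y k) = t^2 * n2 := by
        rw [e1, hQsmul, ← hn2def]; ring
      rw [e2, e3] at hup
      have hWlb := hmin (y k - t • gv)
      have hLBt : LB * t ≤ 1 := by
        nlinarith only [hsLB, mul_nonneg hLB.le (by linarith only [hts] : (0:ℝ) ≤ s - t)]
      have hW2 : t * n2 ≤ 2 * (G (y k) - G xstar) := by
        nlinarith only [hup, hWlb, mul_nonneg (sub_nonneg.mpr hLBt)
          (mul_nonneg ht0 hn2nn)]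
      have h2e : (G' (y k)) (x k - y k) = - L gv (y k - x k) := by
        rw [hgapp, show x k - y k = -(y k - x k) from by abel, map_neg]
      have h3 : L gv (y k - x k) ≤ nn * (lam * p) := by
        refine le_trans (hCS gv (y k - x k)) ?_
        rw [hYX, hnrmsmul, abs_of_nonneg hlam0, ← hn2def, ← hnndef, ← hP2def, ← hpdef]
      have hW3 : G (y k) - G xstar ≤ (G (x k) - G xstar) + nn * (lam * p) := by
        have h1 := hlow (y k) (x k)
        rw [h2e] at h1
        have h4 : 0 ≤ μ/2 * L (x k - y k) (x k - y k) :=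
          mul_nonneg (by linarith only [hμ]) (hQnn _)
        linarith only [h1, h3, h4]
      have hcomb : δ * nn ≤ 2*(G (x k) - G xstar) + 2*(lam*p)*nn := by
        have e4 : δ * nn = t * n2 := by rw [← htn, ← hnn2]; ring
        nlinarith only [e4, hW2, hW3]
      have h5 := mul_le_mul_of_nonneg_left hcomb hs.le
      have h2lam : 2*(lam*p) ≤ δ := by
        nlinarith only [hpb, hθle, hlam0, hlam1, hp0, hR₁0, hδlb, hpoly, hθpos, hθ'pos,
          mul_nonneg (sub_nonneg.mpr hlam1) hp0,
          mul_nonneg (sub_nonneg.mpr hθle) hR₁0]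
      have hmul : δ * (δ - 2*(lam*p)) ≤ (s*nn) * (δ - 2*(lam*p)) :=
        mul_le_mul_of_nonneg_right (le_of_lt hcon) (by linarith only [h2lam])
      have hfin : δ*δ - 2*(lam*p)*δ + P2 ≤ 2*s*D := by
        nlinarith only [hmul, h5, hInv']
      have hq : 0 ≤ (1 - lam) * (1 + lam) * (p*p) :=
        mul_nonneg (mul_nonneg (by linarith only [hlam1]) (by linarith only [hlam0]))
          (mul_self_nonneg p)
      have hsq : (δ - lam*p)*(δ - lam*p) ≤ 2*s*D := by
        nlinarith only [hfin, hpp, hq]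
      rcases eq_or_lt_of_le hD0 with hD0' | hDpos
      · -- D = 0 : everything collapses, gradient is zero, contradiction
        have h1 : L (x k - xstar) (x k - xstar) ≤ 0 := by
          nlinarith only [hXs2, hμ, hD0', hQnn (x k - xstar)]
        have hP20 : P2 ≤ 0 := by nlinarith only [hInv', hΦnn, hs, hD0']
        have hXp : x k - x (k-1) = 0 := hQ0 _ (hP2def ▸ hP20)
        have hXX : x k = xstar := by
          have h2' := hQ0 _ h1
          rwa [sub_eq_zero] at h2'
        have hyk : y k = xstar := by
          rw [hy k, hXp, smul_zero, add_zero]; exact hXX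
        have hg0 : G' (y k) = 0 := by rw [hyk]; exact hG'star
        have hn20 : n2 = 0 := by
          have h6 : L gv gv = (G' (y k)) gv := (hgapp gv).symm
          rw [hg0] at h6
          simp only [ContinuousLinearMap.zero_apply] at h6
          rw [hn2def, h6]
        have hnneq : nn = 0 := by rw [hnndef, hn20, Real.sqrt_zero]
        rw [hnneq] at hnnpos
        exact lt_irrefl 0 hnnpos
      · -- D > 0
        have hR₁pos : 0 < R₁ := by
          rw [hR₁]
          exact Real.sqrt_pos.mpr (mul_pos (by positivity) hDpos)
        have h6 : lam * p ≤ θ * R₁ := by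
          nlinarith only [hpb, hlam0, hlam1, hp0,
            mul_nonneg (sub_nonneg.mpr hlam1) hp0]
        have h7 : 0 < (u - 3*((r-1)/(r+1))) * R₁ :=
          mul_pos (by linarith only [hpoly]) hR₁pos
        have h8 : 0 ≤ ((r-1)/(r+1) - θ) * R₁ :=
          mul_nonneg (by linarith only [hθle]) hR₁pos.le
        have hlt : θ*R₁ < δ - lam*p := by
          nlinarith only [hδlb, h6, h7, h8]
        nlinarith only [hsq, hθR₁sq, hlt, mul_pos hθpos hR₁pos]
    -- ### the segment from y k to x (k+1) lies in 𝔅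
    have hsegm : ∀ τ : ℝ, τ ∈ Set.Icc (0:ℝ) 1 →
        y k + τ • (x (k+1) - y k) ∈ 𝔅 := by
      intro τ hτ
      rw [h𝔅]; simp only [Set.mem_setOf_eq]
      have e : y k + τ • (x (k+1) - y k) - xstar
          = (y k - xstar) + (-(τ * s)) • gv := by
        rw [hx1]; module
      rw [e]
      refine le_trans (htri _ _) ?_
      rw [hnrmsmul, ← hn2def, ← hnndef, ← hρdef, abs_neg,
        abs_of_nonneg (mul_nonneg hτ.1 hs.le)]
      nlinarith only [hGB, hρR, hτ.2, hnn0, hs.le,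
        mul_nonneg (mul_nonneg (sub_nonneg.mpr hτ.2) hs.le) hnn0]
    -- ### descent inequality
    have hT1 : G (x (k+1)) ≤ G (y k) - s/2 * n2 := by
      have h1 := hupper (y k) (x (k+1)) hsegm
      have e1 : x (k+1) - y k = (-s) • gv := by rw [hx1]; module
      have e2 : (G' (y k)) (x (k+1) - y k) = -(s * n2) := by
        rw [hgapp, e1, map_smul, smul_eq_mul, ← hn2def]; ring
      have e3 : L (x (k+1) - y k) (x (k+1) - y k) = s^2 * n2 := by
        rw [e1, hQsmul, ← hn2def]; ring
      rw [e2, e3] at h1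
      nlinarith only [h1, mul_nonneg (sub_nonneg.mpr hsLB) (mul_nonneg hs.le hn2nn)]
    have hT2 : G (y k) ≤ G (x k) + L gv (y k - x k)
        - μ/2 * L (x k - y k) (x k - y k) := by
      have h1 := hlow (y k) (x k)
      have h2 : (G' (y k)) (x k - y k) = - L gv (y k - x k) := by
        rw [hgapp, show x k - y k = -(y k - x k) from by abel, map_neg]
      rw [h2] at h1
      linarith only [h1]
    have hCORE : G (x (k+1)) - G (x k)
        ≤ -(s/2) * n2 + L gv (y k - x k) - μ/2 * L (x k - y k) (x k - y k) := by
      linarith only [hT1, hT2]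
    constructor
    · -- ### the invariant propagates
      have e1 : x (k+1) - x k = (y k - x k) + (-s) • gv := by rw [hx1]; module
      have e2 : L (x (k+1) - x k) (x (k+1) - x k)
          = lam^2*P2 - 2*s*(L gv (y k - x k)) + s^2*n2 := by
        rw [e1, hexp]
        rw [show L (y k - x k) ((-s) • gv) = (-s) * L gv (y k - x k) from by
          rw [map_smul, smul_eq_mul, hsymm]]
        rw [hQsmul, ← hn2def, hYX, hQsmul, ← hP2def]
        ring
      have e4 : L (x k - y k) (x k - y k) = lam^2 * P2 := by
        rw [hXY, hQsmul, ← hP2def]; ring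
      rw [e2]
      have hC2 := mul_le_mul_of_nonneg_left hCORE h2s.le
      rw [e4] at hC2
      have q1 : 0 ≤ (1 - lam^2) * P2 :=
        mul_nonneg (by nlinarith only [hlam0, hlam1]) hP2nn
      have q2 : 0 ≤ (μ*s) * (lam^2 * P2) :=
        mul_nonneg (mul_nonneg hμ.le hs.le) (mul_nonneg (sq_nonneg lam) hP2nn)
      have hmain : 2*s*(G (x (k+1)) - G xstar)
          + (lam^2*P2 - 2*s*(L gv (y k - x k)) + s^2*n2) ≤ 2*s*D := by
        nlinarith only [hC2, hInv', q1, q2]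
      have h9 : G (x (k+1)) - G xstar
          + 1/(2*s) * (lam^2*P2 - 2*s*(L gv (y k - x k)) + s^2*n2)
          = (2*s*(G (x (k+1)) - G xstar)
            + (lam^2*P2 - 2*s*(L gv (y k - x k)) + s^2*n2)) / (2*s) := by
        field_simp
      rw [h9, div_le_iff₀ h2s]
      linarith only [hmain]
    · -- ### the stated inequality
      have e5 : 1/η * ((G (x (k+1)) - G (x k)) / Real.sqrt s)
          = (G (x (k+1)) - G (x k)) / θ := by
        rw [hθ]; field_simp
      have e6 : Real.sqrt s / (2*η) = s / (2*θ) := by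
        rw [hθ, div_eq_div_iff (by positivity) (by positivity)]
        calc Real.sqrt s * (2*(η*Real.sqrt s)) = 2*η*(Real.sqrt s*Real.sqrt s) := by ring
          _ = s*(2*η) := by rw [hss2]; ring
      have e7 : η / (2*Real.sqrt s) = μ / (2*θ) := by
        rw [hθ, div_eq_div_iff (by positivity) (by positivity)]
        calc η * (2*(η*Real.sqrt s)) = 2*(η*η)*Real.sqrt s := by ring
          _ = μ * (2*Real.sqrt s) := by rw [hημ]; ring
      have e8 : (G' (y k)) (Linv (G' (y k))) = n2 := by
        rw [← hgv, hgapp, hn2def]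
      have e9 : (G' (y k)) (y k - x k) = L gv (y k - x k) := hgapp _
      rw [e5, e6, e7, e8, e9]
      rw [show -(s/(2*θ))*n2 + 1/θ*(L gv (y k - x k))
          - μ/(2*θ)*(L (x k - y k) (x k - y k))
          = (-(s/2)*n2 + L gv (y k - x k) - μ/2*(L (x k - y k) (x k - y k)))/θ from by
        field_simp]
      rw [div_le_div_iff_of_pos_right hθpos]
      exact hCORE
  -- ## conclusion
  have inv : ∀ k : ℕ,
      G (x k) - G xstar + 1/(2*s) * L (x k - x (k-1)) (x k - x (k-1)) ≤ D := by
    intro k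
    induction k with
    | zero =>
      have e : x 0 - x (0-1) = 0 := sub_self (x 0)
      rw [e, map_zero]
      simp only [ContinuousLinearMap.zero_apply, mul_zero, add_zero]
      rw [hx0, ← hDdef]
    | succ n ih =>
      have h1 := (key n ih).1
      simpa [Nat.add_sub_cancel] using h1
  intro k
  exact (key k (inv k)).2
end

section
/- The PAGD iterates satisfy, for every k ≥ 0 and with x* the minimizer of G, the identity: (η/(2√s))(‖v_{k+1} − x*‖_𝓛² − ‖v_k − x*‖_𝓛²) + (1/θ)⟨G'(y_k), y_k − x_k⟩ + (η²/2)‖v_k − x*‖_𝓛² − (η/(2√s))‖v_{k+1} − v_k‖_𝓛² + (1/(2s))‖y_k − x_k‖_𝓛² − (η²/2)‖y_k − x*‖_𝓛² + ⟨G'(y_k), y_k − x*⟩ = 0. -/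
open TopologicalSpace

set_option maxHeartbeats 2000000 in
/-- the discrete analogue of the continuous energy relation.
The PAGD iterates satisfy, for every `k ≥ 0` and a fixed point `x*`:
`(η/(2√s))(‖v_{k+1}−x*‖_𝓛² − ‖v_k−x*‖_𝓛²) + (1/θ)⟨G'(y_k), y_k−x_k⟩
 + (η²/2)‖v_k−x*‖_𝓛² − (η/(2√s))‖v_{k+1}−v_k‖_𝓛² + (1/(2s))‖y_k−x_k‖_𝓛²
 − (η²/2)‖y_k−x*‖_𝓛² + ⟨G'(y_k), y_k−x*⟩ = 0`. -/
theorem PAGD_discrete_energy_identity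
    {H : Type*} [NormedAddCommGroup H] [InnerProductSpace ℝ H]
    [CompleteSpace H] [SeparableSpace H]
    (L : H →ₗ[ℝ] (H →L[ℝ] ℝ))
    (C₁ C₂ : ℝ) (hC₁ : 0 < C₁) (hC₂ : 0 < C₂)
    (hsymm : ∀ x y : H, L x y = L y x)
    (hbdd : ∀ x y : H, L x y ≤ C₂ * ‖x‖ * ‖y‖)
    (hcoer : ∀ x : H, C₁ * ‖x‖ ^ 2 ≤ L x x)
    (Linv : (H →L[ℝ] ℝ) → H)
    (hLinv : ∀ f : H →L[ℝ] ℝ, L (Linv f) = f)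
    (hLinv' : ∀ x : H, Linv (L x) = x)
    (G : H → ℝ) (G' : H → H →L[ℝ] ℝ)
    (hdiff : ∀ x : H, HasFDerivAt G (G' x) x)
    (xstar : H)
    -- PAGD parameters and iterates
    (s η θ lam : ℝ) (hs : 0 < s) (hη : 0 < η)
    (hθ : θ = η * Real.sqrt s) (hlam : lam = (1 - θ) / (1 + θ))
    (x y v : ℕ → H)
    (hy : ∀ k : ℕ, y k = x k + lam • (x k - x (k - 1)))
    (hx : ∀ k : ℕ, x (k + 1) = y k - s • Linv (G' (y k)))
    (hv0 : v 0 = x 0)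
    (hv : ∀ k : ℕ, v (k + 1) = x k + (1 / θ) • (x (k + 1) - x k)) :
    ∀ k : ℕ,
      η / (2 * Real.sqrt s) *
          (L (v (k + 1) - xstar) (v (k + 1) - xstar)
            - L (v k - xstar) (v k - xstar))
        + (1 / θ) * (G' (y k)) (y k - x k)
        + η ^ 2 / 2 * L (v k - xstar) (v k - xstar)
        - η / (2 * Real.sqrt s) * L (v (k + 1) - v k) (v (k + 1) - v k)
        + 1 / (2 * s) * L (y k - x k) (y k - x k)
        - η ^ 2 / 2 * L (y k - xstar) (y k - xstar)
        + (G' (y k)) (y k - xstar) = 0 := by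
  have ht : (0:ℝ) < Real.sqrt s := Real.sqrt_pos.mpr hs
  have hθ0 : θ ≠ 0 := by rw [hθ]; positivity
  have h1θ : (1:ℝ) + θ ≠ 0 := by rw [hθ]; positivity
  have hts : Real.sqrt s * Real.sqrt s = s := Real.mul_self_sqrt hs.le
  have hvy : ∀ k : ℕ, v k = y k + (1 / θ) • (y k - x k) := by
    intro k
    cases k with
    | zero => rw [hv0, hy 0]; simp
    | succ n =>
      rw [hv n, hy (n + 1)]
      simp only [Nat.add_sub_cancel]
      rw [hlam]
      match_scalars <;> field_simp <;> ring
  intro k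
  set g := Linv (G' (y k)) with hgdef
  have hg : G' (y k) = L g := (hLinv _).symm
  set a := y k - x k with ha
  set w := y k - xstar with hw
  have e2 : v k - xstar = w + (1 / θ) • a := by
    rw [hvy k, ha, hw]; module
  have e1 : v (k + 1) - xstar = (w + (1 / θ) • a) + (-a - (s / θ) • g) := by
    rw [hv k, hx k, ha, hw]
    match_scalars <;> field_simp <;> ring
  have e3 : v (k + 1) - v k = -a - (s / θ) • g := by
    rw [show v (k + 1) - v k = (v (k + 1) - xstar) - (v k - xstar) by abel, e1, e2]
    abel
  rw [hg, e1, e2, e3]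
  simp only [map_add, map_sub, map_smul, map_neg, ContinuousLinearMap.add_apply,
    ContinuousLinearMap.sub_apply, ContinuousLinearMap.neg_apply,
    ContinuousLinearMap.smul_apply, smul_eq_mul]
  simp only [hsymm a w, hsymm a g, hsymm w g]
  have hsq : Real.sqrt s = θ / η := by rw [hθ]; field_simp
  have hs2 : s = θ ^ 2 / η ^ 2 := by
    rw [hθ, mul_pow, Real.sq_sqrt hs.le]; field_simp
  rw [hsq, hs2]
  field_simp
  ring
end

section
/- The PAGD iterates satisfy, for every k ≥ 0, the identity (η/(2√s)) ‖v_{k+1} − v_k‖_𝓛² = (η/(2√s)) ‖x_k − y_k‖_𝓛² + (√s/(2η)) ‖G'(y_k)‖_{𝓛⁻¹}² + ⟨G'(y_k), y_k − x_k⟩. -/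
open TopologicalSpace

/-- relation between successive `v` iterates of PAGD. For every
`k ≥ 0`:
`(η/(2√s))‖v_{k+1} − v_k‖_𝓛² = (η/(2√s))‖x_k − y_k‖_𝓛²
 + (√s/(2η))‖G'(y_k)‖_{𝓛⁻¹}² + ⟨G'(y_k), y_k − x_k⟩`
(where `‖f‖_{𝓛⁻¹}² = ⟨f, 𝓛⁻¹f⟩`). -/
theorem PAGD_vk_increment_identity
    {H : Type*} [NormedAddCommGroup H] [InnerProductSpace ℝ H]
    [CompleteSpace H] [SeparableSpace H]
    (L : H →ₗ[ℝ] (H →L[ℝ] ℝ))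
    (C₁ C₂ : ℝ) (hC₁ : 0 < C₁) (hC₂ : 0 < C₂)
    (hsymm : ∀ x y : H, L x y = L y x)
    (hbdd : ∀ x y : H, L x y ≤ C₂ * ‖x‖ * ‖y‖)
    (hcoer : ∀ x : H, C₁ * ‖x‖ ^ 2 ≤ L x x)
    (Linv : (H →L[ℝ] ℝ) → H)
    (hLinv : ∀ f : H →L[ℝ] ℝ, L (Linv f) = f)
    (hLinv' : ∀ x : H, Linv (L x) = x)
    (G : H → ℝ) (G' : H → H →L[ℝ] ℝ)
    (hdiff : ∀ x : H, HasFDerivAt G (G' x) x)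
    -- PAGD parameters and iterates
    (s η θ lam : ℝ) (hs : 0 < s) (hη : 0 < η)
    (hθ : θ = η * Real.sqrt s) (hlam : lam = (1 - θ) / (1 + θ))
    (x y v : ℕ → H)
    (hy : ∀ k : ℕ, y k = x k + lam • (x k - x (k - 1)))
    (hx : ∀ k : ℕ, x (k + 1) = y k - s • Linv (G' (y k)))
    (hv0 : v 0 = x 0)
    (hv : ∀ k : ℕ, v (k + 1) = x k + (1 / θ) • (x (k + 1) - x k)) :
    ∀ k : ℕ,
      η / (2 * Real.sqrt s) * L (v (k + 1) - v k) (v (k + 1) - v k)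
        = η / (2 * Real.sqrt s) * L (x k - y k) (x k - y k)
          + Real.sqrt s / (2 * η) * (G' (y k)) (Linv (G' (y k)))
          + (G' (y k)) (y k - x k) := by

  have hr : 0 < Real.sqrt s := Real.sqrt_pos.mpr hs
  have hrs : Real.sqrt s * Real.sqrt s = s := Real.mul_self_sqrt hs.le
  have hθ0 : 0 < θ := by rw [hθ]; positivity
  have h1θ : (1 : ℝ) + θ ≠ 0 := by positivity
  intro k
  have hkey : v (k + 1) - v k = (x k - y k) - (s / θ) • Linv (G' (y k)) := by
    cases k with
    | zero =>
        have hy0 : y 0 = x 0 := by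
          have h := hy 0
          simpa using h
        rw [hv 0, hv0, hx 0, hy0]
        match_scalars
        · ring
        · field_simp
    | succ n =>
        have hyn : y (n + 1) = x (n + 1) + lam • (x (n + 1) - x n) := by
          simpa using hy (n + 1)
        rw [hv (n + 1), hv n, hx (n + 1), hyn, hlam]
        match_scalars <;> field_simp <;> ring
  rw [hkey]
  set f := G' (y k) with hf
  set u := Linv f with hu
  set a := x k - y k with ha
  set c := s / θ with hc
  have hLu : L u = f := hLinv f
  have hLw : L (a - c • u) = L a - c • f := by
    rw [map_sub, map_smul, hLu]
  have hLau : (L a) u = f a := by rw [hsymm a u, hLu]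
  have hexp : L (a - c • u) (a - c • u)
      = L a a - 2 * c * f a + c ^ 2 * f u := by
    rw [hLw]
    simp only [ContinuousLinearMap.sub_apply, ContinuousLinearMap.coe_smul',
      Pi.smul_apply, map_sub, map_smul, hLau, smul_eq_mul]
    ring
  have hfa : f a = -(f (y k - x k)) := by
    rw [ha]
    simp [map_sub]
  rw [hexp, hfa, hc, hθ]
  field_simp
  linear_combination (-2 * η * Real.sqrt s * f (y k - x k)
    - (Real.sqrt s ^ 2 + s) * f u) * hrs
end
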